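/- arXiv:1512.03717 — 6 statements merged into one kernel-verified Lean document; each statement's English description precedes it below -/
import Mathlib

section
/- Let (X,d) be a metric space, H ⊂ X a closed set, Z a normed linear space and f : H → Z a Baire one function. Then there exists a continuous function g : (X \ H) → Z such that: (NT) for every a ∈ ∂H, lim_{x→a, x∈X\H} ‖g(x) − f(a)‖ · dist(x,H)/d(x,a) = 0; (C) lim_{x→a, x∈X\H} g(x) = f(a) whenever a ∈ ∂H and f is continuous at a; and (B) g is bounded on B(a,r) \ H whenever a ∈ H, r ∈ (0,∞) ∪ {∞} and f is bounded on B(a,12r) ∩ H. -/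
open Filter Topology Metric ENNReal

/-- A function between topological spaces is Baire one if it is the pointwise
limit of a sequence of continuous functions. -/
def IsBaireOne {α β : Type*} [TopologicalSpace α] [TopologicalSpace β] (f : α → β) : Prop :=
  ∃ u : ℕ → α → β, (∀ n, Continuous (u n)) ∧
    ∀ x, Filter.Tendsto (fun n => u n x) Filter.atTop (nhds (f x))

set_option linter.unusedSectionVars false
set_option linter.unusedVariables false
open Set in
section
noncomputable section
namespace BOE

variable {X Z : Type*} [MetricSpace X] [NormedAddCommGroup Z] [NormedSpace ℝ Z]

def q (m : ℕ) : ℝ := (2⁻¹ : ℝ) ^ m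
lemma q_pos (m : ℕ) : 0 < q m := pow_pos (by norm_num) m
lemma q_le_one (m : ℕ) : q m ≤ 1 := by
  simpa [q] using pow_le_one₀ (by norm_num : (0:ℝ) ≤ 2⁻¹) (by norm_num : (2⁻¹:ℝ) ≤ 1)
lemma q_antitone : Antitone q :=
  fun _ _ h => pow_le_pow_of_le_one (by norm_num) (by norm_num) h
lemma norm_sub_le₃ {Z : Type*} [NormedAddCommGroup Z] (x y z w : Z) :
    ‖x - w‖ ≤ ‖x - y‖ + ‖y - z‖ + ‖z - w‖ := by
  calc ‖x - w‖ ≤ ‖x - z‖ + ‖z - w‖ := norm_sub_le_norm_sub_add_norm_sub _ _ _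
    _ ≤ ‖x - y‖ + ‖y - z‖ + ‖z - w‖ :=
        add_le_add_left (norm_sub_le_norm_sub_add_norm_sub _ _ _) _

lemma q_tendsto : Tendsto q atTop (𝓝 0) :=
  tendsto_pow_atTop_nhds_zero_of_lt_one (by norm_num) (by norm_num)
def sig (t : ℝ) : ℝ := min (Real.sqrt t) 1
def th (t : ℝ) : ℝ := (Real.sqrt (Real.sqrt t))⁻¹
lemma sig_nonneg (t : ℝ) : 0 ≤ sig t := le_min (Real.sqrt_nonneg t) one_pos.le
lemma sig_le_one (t : ℝ) : sig t ≤ 1 := min_le_right _ _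
lemma sig_le_sqrt (t : ℝ) : sig t ≤ Real.sqrt t := min_le_left _ _
lemma th_nonneg (t : ℝ) : 0 ≤ th t := inv_nonneg.2 (Real.sqrt_nonneg _)
lemma sig_pos {t : ℝ} (ht : 0 < t) : 0 < sig t := lt_min (Real.sqrt_pos.2 ht) one_pos
lemma th_pos {t : ℝ} (ht : 0 < t) : 0 < th t :=
  inv_pos.2 (Real.sqrt_pos.2 (Real.sqrt_pos.2 ht))

section Sel
variable (H : Set X) (f : ↥H → Z) (fs : ℕ → ↥H → Z)

/-- stability strata -/
def FF (n m : ℕ) : Set ↥H := {y | ∀ ⦃i j : ℕ⦄, n ≤ i → n ≤ j → ‖fs i y - fs j y‖ ≤ q m}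

lemma FF_mono_n {n n' m : ℕ} (h : n ≤ n') : FF H fs n m ⊆ FF H fs n' m :=
  fun y hy i j hi hj => hy (h.trans hi) (h.trans hj)

lemma FF_mono_m {n m m' : ℕ} (h : m ≤ m') : FF H fs n m' ⊆ FF H fs n m :=
  fun y hy i j hi hj => (hy hi hj).trans (q_antitone h)

/-- on a stratum, `f` is within `q m` of `fs j` for `j ≥ n`. -/
lemma FF_close (hfp : ∀ y, Tendsto (fun n => fs n y) atTop (𝓝 (f y))) {n m : ℕ} {y : ↥H} (hy : y ∈ FF H fs n m) {j : ℕ} (hj : n ≤ j) :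
    ‖fs j y - f y‖ ≤ q m := by
  have h1 : Tendsto (fun i => ‖fs j y - fs i y‖) atTop (𝓝 ‖fs j y - f y‖) :=
    ((tendsto_const_nhds.sub (hfp y)).norm)
  refine le_of_tendsto h1 ?_
  filter_upwards [eventually_ge_atTop n] with i hi
  exact hy hj hi

/-- every point eventually lies in some stratum. -/
lemma FF_exists (hfp : ∀ y, Tendsto (fun n => fs n y) atTop (𝓝 (f y))) (y : ↥H) (m : ℕ) : ∃ n, y ∈ FF H fs n m := by
  have hc : CauchySeq (fun n => fs n y) := (hfp y).cauchySeq
  rcases Metric.cauchySeq_iff.1 hc (q m) (q_pos m) with ⟨N, hN⟩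
  refine ⟨N, fun i j hi hj => ?_⟩
  have := hN i hi j hj
  rw [dist_eq_norm] at this
  exact this.le

end Sel

section Sel2
open scoped Classical
variable (H : Set X) (f : ↥H → Z) (fs : ℕ → ↥H → Z)

/-- `n`-indexed hit predicate at `(b,t)`, level `m`. -/
def hitP (b : ↥H) (t : ℝ) (m n : ℕ) : Prop := ∃ y ∈ FF H fs n m, dist (y : X) (b : X) ≤ sig t

/-- hit at level `m`. -/
def hit (b : ↥H) (t : ℝ) (m : ℕ) : Prop := ∃ n, hitP H fs b t m n

open Classical in
/-- minimal stratum index hitting. -/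
def nsel (b : ↥H) (t : ℝ) (m : ℕ) : ℕ := if h : hit H fs b t m then Nat.find h else 0

open Classical in
/-- witness point. -/
def wit (b : ↥H) (t : ℝ) (m : ℕ) : ↥H :=
  if h : hit H fs b t m then (Nat.find_spec h).choose else b

/-- candidate value at level `m`. -/
def uu (b : ↥H) (t : ℝ) (m : ℕ) : Z := fs (nsel H fs b t m) (wit H fs b t m)

lemma wit_mem {b : ↥H} {t : ℝ} {m : ℕ} (h : hit H fs b t m) :
    wit H fs b t m ∈ FF H fs (nsel H fs b t m) m ∧
      dist (wit H fs b t m : X) (b : X) ≤ sig t := by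
  rw [wit, dif_pos h, nsel, dif_pos h]
  exact ⟨(Nat.find_spec h).choose_spec.1, (Nat.find_spec h).choose_spec.2⟩

lemma nsel_le {b : ↥H} {t : ℝ} {m n : ℕ} (h : hitP H fs b t m n) :
    nsel H fs b t m ≤ n := by
  have hh : hit H fs b t m := ⟨n, h⟩
  rw [nsel, dif_pos hh]
  exact Nat.find_le h

/-- coherence predicate. -/
def P (b : ↥H) (t : ℝ) (m : ℕ) : Prop :=
  (∀ μ ≤ m, hit H fs b t μ) ∧
    ∀ μ μ', μ ≤ μ' → μ' ≤ m → ‖uu H fs b t μ - uu H fs b t μ'‖ ≤ 4 * q μ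

/-- level cap -/
def Mcap (t : ℝ) : ℕ := ⌈1/t⌉₊

open Classical in
/-- selected coherent level. -/
def mstar (b : ↥H) (t : ℝ) : ℕ := Nat.findGreatest (P H fs b t) (Mcap t)

open Classical in
/-- selected raw value. -/
def usel (b : ↥H) (t : ℝ) : Z :=
  if hit H fs b t 0 then uu H fs b t (mstar H fs b t) else f b

open Classical in
/-- selected anchor point. -/
def beta (b : ↥H) (t : ℝ) : ↥H :=
  if hit H fs b t 0 then wit H fs b t (mstar H fs b t) else b

open Classical in
/-- norm-capped value. -/
def ucap (b : ↥H) (t : ℝ) : Z :=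
  if ‖usel H f fs b t‖ ≤ th t then usel H f fs b t
  else (th t / ‖usel H f fs b t‖) • usel H f fs b t

/-- clamp radius. -/
def Rad (b : ↥H) (t : ℝ) : ℝ :=
  ‖f (beta H fs b t) - f b‖ + sig t + max 0 (‖ucap H f fs b t - f b‖ - th t)

open Classical in
/-- the final local value. -/
def vv (b : ↥H) (t : ℝ) : Z :=
  f b + (if ‖ucap H f fs b t - f b‖ ≤ Rad H f fs b t then ucap H f fs b t - f b
    else (Rad H f fs b t / ‖ucap H f fs b t - f b‖) • (ucap H f fs b t - f b))

lemma Rad_nonneg (b : ↥H) (t : ℝ) (ht : 0 ≤ t) : 0 ≤ Rad H f fs b t :=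
  add_nonneg (add_nonneg (norm_nonneg _) (sig_nonneg t)) (le_max_left _ _)

/-- the final value lies on the segment from `f b` to `ucap`. -/
lemma vv_segment (b : ↥H) (t : ℝ) (ht : 0 ≤ t) :
    ∃ c : ℝ, 0 ≤ c ∧ c ≤ 1 ∧ vv H f fs b t - f b = c • (ucap H f fs b t - f b) := by
  classical
  unfold vv
  by_cases h : ‖ucap H f fs b t - f b‖ ≤ Rad H f fs b t
  · exact ⟨1, zero_le_one, le_refl 1, by rw [if_pos h]; simp⟩
  · push_neg at h
    have hpos : 0 < ‖ucap H f fs b t - f b‖ := lt_of_le_of_lt (Rad_nonneg H f fs b t ht) h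
    refine ⟨Rad H f fs b t / ‖ucap H f fs b t - f b‖,
      div_nonneg (Rad_nonneg H f fs b t ht) (norm_nonneg _),
      (div_le_one hpos).2 h.le, ?_⟩
    rw [if_neg (not_le.2 h)]
    simp

lemma vv_dist_fb (b : ↥H) (t : ℝ) (ht : 0 ≤ t) :
    ‖vv H f fs b t - f b‖ ≤ Rad H f fs b t ∧
      ‖vv H f fs b t - f b‖ ≤ ‖ucap H f fs b t - f b‖ := by
  unfold vv
  by_cases h : ‖ucap H f fs b t - f b‖ ≤ Rad H f fs b t
  · rw [if_pos h, add_sub_cancel_left]; exact ⟨h, le_refl _⟩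
  · push_neg at h
    have hpos : 0 < ‖ucap H f fs b t - f b‖ := lt_of_le_of_lt (Rad_nonneg H f fs b t ht) h
    rw [if_neg (not_le.2 h), add_sub_cancel_left, norm_smul, Real.norm_eq_abs,
      abs_of_nonneg (div_nonneg (Rad_nonneg H f fs b t ht) (norm_nonneg _)),
      div_mul_cancel₀ _ hpos.ne']
    exact ⟨le_refl _, h.le⟩

/-- distance from the final value to the capped value. -/
lemma vv_dist_ucap (b : ↥H) (t : ℝ) (ht : 0 ≤ t) :
    ‖vv H f fs b t - ucap H f fs b t‖ ≤ th t := by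
  unfold vv
  by_cases h : ‖ucap H f fs b t - f b‖ ≤ Rad H f fs b t
  · rw [if_pos h]
    have : f b + (ucap H f fs b t - f b) - ucap H f fs b t = 0 := by abel
    rw [this, norm_zero]; exact th_nonneg t
  · push_neg at h
    have hpos : 0 < ‖ucap H f fs b t - f b‖ := lt_of_le_of_lt (Rad_nonneg H f fs b t ht) h
    rw [if_neg (not_le.2 h)]
    have he : f b + (Rad H f fs b t / ‖ucap H f fs b t - f b‖) • (ucap H f fs b t - f b)
        - ucap H f fs b t
        = (Rad H f fs b t / ‖ucap H f fs b t - f b‖ - 1) • (ucap H f fs b t - f b) := by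
      rw [sub_smul, one_smul]; abel
    rw [he, norm_smul, Real.norm_eq_abs]
    have h1 : Rad H f fs b t / ‖ucap H f fs b t - f b‖ ≤ 1 := (div_le_one hpos).2 h.le
    rw [abs_of_nonpos (by linarith), neg_sub]
    have h2 : (1 - Rad H f fs b t / ‖ucap H f fs b t - f b‖) * ‖ucap H f fs b t - f b‖
        = ‖ucap H f fs b t - f b‖ - Rad H f fs b t := by
      field_simp
    rw [h2]
    have h3 : max 0 (‖ucap H f fs b t - f b‖ - th t) ≤ Rad H f fs b t := by
      unfold Rad
      have : (0:ℝ) ≤ ‖f (beta H fs b t) - f b‖ + sig t :=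
        add_nonneg (norm_nonneg _) (sig_nonneg t)
      linarith
    have h4 : ‖ucap H f fs b t - f b‖ - th t ≤ Rad H f fs b t :=
      le_trans (le_max_right _ _) h3
    linarith

/-- norm bound on the capped value. -/
lemma ucap_le (b : ↥H) (t : ℝ) : ‖ucap H f fs b t‖ ≤ th t ∧
    ‖ucap H f fs b t‖ ≤ ‖usel H f fs b t‖ := by
  unfold ucap
  by_cases h : ‖usel H f fs b t‖ ≤ th t
  · rw [if_pos h]; exact ⟨h, le_refl _⟩
  · push_neg at h
    have hpos : 0 < ‖usel H f fs b t‖ := lt_of_le_of_lt (th_nonneg t) h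
    rw [if_neg (not_le.2 h), norm_smul, Real.norm_eq_abs,
      abs_of_nonneg (div_nonneg (th_nonneg t) (norm_nonneg _)),
      div_mul_cancel₀ _ hpos.ne']
    exact ⟨le_refl _, h.le⟩

/-- if the raw value is within the threshold, no capping occurs. -/
lemma ucap_eq (b : ↥H) (t : ℝ) (h : ‖usel H f fs b t‖ ≤ th t) :
    ucap H f fs b t = usel H f fs b t := by
  unfold ucap; rw [if_pos h]

lemma hit_mstar {b : ↥H} {t : ℝ} (h0 : hit H fs b t 0) : hit H fs b t (mstar H fs b t) := by
  rcases Nat.eq_zero_or_pos (mstar H fs b t) with h | h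
  · rw [h]; exact h0
  · have := Nat.findGreatest_of_ne_zero (rfl : Nat.findGreatest (P H fs b t) (Mcap t)
      = mstar H fs b t) h.ne'
    exact this.1 _ (le_refl _)

lemma beta_dist {b : ↥H} {t : ℝ} : dist (beta H fs b t : X) (b : X) ≤ sig t ∨
    beta H fs b t = b := by
  unfold beta
  by_cases h0 : hit H fs b t 0
  · rw [if_pos h0]; exact Or.inl (wit_mem H fs (hit_mstar H fs h0)).2
  · rw [if_neg h0]; exact Or.inr rfl

lemma beta_dist' {b : ↥H} {t : ℝ} (ht : 0 ≤ t) :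
    dist (beta H fs b t : X) (b : X) ≤ sig t := by
  rcases beta_dist H fs (b := b) (t := t) with h | h
  · exact h
  · rw [h]; simpa using sig_nonneg t

lemma usel_close_beta (hfp : ∀ y, Tendsto (fun n => fs n y) atTop (𝓝 (f y)))
    {b : ↥H} {t : ℝ} :
    ‖usel H f fs b t - f (beta H fs b t)‖ ≤ q (mstar H fs b t) := by
  unfold usel beta
  by_cases h0 : hit H fs b t 0
  · rw [if_pos h0, if_pos h0]
    have hm := hit_mstar H fs h0
    have hw := (wit_mem H fs hm).1
    exact FF_close H f fs hfp hw (le_refl _)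
  · rw [if_neg h0, if_neg h0]
    simpa using (q_pos _).le

lemma usel_close_beta' (hfp : ∀ y, Tendsto (fun n => fs n y) atTop (𝓝 (f y)))
    {b : ↥H} {t : ℝ} :
    ‖usel H f fs b t - f (beta H fs b t)‖ ≤ 1 :=
  (usel_close_beta H f fs hfp).trans (q_le_one _)

/-- key coherence estimate: if `P m̄` holds and `m̄ ≤ Mcap t`, then the selected value
is `4 q m̄`-close to the level-`m̄` candidate. -/
lemma usel_coherent {b : ↥H} {t : ℝ} {mb : ℕ} (hP : P H fs b t mb) (hMc : mb ≤ Mcap t) :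
    ‖uu H fs b t mb - usel H f fs b t‖ ≤ 4 * q mb ∧ mb ≤ mstar H fs b t := by
  have h0 : hit H fs b t 0 := hP.1 0 (Nat.zero_le _)
  have hle : mb ≤ mstar H fs b t := Nat.le_findGreatest hMc hP
  have hPs : P H fs b t (mstar H fs b t) := Nat.findGreatest_spec hMc hP
  unfold usel
  rw [if_pos h0]
  exact ⟨hPs.2 mb (mstar H fs b t) hle (le_refl _), hle⟩

/-- sharper distortion bound of the clamp. -/
lemma vv_dist_ucap2 (b : ↥H) (t : ℝ) (ht : 0 ≤ t) {c : ℝ}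
    (hc : ‖ucap H f fs b t - f b‖ ≤ c + Rad H f fs b t) :
    ‖vv H f fs b t - ucap H f fs b t‖ ≤ max 0 c := by
  unfold vv
  by_cases h : ‖ucap H f fs b t - f b‖ ≤ Rad H f fs b t
  · rw [if_pos h]
    have : f b + (ucap H f fs b t - f b) - ucap H f fs b t = 0 := by abel
    rw [this, norm_zero]; exact le_max_left _ _
  · push_neg at h
    have hpos : 0 < ‖ucap H f fs b t - f b‖ := lt_of_le_of_lt (Rad_nonneg H f fs b t ht) h
    rw [if_neg (not_le.2 h)]
    have he : f b + (Rad H f fs b t / ‖ucap H f fs b t - f b‖) • (ucap H f fs b t - f b)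
        - ucap H f fs b t
        = (Rad H f fs b t / ‖ucap H f fs b t - f b‖ - 1) • (ucap H f fs b t - f b) := by
      rw [sub_smul, one_smul]; abel
    rw [he, norm_smul, Real.norm_eq_abs]
    have h1 : Rad H f fs b t / ‖ucap H f fs b t - f b‖ ≤ 1 := (div_le_one hpos).2 h.le
    rw [abs_of_nonpos (by linarith), neg_sub]
    have h2 : (1 - Rad H f fs b t / ‖ucap H f fs b t - f b‖) * ‖ucap H f fs b t - f b‖
        = ‖ucap H f fs b t - f b‖ - Rad H f fs b t := by field_simp
    rw [h2]
    refine le_trans ?_ (le_max_right 0 c)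
    linarith

lemma sig_mono {s t : ℝ} (h : s ≤ t) : sig s ≤ sig t :=
  min_le_min (Real.sqrt_le_sqrt h) (le_refl 1)

/-- MAIN CASE A estimate: near-certificates force the selected value close to `f a`. -/
lemma estA (hfc : ∀ n, Continuous (fs n))
    (hfp : ∀ y, Tendsto (fun n => fs n y) atTop (𝓝 (f y)))
    (a : ↥H) {ε : ℝ} (hε : 0 < ε) :
    ∃ δ > 0, ∀ (b : ↥H) (t : ℝ), 0 < t → t ≤ δ → dist (b : X) (a : X) ≤ sig t →
      ‖usel H f fs b t - f a‖ ≤ ε ∧ ‖usel H f fs b t - f (beta H fs b t)‖ ≤ ε := by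
  -- choose the quality level
  obtain ⟨mb, hmb⟩ : ∃ mb, q mb ≤ ε / 9 := by
    rcases (Metric.tendsto_atTop.1 q_tendsto (ε/9) (by positivity)) with ⟨mb, h⟩
    refine ⟨mb, ?_⟩
    have := h mb (le_refl _)
    rw [Real.dist_eq, sub_zero, abs_of_nonneg (q_pos mb).le] at this
    exact this.le
  obtain ⟨K, haK⟩ := FF_exists H f fs hfp a mb
  -- oscillation control for indices up to K
  set G : ↥H → ℝ := fun y => ∑ n ∈ Finset.range (K+1), ‖fs n y - fs n a‖ with hG
  have hGc : Continuous G := by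
    apply continuous_finset_sum
    intro n _
    exact ((hfc n).sub continuous_const).norm
  have hGa : G a = 0 := by simp [hG]
  obtain ⟨δ₀, hδ₀, hosc0⟩ := Metric.continuousAt_iff.1 hGc.continuousAt (q mb / 2)
    (by have := q_pos mb; linarith)
  have hosc : ∀ y : ↥H, dist (y : X) (a : X) < δ₀ → ∀ n ≤ K,
      ‖fs n y - fs n a‖ ≤ q mb / 2 := by
    intro y hy n hn
    have h1 : dist y a < δ₀ := by rwa [Subtype.dist_eq]
    have h2 := hosc0 h1
    rw [Real.dist_eq, hGa, sub_zero] at h2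
    have h3 : ‖fs n y - fs n a‖ ≤ G y := by
      refine Finset.single_le_sum (f := fun n => ‖fs n y - fs n a‖) ?_ ?_
      · intro i _; exact norm_nonneg _
      · exact Finset.mem_range.2 (Nat.lt_succ_of_le hn)
    exact h3.trans ((le_abs_self _).trans h2.le)
  -- choose δ
  set δ : ℝ := min ((δ₀/3)^2) (1/(mb+1)) with hδdef
  have hδpos : 0 < δ := by
    apply lt_min
    · positivity
    · positivity
  refine ⟨δ, hδpos, ?_⟩
  intro b t ht htδ hba
  have hsigt : sig t ≤ δ₀ / 3 := by
    have h1 : sig t ≤ Real.sqrt t := sig_le_sqrt t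
    have h2 : Real.sqrt t ≤ Real.sqrt ((δ₀/3)^2) :=
      Real.sqrt_le_sqrt (htδ.trans (min_le_left _ _))
    rw [Real.sqrt_sq (by positivity)] at h2
    exact h1.trans h2
  have hMcap : mb ≤ Mcap t := by
    have h1 : t ≤ 1/(mb+1) := htδ.trans (min_le_right _ _)
    have h2 : (mb : ℝ) ≤ 1 / t := by
      rw [le_div_iff₀ ht]
      calc (mb:ℝ) * t ≤ (mb+1) * t := by nlinarith
        _ ≤ (mb+1) * (1/(mb+1)) := by
            apply mul_le_mul_of_nonneg_left h1 (by positivity)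
        _ = 1 := by field_simp
    calc mb = ⌈(mb : ℝ)⌉₊ := by rw [Nat.ceil_natCast]
      _ ≤ ⌈1/t⌉₊ := Nat.ceil_le_ceil h2
  -- hits at every level μ ≤ mb, with nsel ≤ K
  have hhit : ∀ μ ≤ mb, hitP H fs b t μ K := by
    intro μ hμ
    refine ⟨a, FF_mono_m H fs hμ haK, ?_⟩
    rwa [dist_comm]
  have hnsel : ∀ μ ≤ mb, nsel H fs b t μ ≤ K := fun μ hμ => nsel_le H fs (hhit μ hμ)
  have hwit : ∀ μ ≤ mb, wit H fs b t μ ∈ FF H fs K μ ∧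
      dist (wit H fs b t μ : X) (a : X) < δ₀ := by
    intro μ hμ
    have h1 := wit_mem H fs (⟨K, hhit μ hμ⟩ : hit H fs b t μ)
    constructor
    · exact FF_mono_n H fs (hnsel μ hμ) h1.1
    · calc dist (wit H fs b t μ : X) (a : X)
          ≤ dist (wit H fs b t μ : X) (b : X) + dist (b : X) (a : X) := dist_triangle _ _ _
        _ ≤ sig t + sig t := add_le_add h1.2 hba
        _ < δ₀ := by linarith [sig_pos ht, hsigt]
  -- value estimate at each level
  have huu : ∀ μ ≤ mb, ‖uu H fs b t μ - fs K (wit H fs b t μ)‖ ≤ q μ := by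
    intro μ hμ
    have h1 := (wit_mem H fs (⟨K, hhit μ hμ⟩ : hit H fs b t μ)).1
    exact h1 (le_refl _) (hnsel μ hμ)
  -- coherence
  have hP : P H fs b t mb := by
    constructor
    · exact fun μ hμ => ⟨K, hhit μ hμ⟩
    · intro μ μ' hμμ' hμ'
      have hμ : μ ≤ mb := hμμ'.trans hμ'
      have h1 := huu μ hμ
      have h2 := huu μ' hμ'
      have h3 : ‖fs K (wit H fs b t μ) - fs K (wit H fs b t μ')‖ ≤ q mb := by
        calc ‖fs K (wit H fs b t μ) - fs K (wit H fs b t μ')‖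
            ≤ ‖fs K (wit H fs b t μ) - fs K a‖ + ‖fs K a - fs K (wit H fs b t μ')‖ :=
              norm_sub_le_norm_sub_add_norm_sub _ _ _
          _ ≤ q mb / 2 + q mb / 2 := by
              refine add_le_add (hosc _ (hwit μ hμ).2 K (le_refl _)) ?_
              rw [norm_sub_rev]
              exact hosc _ (hwit μ' hμ').2 K (le_refl _)
          _ = q mb := by ring
      have hqμ' : q μ' ≤ q μ := q_antitone hμμ'
      have hqmb : q mb ≤ q μ := q_antitone hμ
      calc ‖uu H fs b t μ - uu H fs b t μ'‖
          ≤ ‖uu H fs b t μ - fs K (wit H fs b t μ)‖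
            + ‖fs K (wit H fs b t μ) - fs K (wit H fs b t μ')‖
            + ‖fs K (wit H fs b t μ') - uu H fs b t μ'‖ := norm_sub_le₃ _ _ _ _
        _ ≤ q μ + q mb + q μ' := by
            refine add_le_add (add_le_add h1 h3) ?_
            rw [norm_sub_rev]; exact h2
        _ ≤ 4 * q μ := by linarith [q_pos μ]
  obtain ⟨hcoh, hmle⟩ := usel_coherent H f fs hP hMcap
  -- level mb value is close to f a
  have hfa : ‖uu H fs b t mb - f a‖ ≤ 5/2 * q mb := by
    have h1 := huu mb (le_refl _)
    have h2 := hosc _ (hwit mb (le_refl _)).2 K (le_refl _)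
    have h3 : ‖fs K a - f a‖ ≤ q mb := FF_close H f fs hfp haK (le_refl _)
    calc ‖uu H fs b t mb - f a‖
        ≤ ‖uu H fs b t mb - fs K (wit H fs b t mb)‖
          + ‖fs K (wit H fs b t mb) - fs K a‖ + ‖fs K a - f a‖ :=
          norm_sub_le₃ _ _ _ _
      _ ≤ q mb + q mb / 2 + q mb := add_le_add (add_le_add h1 h2) h3
      _ = 5/2 * q mb := by ring
  constructor
  · calc ‖usel H f fs b t - f a‖
        ≤ ‖usel H f fs b t - uu H fs b t mb‖ + ‖uu H fs b t mb - f a‖ :=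
          norm_sub_le_norm_sub_add_norm_sub _ _ _
      _ ≤ 4 * q mb + 5/2 * q mb := by
          refine add_le_add ?_ hfa
          rw [norm_sub_rev]; exact hcoh
      _ ≤ 9 * q mb := by linarith [q_pos mb]
      _ ≤ ε := by linarith [hmb]
  · refine le_trans (usel_close_beta H f fs hfp) ?_
    calc q (mstar H fs b t) ≤ q mb := q_antitone hmle
      _ ≤ ε := by linarith [q_pos mb, hmb]

/-- full CASE A estimate for the final value. -/
lemma estA' (hfc : ∀ n, Continuous (fs n))
    (hfp : ∀ y, Tendsto (fun n => fs n y) atTop (𝓝 (f y)))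
    (a : ↥H) {ε : ℝ} (hε : 0 < ε) :
    ∃ δ > 0, ∀ (b : ↥H) (t : ℝ), 0 < t → t ≤ δ → dist (b : X) (a : X) ≤ sig t →
      ‖vv H f fs b t - f a‖ ≤ ε := by
  have hε3 : 0 < ε/3 := by linarith
  obtain ⟨δ₁, hδ₁, hA⟩ := estA H f fs hfc hfp a hε3
  have hcpos : 0 < ‖f a‖ + ε/3 + 1 := by positivity
  set c := ‖f a‖ + ε/3 + 1 with hc
  refine ⟨min δ₁ ((1/c)^4), lt_min hδ₁ (by positivity), ?_⟩
  intro b t ht htδ hba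
  obtain ⟨hA1, hA2⟩ := hA b t ht (htδ.trans (min_le_left _ _)) hba
  -- the cap is inactive
  have husel : ‖usel H f fs b t‖ ≤ th t := by
    have h1 : ‖usel H f fs b t‖ ≤ ‖f a‖ + ε/3 := by
      calc ‖usel H f fs b t‖ = ‖usel H f fs b t - f a + f a‖ := by rw [sub_add_cancel]
        _ ≤ ‖usel H f fs b t - f a‖ + ‖f a‖ := norm_add_le _ _
        _ ≤ ε/3 + ‖f a‖ := add_le_add hA1 (le_refl _)
        _ = ‖f a‖ + ε/3 := by ring
    have h2 : th t ≥ c := by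
      rw [th, ge_iff_le, le_inv_comm₀ hcpos (Real.sqrt_pos.2 (Real.sqrt_pos.2 ht))]
      have h3 : t ≤ (1/c)^4 := htδ.trans (min_le_right _ _)
      have h4 : Real.sqrt t ≤ Real.sqrt ((1/c)^4) := Real.sqrt_le_sqrt h3
      have h5 : Real.sqrt ((1/c)^4) = (1/c)^2 := by
        rw [show ((1/c)^4 : ℝ) = ((1/c)^2)^2 by ring, Real.sqrt_sq (by positivity)]
      have h6 : Real.sqrt (Real.sqrt t) ≤ Real.sqrt ((1/c)^2) :=
        Real.sqrt_le_sqrt (by rw [← h5]; exact h4)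
      rw [Real.sqrt_sq (by positivity)] at h6
      calc Real.sqrt (Real.sqrt t) ≤ 1/c := h6
        _ = c⁻¹ := one_div c
    calc ‖usel H f fs b t‖ ≤ ‖f a‖ + ε/3 := h1
      _ ≤ c := by rw [hc]; linarith
      _ ≤ th t := h2
  have hue : ucap H f fs b t = usel H f fs b t := ucap_eq H f fs b t husel
  -- clamp distortion at most ε/3
  have hdist : ‖vv H f fs b t - ucap H f fs b t‖ ≤ ε/3 := by
    have h1 : ‖ucap H f fs b t - f b‖ ≤ ε/3 + Rad H f fs b t := by
      rw [hue]
      calc ‖usel H f fs b t - f b‖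
          ≤ ‖usel H f fs b t - f (beta H fs b t)‖ + ‖f (beta H fs b t) - f b‖ :=
            norm_sub_le_norm_sub_add_norm_sub _ _ _
        _ ≤ ε/3 + ‖f (beta H fs b t) - f b‖ := add_le_add hA2 (le_refl _)
        _ ≤ ε/3 + Rad H f fs b t := by
            refine add_le_add (le_refl _) ?_
            unfold Rad
            have := sig_nonneg t
            have : (0:ℝ) ≤ max 0 (‖ucap H f fs b t - f b‖ - th t) := le_max_left _ _
            linarith [sig_nonneg t]
    have := vv_dist_ucap2 H f fs b t ht.le h1
    rwa [max_eq_right (by linarith : (0:ℝ) ≤ ε/3)] at this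
  rw [hue] at hdist
  calc ‖vv H f fs b t - f a‖
      ≤ ‖vv H f fs b t - usel H f fs b t‖ + ‖usel H f fs b t - f a‖ :=
        norm_sub_le_norm_sub_add_norm_sub _ _ _
    _ ≤ ε/3 + ε/3 := add_le_add hdist hA1
    _ ≤ ε := by linarith

/-- CASE B (tangential) estimate. -/
lemma estB' (a : ↥H) {ε : ℝ} (hε : 0 < ε) :
    ∃ δ > 0, ∀ (b : ↥H) (t : ℝ) (w : ℝ), 0 < t → t ≤ δ →
      sig t < dist (b : X) (a : X) → 0 ≤ w → w * dist (b : X) (a : X) ≤ 3 * t →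
      ‖vv H f fs b t - f a‖ * w ≤ ε := by
  set c := ‖f a‖ + 1 with hc
  have hcpos : 0 < c := by positivity
  refine ⟨min (min ((ε/12)^4) ((ε/(6*c))^2)) 1, by positivity, ?_⟩
  intro b t w ht htδ hfar hw hwd
  have ht1 : t ≤ 1 := htδ.trans (min_le_right _ _)
  have hsq : sig t = Real.sqrt t := by
    rw [sig, min_eq_left]
    rw [show (1:ℝ) = Real.sqrt 1 by rw [Real.sqrt_one]]
    exact Real.sqrt_le_sqrt ht1
  have hsqpos : 0 < Real.sqrt t := Real.sqrt_pos.2 ht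
  -- w ≤ 3 √t
  have hw3 : w ≤ 3 * Real.sqrt t := by
    have h1 : w * Real.sqrt t ≤ w * dist (b : X) (a : X) := by
      apply mul_le_mul_of_nonneg_left _ hw
      rw [← hsq]; exact hfar.le
    have h4 : w * Real.sqrt t ≤ 3 * t := h1.trans hwd
    have h5 : w * Real.sqrt t ≤ (3 * Real.sqrt t) * Real.sqrt t := by
      nlinarith [Real.mul_self_sqrt ht.le]
    exact le_of_mul_le_mul_right h5 hsqpos
  -- value bound
  have hv : ‖vv H f fs b t - f a‖ ≤ 2 * th t + ‖f a‖ := by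
    calc ‖vv H f fs b t - f a‖
        ≤ ‖vv H f fs b t - ucap H f fs b t‖ + ‖ucap H f fs b t‖ + ‖f a‖ := by
          have := norm_sub_le (vv H f fs b t - ucap H f fs b t + ucap H f fs b t) (f a)
          calc ‖vv H f fs b t - f a‖ = ‖(vv H f fs b t - ucap H f fs b t) + ucap H f fs b t - f a‖ := by
                rw [sub_add_cancel]
            _ ≤ ‖(vv H f fs b t - ucap H f fs b t) + ucap H f fs b t‖ + ‖f a‖ := norm_sub_le _ _
            _ ≤ ‖vv H f fs b t - ucap H f fs b t‖ + ‖ucap H f fs b t‖ + ‖f a‖ :=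
                add_le_add_left (norm_add_le _ _) _
      _ ≤ th t + th t + ‖f a‖ :=
          add_le_add_left (add_le_add (vv_dist_ucap H f fs b t ht.le) (ucap_le H f fs b t).1) _
      _ = 2 * th t + ‖f a‖ := by ring
  -- th t * sqrt t = sqrt (sqrt t)
  have hth : th t * Real.sqrt t = Real.sqrt (Real.sqrt t) := by
    rw [th]
    have : Real.sqrt t = Real.sqrt (Real.sqrt t) * Real.sqrt (Real.sqrt t) :=
      (Real.mul_self_sqrt (Real.sqrt_nonneg t)).symm
    rw [this]
    field_simp
    rw [Real.sqrt_sq (Real.sqrt_nonneg _)]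
  have hssq : Real.sqrt (Real.sqrt t) ≤ ε / 12 := by
    have h1 : t ≤ (ε/12)^4 := htδ.trans ((min_le_left _ _).trans (min_le_left _ _))
    have h2 : Real.sqrt t ≤ (ε/12)^2 := by
      have := Real.sqrt_le_sqrt h1
      rwa [show ((ε/12)^4 : ℝ) = ((ε/12)^2)^2 by ring, Real.sqrt_sq (by positivity)] at this
    have := Real.sqrt_le_sqrt h2
    rwa [Real.sqrt_sq (by positivity)] at this
  have hsqb : Real.sqrt t ≤ ε / (6 * c) := by
    have h1 : t ≤ (ε/(6*c))^2 := htδ.trans ((min_le_left _ _).trans (min_le_right _ _))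
    have := Real.sqrt_le_sqrt h1
    rwa [Real.sqrt_sq (by positivity)] at this
  calc ‖vv H f fs b t - f a‖ * w ≤ (2 * th t + ‖f a‖) * (3 * Real.sqrt t) := by
        apply mul_le_mul hv hw3 hw
        have := th_nonneg t
        have := norm_nonneg (f a)
        linarith
    _ = 6 * (th t * Real.sqrt t) + 3 * ‖f a‖ * Real.sqrt t := by ring
    _ ≤ 6 * (ε/12) + 3 * c * (ε / (6 * c)) := by
        refine add_le_add ?_ ?_
        · rw [hth]; linarith
        · have h1 : ‖f a‖ ≤ c := by rw [hc]; linarith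
          calc 3 * ‖f a‖ * Real.sqrt t ≤ 3 * c * Real.sqrt t := by
                apply mul_le_mul_of_nonneg_right _ (Real.sqrt_nonneg t)
                linarith
            _ ≤ 3 * c * (ε / (6*c)) := by
                apply mul_le_mul_of_nonneg_left hsqb (by positivity)
    _ ≤ ε := by
        have : 3 * c * (ε / (6 * c)) = ε / 2 := by field_simp; ring
        linarith

lemma sqrt_le_of {t e : ℝ} (he : 0 ≤ e) (h : t ≤ e^2) : Real.sqrt t ≤ e := by
  rw [show e = Real.sqrt (e^2) by rw [Real.sqrt_sq he]]
  exact Real.sqrt_le_sqrt h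

lemma th_ge {c t : ℝ} (hc : 0 < c) (ht : 0 < t) (h : t ≤ (1/c)^4) : c ≤ th t := by
  rw [th, le_inv_comm₀ hc (Real.sqrt_pos.2 (Real.sqrt_pos.2 ht))]
  have h2 : Real.sqrt t ≤ (1/c)^2 := sqrt_le_of (by positivity) (by
    calc t ≤ (1/c)^4 := h
      _ = ((1/c)^2)^2 := by ring)
  calc Real.sqrt (Real.sqrt t) ≤ 1/c := sqrt_le_of (by positivity) h2
    _ = c⁻¹ := one_div c

/-- continuity-point estimate. -/
lemma estC' (hfp : ∀ y, Tendsto (fun n => fs n y) atTop (𝓝 (f y)))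
    (a : ↥H) (hca : ContinuousAt f a) {ε : ℝ} (hε : 0 < ε) :
    ∃ δ > 0, ∀ (b : ↥H) (t : ℝ), 0 < t → t ≤ δ → dist (b : X) (a : X) ≤ δ →
      ‖vv H f fs b t - f a‖ ≤ ε := by
  have hε5 : 0 < ε/5 := by linarith
  obtain ⟨δ₁, hδ₁, hcont0⟩ := Metric.continuousAt_iff.1 hca (ε/5) hε5
  have hcont : ∀ y : ↥H, dist (y : X) (a : X) < δ₁ → ‖f y - f a‖ ≤ ε/5 := by
    intro y hy
    have h1 : dist y a < δ₁ := by rwa [Subtype.dist_eq]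
    have := hcont0 h1
    rw [dist_eq_norm] at this
    exact this.le
  have hc2pos : 0 < 2*‖f a‖ + 2*(ε/5) + 2 := by positivity
  set c2 := 2*‖f a‖ + 2*(ε/5) + 2 with hc2
  refine ⟨min (min ((ε/5)^2) ((1/c2)^4)) (min ((δ₁/3)^2) (δ₁/3)),
    by positivity, ?_⟩
  intro b t ht htδ hba
  have hδle : min (min ((ε/5)^2) ((1/c2)^4)) (min ((δ₁/3)^2) (δ₁/3)) ≤ δ₁/3 :=
    (min_le_right _ _).trans (min_le_right _ _)
  have hbδ3 : dist (b : X) (a : X) ≤ δ₁/3 := hba.trans hδle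
  have hδa : dist (b : X) (a : X) < δ₁ := lt_of_le_of_lt hbδ3 (by linarith)
  have hsigt : sig t ≤ δ₁/3 := by
    refine (sig_le_sqrt t).trans (sqrt_le_of (by linarith) ?_)
    exact htδ.trans ((min_le_right _ _).trans (min_le_left _ _))
  have hβa : dist (beta H fs b t : X) (a : X) < δ₁ := by
    have h3 := dist_triangle (beta H fs b t : X) (b : X) (a : X)
    have h4 := (beta_dist' H fs (b := b) (t := t) ht.le)
    linarith
  have hfb : ‖f b - f a‖ ≤ ε/5 := hcont b hδa
  have hfβ : ‖f (beta H fs b t) - f a‖ ≤ ε/5 := hcont _ hβa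
  have hOm : ‖f (beta H fs b t) - f b‖ ≤ 2*(ε/5) := by
    calc ‖f (beta H fs b t) - f b‖
        ≤ ‖f (beta H fs b t) - f a‖ + ‖f a - f b‖ := norm_sub_le_norm_sub_add_norm_sub _ _ _
      _ ≤ ε/5 + ε/5 := by
          refine add_le_add hfβ ?_
          rw [norm_sub_rev]; exact hfb
      _ = 2*(ε/5) := by ring
  -- release is inactive
  have husel : ‖usel H f fs b t‖ ≤ ‖f a‖ + ε/5 + 1 := by
    have h1 := usel_close_beta' H f fs hfp (b := b) (t := t)
    calc ‖usel H f fs b t‖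
        = ‖(usel H f fs b t - f (beta H fs b t)) + (f (beta H fs b t) - f a) + f a‖ := by
          congr 1; abel
      _ ≤ ‖usel H f fs b t - f (beta H fs b t)‖ + ‖f (beta H fs b t) - f a‖ + ‖f a‖ :=
          le_trans (norm_add_le _ _) (add_le_add_left (norm_add_le _ _) _)
      _ ≤ 1 + ε/5 + ‖f a‖ := add_le_add (add_le_add h1 hfβ) (le_refl _)
      _ = ‖f a‖ + ε/5 + 1 := by ring
  have hucfb : ‖ucap H f fs b t - f b‖ ≤ th t := by
    have h1 := (ucap_le H f fs b t).2
    have h2 : ‖f b‖ ≤ ‖f a‖ + ε/5 := by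
      calc ‖f b‖ = ‖(f b - f a) + f a‖ := by congr 1; abel
        _ ≤ ‖f b - f a‖ + ‖f a‖ := norm_add_le _ _
        _ ≤ ε/5 + ‖f a‖ := add_le_add hfb (le_refl _)
        _ = ‖f a‖ + ε/5 := by ring
    have h3 : ‖ucap H f fs b t - f b‖ ≤ c2 := by
      calc ‖ucap H f fs b t - f b‖ ≤ ‖ucap H f fs b t‖ + ‖f b‖ := norm_sub_le _ _
        _ ≤ (‖f a‖ + ε/5 + 1) + (‖f a‖ + ε/5) := add_le_add (h1.trans husel) h2
        _ ≤ c2 := by rw [hc2]; linarith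
    have h4 : c2 ≤ th t :=
      th_ge hc2pos ht (htδ.trans ((min_le_left _ _).trans (min_le_right _ _)))
    exact h3.trans h4
  have hRad : Rad H f fs b t ≤ 2*(ε/5) + sig t := by
    unfold Rad
    have h1 : max 0 (‖ucap H f fs b t - f b‖ - th t) = 0 :=
      max_eq_left (by linarith)
    rw [h1]
    linarith
  have hsige : sig t ≤ ε/5 := by
    refine (sig_le_sqrt t).trans (sqrt_le_of hε5.le ?_)
    exact htδ.trans ((min_le_left _ _).trans (min_le_left _ _))
  calc ‖vv H f fs b t - f a‖
      ≤ ‖vv H f fs b t - f b‖ + ‖f b - f a‖ := norm_sub_le_norm_sub_add_norm_sub _ _ _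
    _ ≤ (2*(ε/5) + sig t) + ε/5 := add_le_add ((vv_dist_fb H f fs b t ht.le).1.trans hRad) hfb
    _ ≤ ε := by linarith

/-- boundedness estimates. -/
lemma estBd (hfp : ∀ y, Tendsto (fun n => fs n y) atTop (𝓝 (f y)))
    {b : ↥H} {t M : ℝ} (ht : 0 < t) (hM : 0 ≤ M) (hfb : ‖f b‖ ≤ M) :
    ‖vv H f fs b t‖ ≤ 2*M + th t ∧
      ((∀ y : ↥H, dist (y : X) (b : X) ≤ sig t → ‖f y‖ ≤ M) →
        ‖vv H f fs b t‖ ≤ 4*M + 1) := by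
  have hvfb := vv_dist_fb H f fs b t ht.le
  have hucap := ucap_le H f fs b t
  constructor
  · calc ‖vv H f fs b t‖ = ‖f b + (vv H f fs b t - f b)‖ := by congr 1; abel
      _ ≤ ‖f b‖ + ‖vv H f fs b t - f b‖ := norm_add_le _ _
      _ ≤ M + ‖ucap H f fs b t - f b‖ := add_le_add hfb hvfb.2
      _ ≤ M + (‖ucap H f fs b t‖ + ‖f b‖) := add_le_add (le_refl _) (norm_sub_le _ _)
      _ ≤ M + (th t + M) := add_le_add (le_refl _) (add_le_add hucap.1 hfb)
      _ = 2*M + th t := by ring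
  · intro hy
    have hβ : ‖f (beta H fs b t)‖ ≤ M := hy _ (beta_dist' H fs ht.le)
    have hOm : ‖f (beta H fs b t) - f b‖ ≤ 2*M := by
      calc ‖f (beta H fs b t) - f b‖ ≤ ‖f (beta H fs b t)‖ + ‖f b‖ := norm_sub_le _ _
        _ ≤ 2*M := by linarith
    have hrel : max 0 (‖ucap H f fs b t - f b‖ - th t) ≤ M := by
      refine max_le hM ?_
      have h1 : ‖ucap H f fs b t - f b‖ ≤ th t + M := by
        calc ‖ucap H f fs b t - f b‖ ≤ ‖ucap H f fs b t‖ + ‖f b‖ := norm_sub_le _ _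
          _ ≤ th t + M := add_le_add hucap.1 hfb
      linarith
    have hRad : Rad H f fs b t ≤ 2*M + 1 + M := by
      unfold Rad
      have := sig_le_one t
      linarith
    calc ‖vv H f fs b t‖ = ‖f b + (vv H f fs b t - f b)‖ := by congr 1; abel
      _ ≤ ‖f b‖ + ‖vv H f fs b t - f b‖ := norm_add_le _ _
      _ ≤ M + (2*M + 1 + M) := add_le_add hfb (hvfb.1.trans hRad)
      _ = 4*M + 1 := by ring

end Sel2

section POU
variable {ι T : Type*} [TopologicalSpace T]
open scoped Classical

/-- transfer of pointwise bounds through a partition of unity. -/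
lemma pou_bound (ρ : PartitionOfUnity ι T univ) (V : ι → Z) (x : T) (c : Z) (w C : ℝ)
    (hw : 0 ≤ w) (hC : 0 ≤ C) (h : ∀ i, ρ i x ≠ 0 → ‖V i - c‖ * w ≤ C) :
    ‖(∑ᶠ i, ρ i x • V i) - c‖ * w ≤ C := by
  have hfin : {i | ρ i x ≠ 0}.Finite := ρ.locallyFinite.point_finite x
  set s : Finset ι := hfin.toFinset with hs
  have hsub : (Function.support fun i => ρ i x • V i) ⊆ s := by
    intro i hi
    simp only [hs, Finset.mem_coe, Set.Finite.mem_toFinset, mem_setOf_eq]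
    rw [Function.mem_support] at hi
    intro h0
    exact hi (by simp [h0])
  have hsub2 : (Function.support fun i => ρ i x) ⊆ s := by
    intro i hi
    simp only [hs, Finset.mem_coe, Set.Finite.mem_toFinset, mem_setOf_eq]
    exact hi
  have h1 : (∑ᶠ i, ρ i x • V i) = ∑ i ∈ s, ρ i x • V i :=
    finsum_eq_sum_of_support_subset _ hsub
  have h2 : (∑ i ∈ s, ρ i x) = 1 := by
    rw [← finsum_eq_sum_of_support_subset _ hsub2]
    exact ρ.sum_eq_one (mem_univ x)
  have h3 : (∑ᶠ i, ρ i x • V i) - c = ∑ i ∈ s, ρ i x • (V i - c) := by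
    rw [h1]
    calc (∑ i ∈ s, ρ i x • V i) - c = (∑ i ∈ s, ρ i x • V i) - (∑ i ∈ s, ρ i x) • c := by
          rw [h2, one_smul]
      _ = ∑ i ∈ s, (ρ i x • V i - ρ i x • c) := by
          rw [Finset.sum_smul, ← Finset.sum_sub_distrib]
      _ = ∑ i ∈ s, ρ i x • (V i - c) := by
          refine Finset.sum_congr rfl fun i _ => ?_
          rw [smul_sub]
  rw [h3]
  calc ‖∑ i ∈ s, ρ i x • (V i - c)‖ * w ≤ (∑ i ∈ s, ρ i x * ‖V i - c‖) * w := by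
        refine mul_le_mul_of_nonneg_right ?_ hw
        refine (norm_sum_le _ _).trans ?_
        refine Finset.sum_le_sum fun i _ => ?_
        rw [norm_smul, Real.norm_eq_abs, abs_of_nonneg (ρ.nonneg i x)]
    _ = ∑ i ∈ s, ρ i x * (‖V i - c‖ * w) := by
        rw [Finset.sum_mul]
        exact Finset.sum_congr rfl fun i _ => by ring
    _ ≤ ∑ i ∈ s, ρ i x * C := by
        refine Finset.sum_le_sum fun i hi => ?_
        by_cases h0 : ρ i x = 0
        · simp [h0]
        · exact mul_le_mul_of_nonneg_left (h i h0) (ρ.nonneg i x)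
    _ = C := by rw [← Finset.sum_mul, h2, one_mul]

end POU

section Geom
variable (H : Set X)

/-- Whitney-type geometric relations for active indices. -/
lemma geom (hH : IsClosed H) {x : X} (hx : x ∉ H) {p : X} (hp : p ∉ H)
    {t : ℝ} (htp : t = infDist p H) (hdist : dist x p < t / 8) (ht : 0 < t)
    {b : X} (hb : dist p b ≤ (9/8) * t) (a : X) (ha : a ∈ H) :
    0 < t ∧ t ≤ (8/7) * infDist x H ∧ infDist x H ≤ (9/8) * t ∧ dist b x ≤ (5/4) * t ∧
      infDist x H ≤ dist x a ∧ dist b a ≤ 3 * dist x a ∧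
      (infDist x H / dist x a) * dist b a ≤ 3 * t ∧ infDist x H / dist x a ≤ 1 := by
  set rx := infDist x H with hrx
  set D := dist x a with hD
  have hrx1 : rx ≤ t + dist x p := by
    rw [htp]
    exact infDist_le_infDist_add_dist
  have hrx2 : t ≤ rx + dist p x := by
    rw [htp]
    exact infDist_le_infDist_add_dist
  rw [dist_comm p x] at hrx2
  have h1 : rx ≤ (9/8) * t := by linarith
  have h2 : (7/8) * t ≤ rx := by linarith
  have h3 : t ≤ (8/7) * rx := by linarith
  have hbx : dist b x ≤ (5/4) * t := by
    calc dist b x ≤ dist b p + dist p x := dist_triangle _ _ _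
      _ ≤ (9/8) * t + t/8 := by
          rw [dist_comm b p, dist_comm p x]
          exact add_le_add hb hdist.le
      _ = (5/4) * t := by ring
  have hrxD : rx ≤ D := infDist_le_dist_of_mem ha
  have hD : 0 < D := by
    rw [dist_pos]
    intro h
    exact hx (h ▸ ha)
  have hba : dist b a ≤ 3 * D := by
    calc dist b a ≤ dist b x + dist x a := dist_triangle _ _ _
      _ ≤ (5/4) * t + D := add_le_add hbx (le_refl _)
      _ ≤ (5/4) * ((8/7) * rx) + D := by
          refine add_le_add (mul_le_mul_of_nonneg_left h3 (by norm_num)) (le_refl _)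
      _ ≤ (5/4) * ((8/7) * D) + D := by
          refine add_le_add (mul_le_mul_of_nonneg_left
            (mul_le_mul_of_nonneg_left hrxD (by norm_num)) (by norm_num)) (le_refl _)
      _ ≤ 3 * D := by linarith
  have hW1 : rx / D ≤ 1 := div_le_one_of_le₀ hrxD hD.le
  have hWd : (rx / D) * dist b a ≤ 3 * t := by
    have h5 : (rx / D) * dist b a ≤ (rx / D) * ((5/4) * t + D) := by
      refine mul_le_mul_of_nonneg_left ?_ (div_nonneg (infDist_nonneg) dist_nonneg)
      calc dist b a ≤ dist b x + dist x a := dist_triangle _ _ _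
        _ ≤ (5/4) * t + D := add_le_add hbx (le_refl _)
    have h6 : (rx / D) * ((5/4) * t + D) = (5/4) * t * (rx/D) + rx := by
      field_simp
    have h7 : (5/4) * t * (rx/D) ≤ (5/4) * t * 1 :=
      mul_le_mul_of_nonneg_left hW1 (by linarith)
    calc (rx / D) * dist b a ≤ (5/4) * t * (rx/D) + rx := by rw [← h6]; exact h5
      _ ≤ (5/4) * t + (9/8) * t := by
          refine add_le_add ?_ h1
          linarith
      _ ≤ 3 * t := by linarith
  exact ⟨ht, h3, h1, hbx, hrxD, hba, hWd, hW1⟩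

end Geom

lemma th_anti {s t : ℝ} (hs : 0 < s) (h : s ≤ t) : th t ≤ th s := by
  have h1 : Real.sqrt (Real.sqrt s) ≤ Real.sqrt (Real.sqrt t) :=
    Real.sqrt_le_sqrt (Real.sqrt_le_sqrt h)
  have h2 : 0 < Real.sqrt (Real.sqrt s) := Real.sqrt_pos.2 (Real.sqrt_pos.2 hs)
  exact inv_anti₀ h2 h1

section Main
variable (H : Set X) (f : ↥H → Z) (fs : ℕ → ↥H → Z)

/-- Whitney radius -/
def riF (i : ↥(Hᶜ : Set X)) : ℝ := infDist (i : X) H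

lemma riF_pos (hH : IsClosed H) (hne : H.Nonempty) (i : ↥(Hᶜ : Set X)) : 0 < riF H i :=
  (hH.notMem_iff_infDist_pos hne).1 i.2

/-- near point selection -/
noncomputable def aiF (hH : IsClosed H) (hne : H.Nonempty) (i : ↥(Hᶜ : Set X)) : ↥H := by
  have hex : ∃ y ∈ H, dist (i : X) y < (9/8) * riF H i := by
    refine (infDist_lt_iff hne).1 ?_
    have := riF_pos H hH hne i
    have heq : infDist (i : X) H = riF H i := rfl
    rw [heq]; linarith
  exact ⟨hex.choose, hex.choose_spec.1⟩

lemma aiF_dist (hH : IsClosed H) (hne : H.Nonempty) (i : ↥(Hᶜ : Set X)) :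
    dist (i : X) (aiF H hH hne i : X) ≤ (9/8) * riF H i := by
  unfold aiF
  generalize_proofs h
  exact h.choose_spec.2.le

/-- the value attached to a Whitney index -/
noncomputable def ValF (hH : IsClosed H) (hne : H.Nonempty) (i : ↥(Hᶜ : Set X)) : Z :=
  vv H f fs (aiF H hH hne i) (riF H i)

/-- the Whitney cover -/
def UF (i : ↥(Hᶜ : Set X)) : Set ↥(Hᶜ : Set X) :=
  Subtype.val ⁻¹' (ball (i : X) (riF H i / 8))

lemma UF_open (i : ↥(Hᶜ : Set X)) : IsOpen (UF H i) :=
  isOpen_ball.preimage continuous_subtype_val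

lemma UF_cover (hH : IsClosed H) (hne : H.Nonempty) :
    (univ : Set ↥(Hᶜ : Set X)) ⊆ ⋃ i, UF H i := by
  intro y _
  refine mem_iUnion.2 ⟨y, ?_⟩
  have := riF_pos H hH hne y
  simp only [UF, mem_preimage, mem_ball, dist_self]
  linarith

/-- master transfer: pointwise estimates on admissible pairs give bounds on the glued sum. -/
lemma master (hH : IsClosed H) (hne : H.Nonempty)
    (ρ : PartitionOfUnity ↥(Hᶜ : Set X) ↥(Hᶜ : Set X) univ)
    (hρ : ρ.IsSubordinate (UF H)) (x : X) (hx : x ∈ (Hᶜ : Set X)) (c : Z) (w C : ℝ)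
    (hw : 0 ≤ w) (hC : 0 ≤ C)
    (h : ∀ i : ↥(Hᶜ : Set X), dist x (i : X) < riF H i / 8 →
      ‖ValF H f fs hH hne i - c‖ * w ≤ C) :
    ‖(∑ᶠ i, ρ i ⟨x, hx⟩ • ValF H f fs hH hne i) - c‖ * w ≤ C := by
  refine pou_bound ρ _ _ c w C hw hC ?_
  intro i hi
  refine h i ?_
  have h1 : (⟨x, hx⟩ : ↥(Hᶜ : Set X)) ∈ UF H i := by
    refine hρ i (subset_closure ?_)
    rw [Function.mem_support]
    exact hi
  simpa only [UF, mem_preimage, mem_ball] using h1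

end Main
end BOE

end

/-- Extension theorem for vector-valued Baire one functions, with
non-tangential limits (NT), preservation of continuity points (C),
and preservation of local boundedness (B). -/
theorem baire_one_extension {X Z : Type*} [MetricSpace X]
    [NormedAddCommGroup Z] [NormedSpace ℝ Z]
    (H : Set X) (hH : IsClosed H) (f : H → Z) (hf : IsBaireOne f) :
    ∃ g : X → Z, ContinuousOn g Hᶜ ∧
      -- (NT)
      (∀ a, ∀ ha : a ∈ frontier H,
        Tendsto (fun x => ‖g x - f ⟨a, hH.frontier_subset ha⟩‖ * (infDist x H / dist x a))
          (nhdsWithin a Hᶜ) (nhds 0)) ∧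
      -- (C)
      (∀ a, ∀ ha : a ∈ frontier H, ContinuousAt f ⟨a, hH.frontier_subset ha⟩ →
        Tendsto g (nhdsWithin a Hᶜ) (nhds (f ⟨a, hH.frontier_subset ha⟩))) ∧
      -- (B)
      (∀ a ∈ H, ∀ r : ℝ≥0∞, 0 < r →
        (∃ M : ℝ, ∀ y : H, (y : X) ∈ EMetric.ball a (12 * r) → ‖f y‖ ≤ M) →
        ∃ M : ℝ, ∀ x ∈ EMetric.ball a r \ H, ‖g x‖ ≤ M) := by
  classical
  obtain ⟨fs, hfc, hfp⟩ := hf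
  rcases H.eq_empty_or_nonempty with hemp | hne
  · refine ⟨0, continuousOn_const, ?_, ?_, ?_⟩
    · intro a ha
      rw [hemp, frontier_empty] at ha
      exact absurd ha (Set.notMem_empty a)
    · intro a ha
      rw [hemp, frontier_empty] at ha
      exact absurd ha (Set.notMem_empty a)
    · intro a haH
      rw [hemp] at haH
      exact absurd haH (Set.notMem_empty a)
  · obtain ⟨ρ, hρ⟩ := PartitionOfUnity.exists_isSubordinate isClosed_univ (BOE.UF H)
      (BOE.UF_open H) (BOE.UF_cover H hH hne)
    set g : X → Z := fun x => if hx : x ∈ (Hᶜ : Set X) then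
      (∑ᶠ i, ρ i ⟨x, hx⟩ • BOE.ValF H f fs hH hne i) else 0 with hgdef
    have hgeq : ∀ (x : X) (hx : x ∈ (Hᶜ : Set X)),
        g x = ∑ᶠ i, ρ i ⟨x, hx⟩ • BOE.ValF H f fs hH hne i := by
      intro x hx
      rw [hgdef]
      exact dif_pos hx
    have hgc : ContinuousOn g (Hᶜ : Set X) := by
      rw [continuousOn_iff_continuous_restrict]
      have hres : (Hᶜ : Set X).domRestrict g =
          fun y : ↥(Hᶜ : Set X) => ∑ᶠ i, ρ i y • BOE.ValF H f fs hH hne i := by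
        funext y
        have := hgeq (y : X) y.2
        rw [Set.domRestrict_apply, this, Subtype.coe_eta]
      rw [hres]
      exact ρ.continuous_finsum_smul (fun i x _ => continuousAt_const)
    -- master per-point estimate
    have hmaster : ∀ (x : X) (hx : x ∈ (Hᶜ : Set X)) (c : Z) (w C : ℝ), 0 ≤ w → 0 ≤ C →
        (∀ i : ↥(Hᶜ : Set X), dist x (i : X) < BOE.riF H i / 8 →
          ‖BOE.ValF H f fs hH hne i - c‖ * w ≤ C) →
        ‖g x - c‖ * w ≤ C := by
      intro x hx c w C hw hC h
      rw [hgeq x hx]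
      exact BOE.master H f fs hH hne ρ hρ x hx c w C hw hC h
    refine ⟨g, hgc, ?_, ?_, ?_⟩
    · -- (NT)
      intro a ha
      have haH : a ∈ H := hH.frontier_subset ha
      set a' : ↥H := ⟨a, haH⟩ with ha'
      rw [Metric.tendsto_nhdsWithin_nhds]
      intro ε hε
      have hε2 : 0 < ε/2 := by linarith
      obtain ⟨δA, hδA, hA⟩ := BOE.estA' H f fs hfc hfp a' hε2
      obtain ⟨δB, hδB, hB⟩ := BOE.estB' H f fs a' hε2
      refine ⟨(7/8) * min δA δB, by positivity, ?_⟩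
      intro x hx hxa
      have hxH : x ∉ H := hx
      have hDpos : 0 < dist x a := dist_pos.2 (fun h => hxH (h ▸ haH))
      have hW0 : (0:ℝ) ≤ infDist x H / dist x a := div_nonneg infDist_nonneg dist_nonneg
      have key : ∀ i : ↥(Hᶜ : Set X), dist x (i : X) < BOE.riF H i / 8 →
          ‖BOE.ValF H f fs hH hne i - f a'‖ * (infDist x H / dist x a) ≤ ε/2 := by
        intro i hdi
        obtain ⟨ht, ht87, hrx98, hbx, hrxD, hba, hWd, hW1⟩ :=
          BOE.geom H hH hxH i.2 rfl hdi (BOE.riF_pos H hH hne i)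
            (BOE.aiF_dist H hH hne i) a haH
        have htδ : BOE.riF H i ≤ min δA δB := by
          calc BOE.riF H i ≤ (8/7) * infDist x H := ht87
            _ ≤ (8/7) * dist x a := by linarith [hrxD]
            _ ≤ (8/7) * ((7/8) * min δA δB) := by
                refine mul_le_mul_of_nonneg_left hxa.le (by norm_num)
            _ = min δA δB := by ring
        by_cases hcase : dist (BOE.aiF H hH hne i : X) (a' : X) ≤ BOE.sig (BOE.riF H i)
        · have h1 := hA (BOE.aiF H hH hne i) (BOE.riF H i) (BOE.riF_pos H hH hne i)
            (htδ.trans (min_le_left _ _)) hcase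
          calc ‖BOE.ValF H f fs hH hne i - f a'‖ * (infDist x H / dist x a)
              ≤ (ε/2) * 1 := mul_le_mul h1 hW1 hW0 hε2.le
            _ = ε/2 := mul_one _
        · push_neg at hcase
          exact hB (BOE.aiF H hH hne i) (BOE.riF H i) (infDist x H / dist x a)
            (BOE.riF_pos H hH hne i) (htδ.trans (min_le_right _ _)) hcase hW0 hWd
      have hbound := hmaster x hx (f a') (infDist x H / dist x a) (ε/2) hW0 hε2.le key
      rw [Real.dist_eq, sub_zero, abs_of_nonneg (mul_nonneg (norm_nonneg _) hW0)]
      linarith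
    · -- (C)
      intro a ha hca
      have haH : a ∈ H := hH.frontier_subset ha
      set a' : ↥H := ⟨a, haH⟩ with ha'
      rw [Metric.tendsto_nhdsWithin_nhds]
      intro ε hε
      have hε2 : 0 < ε/2 := by linarith
      obtain ⟨δC, hδC, hC⟩ := BOE.estC' H f fs hfp a' hca hε2
      refine ⟨δC/3, by positivity, ?_⟩
      intro x hx hxa
      have hxH : x ∉ H := hx
      have key : ∀ i : ↥(Hᶜ : Set X), dist x (i : X) < BOE.riF H i / 8 →
          ‖BOE.ValF H f fs hH hne i - f a'‖ * 1 ≤ ε/2 := by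
        intro i hdi
        obtain ⟨ht, ht87, hrx98, hbx, hrxD, hba, hWd, hW1⟩ :=
          BOE.geom H hH hxH i.2 rfl hdi (BOE.riF_pos H hH hne i)
            (BOE.aiF_dist H hH hne i) a haH
        rw [mul_one]
        refine hC (BOE.aiF H hH hne i) (BOE.riF H i) (BOE.riF_pos H hH hne i) ?_ ?_
        · calc BOE.riF H i ≤ (8/7) * infDist x H := ht87
            _ ≤ (8/7) * dist x a := by linarith [hrxD]
            _ ≤ (8/7) * (δC/3) := by
                refine mul_le_mul_of_nonneg_left hxa.le (by norm_num)
            _ ≤ δC := by linarith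
        · calc dist (BOE.aiF H hH hne i : X) (a' : X) ≤ 3 * dist x a := hba
            _ ≤ 3 * (δC/3) := by
                refine mul_le_mul_of_nonneg_left hxa.le (by norm_num)
            _ = δC := by ring
      have hbound := hmaster x hx (f a') 1 (ε/2) zero_le_one hε2.le key
      rw [mul_one] at hbound
      rw [dist_eq_norm]
      linarith
    · -- (B)
      intro a haH r hr hMbd
      obtain ⟨M, hM⟩ := hMbd
      have hM0 : (0:ℝ) ≤ max M 0 := le_max_right _ _
      set M0 := max M 0 with hM0def
      have hMg : ∀ y : ↥H, (y : X) ∈ EMetric.ball a (12 * r) → ‖f y‖ ≤ M0 :=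
        fun y hy => (hM y hy).trans (le_max_left _ _)
      by_cases hrtop : r = ⊤
      · -- infinite radius: global bound
        refine ⟨4 * M0 + 1, ?_⟩
        rintro x ⟨hx1, hx2⟩
        have hxc : x ∈ (Hᶜ : Set X) := hx2
        have key : ∀ i : ↥(Hᶜ : Set X), dist x (i : X) < BOE.riF H i / 8 →
            ‖BOE.ValF H f fs hH hne i - 0‖ * 1 ≤ 4 * M0 + 1 := by
          intro i hdi
          rw [mul_one, sub_zero]
          have hglob : ∀ y : ↥H, ‖f y‖ ≤ M0 := by
            intro y
            refine hMg y ?_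
            rw [EMetric.ball, Metric.mem_eball, hrtop]
            exact lt_of_lt_of_le (edist_lt_top _ _) (by simp)
          exact (BOE.estBd H f fs hfp (BOE.riF_pos H hH hne i) hM0
            (hglob _)).2 (fun y _ => hglob y)
        have hbound := hmaster x hxc 0 1 (4 * M0 + 1) zero_le_one (by linarith) key
        rw [mul_one, sub_zero] at hbound
        exact hbound
      · -- finite radius
        have hrt : 0 < r.toReal := ENNReal.toReal_pos hr.ne' hrtop
        set rt := r.toReal with hrt'
        refine ⟨max (4 * M0 + 1) (2 * M0 + BOE.th ((5*rt)^2)), ?_⟩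
        rintro x ⟨hx1, hx2⟩
        have hxc : x ∈ (Hᶜ : Set X) := hx2
        have hxH : x ∉ H := hx2
        have hxd : dist x a < rt := by
          rw [EMetric.ball, Metric.mem_eball, edist_dist] at hx1
          exact (ENNReal.ofReal_lt_iff_lt_toReal dist_nonneg hrtop).1 hx1
        have hinball : ∀ y : X, dist y a < 12 * rt → ENNReal.ofReal (dist y a) < 12 * r := by
          intro y hy
          have h12 : ((12:ℝ≥0∞) * r) ≠ ⊤ := by
            exact ENNReal.mul_ne_top (by simp) hrtop
          rw [ENNReal.ofReal_lt_iff_lt_toReal dist_nonneg h12]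
          rw [ENNReal.toReal_mul]
          simpa using hy
        have key : ∀ i : ↥(Hᶜ : Set X), dist x (i : X) < BOE.riF H i / 8 →
            ‖BOE.ValF H f fs hH hne i - 0‖ * 1 ≤
              max (4 * M0 + 1) (2 * M0 + BOE.th ((5*rt)^2)) := by
          intro i hdi
          rw [mul_one, sub_zero]
          simp only [BOE.ValF]
          obtain ⟨ht, ht87, hrx98, hbx, hrxD, hba, hWd, hW1⟩ :=
            BOE.geom H hH hxH i.2 rfl hdi (BOE.riF_pos H hH hne i)
              (BOE.aiF_dist H hH hne i) a haH
          have hfb : ‖f (BOE.aiF H hH hne i)‖ ≤ M0 := by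
            refine hMg _ ?_
            rw [EMetric.ball, Metric.mem_eball, edist_dist]
            refine hinball _ ?_
            calc dist (BOE.aiF H hH hne i : X) a ≤ 3 * dist x a := hba
              _ < 3 * rt := by linarith
              _ < 12 * rt := by linarith
          by_cases hcase : BOE.riF H i ≤ (5*rt)^2
          · -- small scale: the search ball stays inside the 12r ball
            refine le_trans ?_ (le_max_left _ _)
            refine (BOE.estBd H f fs hfp (BOE.riF_pos H hH hne i) hM0 hfb).2 ?_
            intro y hy
            refine hMg y ?_
            rw [EMetric.ball, Metric.mem_eball, edist_dist]
            refine hinball _ ?_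
            have hsig : BOE.sig (BOE.riF H i) ≤ 5 * rt := by
              refine (BOE.sig_le_sqrt _).trans ?_
              exact BOE.sqrt_le_of (by positivity) hcase
            calc dist (y : X) a ≤ dist (y : X) (BOE.aiF H hH hne i : X)
                  + dist (BOE.aiF H hH hne i : X) a := dist_triangle _ _ _
              _ ≤ 5 * rt + 3 * dist x a := add_le_add (hy.trans hsig) hba
              _ < 5 * rt + 3 * rt := by linarith
              _ < 12 * rt := by linarith
          · push_neg at hcase
            refine le_trans ?_ (le_max_right _ _)
            have h1 := (BOE.estBd H f fs hfp (BOE.riF_pos H hH hne i) hM0 hfb).1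
            have h2 : BOE.th (BOE.riF H i) ≤ BOE.th ((5*rt)^2) :=
              BOE.th_anti (by positivity) hcase.le
            linarith
        have hbound := hmaster x hxc 0 1 _ zero_le_one
          (le_trans (by linarith) (le_max_left (4*M0+1) (2 * M0 + BOE.th ((5*rt)^2)))) key
        rw [mul_one, sub_zero] at hbound
        exact hbound
end
end

section
/- Let (X,d) be a metric space, H ⊂ X a closed set, Z a normed linear space and f : H → Z a Baire one function. Then there exists a continuous function g : (X \ H) → Z such that for every a ∈ ∂H the non-tangential limit condition holds: lim_{x→a, x∈X\H} ‖g(x) − f(a)‖ · dist(x,H)/d(x,a) = 0. -/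
open Filter Topology Metric

set_option maxHeartbeats 2000000 in
/-- Extension theorem for vector-valued Baire one functions with
non-tangential limits. -/
theorem baire_one_extension_nontangential {X Z : Type*} [MetricSpace X]
    [NormedAddCommGroup Z] [NormedSpace ℝ Z]
    (H : Set X) (hH : IsClosed H) (f : H → Z) (hf : IsBaireOne f) :
    ∃ g : X → Z, ContinuousOn g Hᶜ ∧
      ∀ a, ∀ ha : a ∈ frontier H,
        Tendsto (fun x => ‖g x - f ⟨a, hH.frontier_subset ha⟩‖ * (infDist x H / dist x a))
          (nhdsWithin a Hᶜ) (nhds 0) := by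
  classical
  obtain ⟨u, hu_cont, hu_tend⟩ := hf
  rcases H.eq_empty_or_nonempty with hHe | hHne
  · refine ⟨0, continuousOn_const, ?_⟩
    intro a ha
    rw [hHe, frontier_empty] at ha
    exact absurd ha (Set.notMem_empty a)
  -- notation
  have hD : ∀ y : ↥Hᶜ, 0 < infDist (y : X) H := fun y =>
    (hH.notMem_iff_infDist_pos hHne).1 y.2
  set D : ↥Hᶜ → ℝ := fun y => infDist (y : X) H with hDdef
  -- choose near points in H
  have hsel : ∀ y : ↥Hᶜ, ∃ p : H, dist (y : X) (p : X) < 2 * D y := by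
    intro y
    have h2 : infDist (y : X) H < 2 * D y := by
      have := hD y; simp only [hDdef]; linarith
    obtain ⟨p, hpH, hp⟩ := (infDist_lt_iff hHne).1 h2
    exact ⟨⟨p, hpH⟩, hp⟩
  choose A hA using hsel
  -- the admissibility predicate and greatest admissible index
  set P : H → ℝ → ℕ → Prop := fun p ρ n =>
    (n : ℝ) ≤ 1 / ρ ∧ ∀ m ≤ n, ∀ q : H, dist (q : X) (p : X) ≤ (n : ℝ) * ρ →
      ‖u m q - u m p‖ ≤ 1 / (n : ℝ) with hPdef
  have hP0 : ∀ (p : H) (ρ : ℝ), 0 < ρ → P p ρ 0 := by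
    intro p ρ hρ
    refine ⟨by simpa using (by positivity : (0:ℝ) ≤ 1/ρ), ?_⟩
    intro m hm q hq
    interval_cases m
    have hq0 : dist (q : X) (p : X) ≤ 0 := by simpa using hq
    have : (q : X) = (p : X) := by
      have := dist_nonneg (x := (q : X)) (y := (p : X))
      exact dist_le_zero.1 hq0
    have hqp : q = p := Subtype.ext this
    simp [hqp]
  set NN : ↥Hᶜ → ℕ := fun y => Nat.findGreatest (P (A y) (D y)) ⌈1 / D y⌉₊ with hNNdef
  have hPN : ∀ y : ↥Hᶜ, P (A y) (D y) (NN y) := by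
    intro y
    exact Nat.findGreatest_spec (Nat.zero_le _) (hP0 (A y) (D y) (hD y))
  have hNge : ∀ (y : ↥Hᶜ) (M : ℕ), P (A y) (D y) M → M ≤ NN y := by
    intro y M hM
    refine Nat.le_findGreatest ?_ hM
    have h1 : (M : ℝ) ≤ 1 / D y := hM.1
    have h2 : (1 : ℝ) / D y ≤ ⌈1 / D y⌉₊ := Nat.le_ceil _
    exact_mod_cast h1.trans h2
  -- the values
  set z : ↥Hᶜ → Z := fun y =>
    if ‖u (NN y) (A y)‖ ≤ (Nat.sqrt (NN y) : ℝ) then u (NN y) (A y) else 0 with hzdef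
  have hznorm : ∀ y, ‖z y‖ ≤ (Nat.sqrt (NN y) : ℝ) := by
    intro y
    by_cases h : ‖u (NN y) (A y)‖ ≤ (Nat.sqrt (NN y) : ℝ)
    · simpa [hzdef, h] using h
    · simp [hzdef, h]
  -- Whitney-type cover of the open set Hᶜ
  set W : ↥Hᶜ → Set ↥Hᶜ := fun c => {x : ↥Hᶜ | dist (x : X) (c : X) < D c / 8} with hWdef
  have hWopen : ∀ c, IsOpen (W c) := by
    intro c
    have : W c = Subtype.val ⁻¹' Metric.ball (c : X) (D c / 8) := by
      ext x; simp [hWdef, Metric.mem_ball, Subtype.dist_eq]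
    rw [this]
    exact isOpen_ball.preimage continuous_subtype_val
  have hWcover : (Set.univ : Set ↥Hᶜ) ⊆ ⋃ c, W c := by
    intro x _
    exact Set.mem_iUnion.2 ⟨x, by simp [hWdef, hD x]; exact hD x⟩
  obtain ⟨φ, hφ⟩ := PartitionOfUnity.exists_isSubordinate isClosed_univ W hWopen hWcover
  -- the extension
  set g₀ : ↥Hᶜ → Z := fun x => ∑ᶠ c, φ c x • z c with hg₀def
  have hg₀cont : Continuous g₀ :=
    φ.continuous_finsum_smul (g := fun c => fun _ => z c)
      (fun c x _ => continuousAt_const)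
  set g : X → Z := fun x => if hx : x ∈ Hᶜ then g₀ ⟨x, hx⟩ else 0 with hgdef
  have hgres : ∀ y : ↥Hᶜ, g (y : X) = g₀ y := by
    intro y; simp only [hgdef, y.2, dif_pos]
  refine ⟨g, ?_, ?_⟩
  · rw [continuousOn_iff_continuous_restrict]
    have : Set.restrict Hᶜ g = g₀ := by
      funext y; exact hgres y
    rw [show Set.domRestrict Hᶜ g = g₀ from this]; exact hg₀cont
  intro a ha
  set aH : H := ⟨a, hH.frontier_subset ha⟩ with haHdef
  have haH : a ∈ H := hH.frontier_subset ha
  rw [Metric.tendsto_nhdsWithin_nhds]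
  intro ε hε
  -- constants at a
  obtain ⟨S₀, hS₀⟩ := ((hu_tend aH).norm).bddAbove_range
  set S : ℝ := max S₀ 0 with hSdef
  have hS0 : 0 ≤ S := le_max_right _ _
  have hS : ∀ n, ‖u n aH‖ ≤ S := fun n =>
    le_trans (hS₀ ⟨n, rfl⟩) (le_max_left _ _)
  set F : ℝ := ‖f aH‖ with hFdef
  have hF0 : 0 ≤ F := norm_nonneg _
  obtain ⟨N₁, hN₁⟩ : ∃ N₁ : ℕ, ∀ n ≥ N₁, ‖u n aH - f aH‖ ≤ ε / 8 := by
    obtain ⟨N₁, hN₁⟩ := (Metric.tendsto_atTop.1 (hu_tend aH)) (ε / 8) (by positivity)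
    exact ⟨N₁, fun n hn => by
      have := hN₁ n hn; rw [dist_eq_norm] at this; linarith⟩
  set N₂ : ℕ := (⌈12 / ε⌉₊ + 1) ^ 2 + ⌈12 * F / ε⌉₊ + 7 with hN₂def
  have hN₂sqrt : (12 : ℝ) / ε ≤ (Nat.sqrt N₂ : ℝ) := by
    have h1 : (⌈12 / ε⌉₊ + 1) ≤ Nat.sqrt N₂ := by
      rw [Nat.le_sqrt', hN₂def, add_assoc]
      exact Nat.le_add_right _ _
    have h2 : (12 : ℝ) / ε ≤ (⌈12 / ε⌉₊ : ℝ) + 1 := by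
      have := Nat.le_ceil (12 / ε); linarith
    calc (12 : ℝ) / ε ≤ (⌈12 / ε⌉₊ : ℝ) + 1 := h2
      _ = ((⌈12 / ε⌉₊ + 1 : ℕ) : ℝ) := by push_cast; ring
      _ ≤ (Nat.sqrt N₂ : ℝ) := by exact_mod_cast h1
  have hN₂F : (12 : ℝ) * F / ε ≤ (N₂ : ℝ) := by
    have h1 : ⌈12 * F / ε⌉₊ ≤ N₂ := by rw [hN₂def]; omega
    have := Nat.le_ceil (12 * F / ε)
    calc (12 : ℝ) * F / ε ≤ (⌈12 * F / ε⌉₊ : ℝ) := this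
      _ ≤ (N₂ : ℝ) := by exact_mod_cast h1
  have hN₂7 : 7 ≤ N₂ := by rw [hN₂def]; omega
  -- key numeric estimate for the "far" case
  have hsq2 : ∀ n : ℕ, N₂ ≤ n → ((Nat.sqrt n : ℝ) + F) * (3 / n) ≤ ε / 2 := by
    intro n hn
    have hn0 : 0 < n := lt_of_lt_of_le (by omega) hn
    have hn0' : (0 : ℝ) < n := by exact_mod_cast hn0
    have hs1 : 1 ≤ Nat.sqrt n := by
      have : Nat.sqrt N₂ ≤ Nat.sqrt n := Nat.sqrt_le_sqrt hn
      have h7 : 1 ≤ Nat.sqrt N₂ := by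
        rw [Nat.le_sqrt]; omega
      omega
    set s : ℝ := (Nat.sqrt n : ℝ) with hsdef
    have hs0 : (1 : ℝ) ≤ s := by rw [hsdef]; exact_mod_cast hs1
    have hss : s * s ≤ (n : ℝ) := by
      rw [hsdef]; exact_mod_cast Nat.sqrt_le n
    have hsε : 12 / ε ≤ s := by
      have : (Nat.sqrt N₂ : ℝ) ≤ s := by
        rw [hsdef]; exact_mod_cast Nat.sqrt_le_sqrt hn
      linarith [hN₂sqrt]
    have hnF : 12 * F / ε ≤ (n : ℝ) := by
      have : (N₂ : ℝ) ≤ (n : ℝ) := by exact_mod_cast hn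
      linarith [hN₂F]
    -- 3 s / n ≤ 3 / s and 3 F / n ≤ ε/4 and 3/s ≤ ε/4
    have h1 : 3 * s / n ≤ 3 / s := by
      rw [div_le_div_iff₀ hn0' (by linarith)]
      linarith [hss]
    have h2 : 3 / s ≤ ε / 4 := by
      rw [div_le_div_iff₀ (by linarith) (by norm_num)]
      have : 12 ≤ ε * s := by
        rw [div_le_iff₀ hε] at hsε; linarith
      linarith
    have h3 : 3 * F / n ≤ ε / 4 := by
      rw [div_le_div_iff₀ hn0' (by norm_num)]
      have : 12 * F ≤ ε * n := by
        rw [div_le_iff₀ hε] at hnF; linarith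
      linarith
    have : (s + F) * (3 / n) = 3 * s / n + 3 * F / n := by ring
    rw [this]
    linarith
  -- the tangential slope
  set Q : ℝ := (Nat.sqrt N₂ : ℝ) + F + S + 2 with hQdef
  have hQ0 : 0 < Q := by positivity
  set θ : ℝ := min (1 / 2) (ε / (2 * Q)) with hθdef
  have hθ0 : 0 < θ := lt_min (by norm_num) (by positivity)
  have hθQ : Q * θ ≤ ε / 2 := by
    have h1 : θ ≤ ε / (2 * Q) := min_le_right _ _
    calc Q * θ ≤ Q * (ε / (2 * Q)) := by
          exact mul_le_mul_of_nonneg_left h1 (le_of_lt hQ0)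
      _ = ε / 2 := by field_simp
  -- the big index
  set M : ℕ := N₁ + N₂ + ⌈5 / θ⌉₊ + ⌈8 / ε⌉₊ + (⌈S⌉₊ + 2) ^ 2 + 1 with hMdef
  have hM1 : 1 ≤ M := by rw [hMdef]; omega
  have hM0' : (0 : ℝ) < M := by exact_mod_cast lt_of_lt_of_le Nat.one_pos hM1
  have hMne : (M : ℝ) ≠ 0 := ne_of_gt hM0'
  have hMN₁ : N₁ ≤ M := by rw [hMdef]; omega
  have hM5θ : 5 / θ ≤ (M : ℝ) := by
    have h1 : ⌈5 / θ⌉₊ ≤ M := by rw [hMdef]; omega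
    exact le_trans (Nat.le_ceil _) (by exact_mod_cast h1)
  have hMε : (1 : ℝ) / M ≤ ε / 8 := by
    have h1 : ⌈8 / ε⌉₊ + 1 ≤ M := by rw [hMdef]; omega
    have h2 : (8 : ℝ) / ε < (M : ℝ) := by
      have h5 := Nat.le_ceil (8 / ε)
      have h3 : ((⌈8 / ε⌉₊ + 1 : ℕ) : ℝ) ≤ (M : ℝ) := by exact_mod_cast h1
      have h4 : (8 : ℝ) / ε < ((⌈8 / ε⌉₊ + 1 : ℕ) : ℝ) := by push_cast; linarith
      exact lt_of_lt_of_le h4 h3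
    rw [div_le_div_iff₀ hM0' (by norm_num)]
    rw [div_lt_iff₀ hε] at h2
    linarith
  have hMS : S + 2 ≤ (Nat.sqrt M : ℝ) := by
    have h1 : ⌈S⌉₊ + 2 ≤ Nat.sqrt M := by
      rw [Nat.le_sqrt', hMdef]
      omega
    have h2 : S ≤ (⌈S⌉₊ : ℝ) := Nat.le_ceil _
    have h3 : ((⌈S⌉₊ + 2 : ℕ) : ℝ) ≤ (Nat.sqrt M : ℝ) := by exact_mod_cast h1
    have h4 : S + 2 ≤ ((⌈S⌉₊ + 2 : ℕ) : ℝ) := by push_cast; linarith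
    linarith
  -- uniform continuity radius at aH for indices ≤ M
  have hcont : ∀ m : ℕ, ∃ rm > 0, ∀ q : H, dist (q : X) a < rm →
      ‖u m q - u m aH‖ ≤ 1 / (2 * M) := by
    intro m
    have hc := (hu_cont m).continuousAt (x := aH)
    rw [Metric.continuousAt_iff] at hc
    obtain ⟨δ, hδ0, hδ⟩ := hc (1 / (2 * M)) (by positivity)
    refine ⟨δ, hδ0, fun q hq => ?_⟩
    have hq' : dist q aH < δ := by
      rw [Subtype.dist_eq]; exact hq
    have := hδ hq'
    rw [dist_eq_norm] at this
    exact le_of_lt this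
  choose rr hrrpos hrr using hcont
  set r : ℝ := (Finset.range (M + 1)).inf' ⟨0, Finset.mem_range.2 (Nat.succ_pos M)⟩ rr with hrdef
  have hr0 : 0 < r := by
    exact (Finset.lt_inf'_iff (H := _)).2 (fun m _ => hrrpos m)
  have hrle : ∀ m ≤ M, r ≤ rr m := by
    intro m hm
    exact Finset.inf'_le _ (Finset.mem_range.2 (Nat.lt_succ_of_le hm))
  -- the final δ
  set δ : ℝ := min (1 / (2 * M)) (r / (4 * M + 8)) with hδdef
  have hδ0 : 0 < δ := lt_min (by positivity) (by positivity)
  have hδM : δ ≤ 1 / (2 * M) := min_le_left _ _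
  have hδr : δ ≤ r / (4 * M + 8) := min_le_right _ _
  clear_value S F N₂ Q θ M r δ
  refine ⟨δ, hδ0, ?_⟩
  intro x hx hxa
  set y₀ : ↥Hᶜ := ⟨x, hx⟩ with hy₀def
  have hxH : x ∉ H := hx
  have hxa0 : 0 < dist x a := by
    rw [dist_pos]; intro h; exact hxH (h ▸ haH)
  have hDx0 : 0 < infDist x H := hD y₀
  have hDxa : infDist x H ≤ dist x a := infDist_le_dist_of_mem haH
  have hratio1 : infDist x H / dist x a ≤ 1 := by
    rw [div_le_one hxa0]; exact hDxa
  have hrationn : 0 ≤ infDist x H / dist x a := by positivity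
  -- per piece estimate
  have key : ∀ c : ↥Hᶜ, φ c y₀ ≠ 0 →
      ‖z c - f aH‖ * (infDist x H / dist x a) ≤ ε / 2 := by
    intro c hc
    have hmemW : y₀ ∈ W c := hφ c (subset_closure (by exact hc))
    have hxc : dist x (c : X) < D c / 8 := hmemW
    have hDc : 0 < D c := hD c
    have h1 : infDist x H ≤ D c + dist x (c : X) := infDist_le_infDist_add_dist
    have h2 : D c ≤ infDist x H + dist x (c : X) := by
      have := infDist_le_infDist_add_dist (x := (c : X)) (y := x) (s := H)
      rw [dist_comm] at this
      exact this
    have hDc9 : infDist x H ≤ (9 / 8) * D c := by linarith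
    have hDc7 : D c ≤ (8 / 7) * infDist x H := by linarith
    have hAc := hA c
    have hxAc : dist x (A c : X) ≤ (17 / 8) * D c :=
      calc dist x (A c : X) ≤ dist x (c : X) + dist (c : X) (A c : X) := dist_triangle _ _ _
        _ ≤ (17 / 8) * D c := by linarith
    have hAa : dist (A c : X) a ≤ 4 * dist x a := by
      have h3 : dist (A c : X) a ≤ dist (A c : X) x + dist x a := dist_triangle _ _ _
      have h4 : dist (A c : X) x = dist x (A c : X) := dist_comm _ _
      have h5 : dist x (A c : X) ≤ (17 / 8) * ((8 / 7) * infDist x H) := by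
        calc dist x (A c : X) ≤ (17 / 8) * D c := hxAc
          _ ≤ (17 / 8) * ((8 / 7) * infDist x H) := by linarith
      linarith
    have hPNc := hPN c
    by_cases hcone : θ * dist x a ≤ infDist x H
    · -- nontangential piece
      have hDcδ : D c < 2 * δ := by
        have : D c ≤ (8 / 7) * infDist x H := hDc7
        have h6 : infDist x H ≤ dist x a := hDxa
        linarith [hxa, hδ0]
      have hMP : P (A c) (D c) M := by
        constructor
        · -- (M : ℝ) ≤ 1 / D c
          rw [le_div_iff₀ hDc]
          have hM0 : (0 : ℝ) ≤ (M : ℝ) := le_of_lt hM0'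
          have h6 : (M : ℝ) * D c ≤ (M : ℝ) * (2 * δ) :=
            mul_le_mul_of_nonneg_left (le_of_lt hDcδ) hM0
          have h7 : (M : ℝ) * (2 * δ) ≤ (M : ℝ) * (2 * (1 / (2 * M))) :=
            mul_le_mul_of_nonneg_left (by linarith) hM0
          have h8 : (M : ℝ) * (2 * (1 / (2 * M))) = 1 := by field_simp
          linarith
        · intro m hm q hq
          have hqa : dist (q : X) a < r := by
            have h9 : dist (q : X) a ≤ dist (q : X) (A c : X) + dist (A c : X) a :=
              dist_triangle _ _ _
            have h10 : dist (q : X) (A c : X) ≤ (M : ℝ) * D c := hq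
            have h11 : (M : ℝ) * D c ≤ (M : ℝ) * (2 * δ) :=
              mul_le_mul_of_nonneg_left (le_of_lt hDcδ) (le_of_lt hM0')
            have h12 : dist (A c : X) a ≤ 4 * δ := by linarith [hAa, hxa]
            have h13 : (2 * (M : ℝ) + 4) * δ ≤ r / 2 := by
              have h13a : (2 * (M : ℝ) + 4) * δ ≤ (2 * (M : ℝ) + 4) * (r / (4 * M + 8)) :=
                mul_le_mul_of_nonneg_left hδr (by positivity)
              have he : (2 * (M : ℝ) + 4) * (r / (4 * M + 8)) = r / 2 := by
                field_simp; ring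
              linarith
            linarith
          have hAca : dist (A c : X) a < r := by
            have h12 : dist (A c : X) a ≤ 4 * δ := by linarith [hAa, hxa]
            have h13 : 4 * δ ≤ 4 * (r / (4 * M + 8)) := by linarith [hδr]
            have h14 : 4 * (r / (4 * M + 8)) < r := by
              have hlt : (4 : ℝ) / (4 * M + 8) < 1 := by
                rw [div_lt_one (by positivity)]
                linarith [hM0']
              have he : 4 * (r / (4 * M + 8)) = (4 / (4 * (M : ℝ) + 8)) * r := by ring
              rw [he]
              calc (4 / (4 * (M : ℝ) + 8)) * r < 1 * r := by
                    exact mul_lt_mul_of_pos_right hlt hr0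
                _ = r := one_mul r
            linarith
          have hb1 := hrr m q (lt_of_lt_of_le hqa (hrle m hm))
          have hb2 := hrr m (A c) (lt_of_lt_of_le hAca (hrle m hm))
          have htri : ‖u m q - u m (A c)‖ ≤ ‖u m q - u m aH‖ + ‖u m (A c) - u m aH‖ := by
            have : u m q - u m (A c) = (u m q - u m aH) - (u m (A c) - u m aH) := by abel
            rw [this]
            exact norm_sub_le _ _
          have hsum : (1 : ℝ) / (2 * M) + 1 / (2 * M) = 1 / M := by
            field_simp [hMne]; norm_num
          calc ‖u m q - u m (A c)‖ ≤ 1 / (2 * M) + 1 / (2 * M) := by linarith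
            _ = 1 / (M : ℝ) := hsum
      have hMN : M ≤ NN c := hNge c M hMP
      have hNN0 : 0 < NN c := lt_of_lt_of_le (lt_of_lt_of_le Nat.zero_lt_one hM1) hMN
      have hNN0' : (0 : ℝ) < (NN c : ℝ) := by exact_mod_cast hNN0
      -- distance from aH to A c is within the oscillation radius
      have hnear : dist (aH : X) (A c : X) ≤ (NN c : ℝ) * D c := by
        have h15 : dist (aH : X) (A c : X) = dist (A c : X) a := by
          rw [dist_comm]
        -- multiply goal through by θ > 0
        have h16 : θ * dist (A c : X) a ≤ θ * (4 * dist x a) :=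
          mul_le_mul_of_nonneg_left hAa (le_of_lt hθ0)
        have h17 : θ * (4 * dist x a) = 4 * (θ * dist x a) := by ring
        have h18 : 4 * (θ * dist x a) ≤ 4 * infDist x H := by linarith [hcone]
        have h19 : (4 : ℝ) * infDist x H ≤ (9 / 2) * D c := by linarith [hDc9]
        have h20 : (5 : ℝ) ≤ θ * M := by
          have h20a : (5 / θ) * θ ≤ (M : ℝ) * θ :=
            mul_le_mul_of_nonneg_right hM5θ (le_of_lt hθ0)
          have h20b : (5 / θ) * θ = 5 := by field_simp
          linarith [h20a, h20b.symm.le]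
        have h21 : θ * (M : ℝ) ≤ θ * (NN c : ℝ) := by
          have : (M : ℝ) ≤ (NN c : ℝ) := by exact_mod_cast hMN
          exact mul_le_mul_of_nonneg_left this (le_of_lt hθ0)
        have h22 : (5 : ℝ) * D c ≤ (θ * (NN c : ℝ)) * D c := by
          have : (5 : ℝ) ≤ θ * (NN c : ℝ) := by linarith
          exact mul_le_mul_of_nonneg_right this (le_of_lt hDc)
        have h23 : θ * dist (A c : X) a ≤ θ * ((NN c : ℝ) * D c) := by
          have h24 : (9 / 2) * D c ≤ 5 * D c := by linarith [hDc]
          calc θ * dist (A c : X) a ≤ 4 * (θ * dist x a) := by linarith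
            _ ≤ 4 * infDist x H := h18
            _ ≤ (9 / 2) * D c := h19
            _ ≤ 5 * D c := h24
            _ ≤ (θ * (NN c : ℝ)) * D c := h22
            _ = θ * ((NN c : ℝ) * D c) := by ring
        rw [h15]
        exact le_of_mul_le_mul_left (by linarith [h23]) hθ0
      have hosc := hPNc.2 (NN c) le_rfl aH hnear
      -- ‖u (NN c) aH - u (NN c) (A c)‖ ≤ 1 / NN c ≤ 1/M ≤ ε/8
      have hNM : (1 : ℝ) / (NN c : ℝ) ≤ 1 / (M : ℝ) := by
        apply one_div_le_one_div_of_le hM0'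
        exact_mod_cast hMN
      have hoscε : ‖u (NN c) aH - u (NN c) (A c)‖ ≤ ε / 8 := le_trans hosc (le_trans hNM hMε)
      have hclose : ‖u (NN c) aH - f aH‖ ≤ ε / 8 := hN₁ (NN c) (le_trans hMN₁ hMN)
      -- the value is not truncated
      have hVle : ‖u (NN c) (A c)‖ ≤ S + 1 := by
        have h21 : ‖u (NN c) (A c)‖ ≤ ‖u (NN c) (A c) - u (NN c) aH‖ + ‖u (NN c) aH‖ := by
          have h21a := norm_add_le (u (NN c) (A c) - u (NN c) aH) (u (NN c) aH)
          rwa [sub_add_cancel] at h21a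
        have h22 : ‖u (NN c) (A c) - u (NN c) aH‖ = ‖u (NN c) aH - u (NN c) (A c)‖ :=
          norm_sub_rev _ _
        have h23 : (1 : ℝ) / (NN c : ℝ) ≤ 1 := by
          rw [div_le_one hNN0']
          exact_mod_cast hNN0
        have := hS (NN c)
        linarith
      have hsqrtle : S + 1 ≤ (Nat.sqrt (NN c) : ℝ) := by
        have h24 : Nat.sqrt M ≤ Nat.sqrt (NN c) := Nat.sqrt_le_sqrt hMN
        have h25 : (Nat.sqrt M : ℝ) ≤ (Nat.sqrt (NN c) : ℝ) := by exact_mod_cast h24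
        linarith [hMS]
      have hz : z c = u (NN c) (A c) := by
        rw [hzdef]
        simp only [if_pos (le_trans hVle hsqrtle)]
      have hbound : ‖z c - f aH‖ ≤ ε / 4 := by
        rw [hz]
        have : u (NN c) (A c) - f aH = -(u (NN c) aH - u (NN c) (A c)) + (u (NN c) aH - f aH) := by
          abel
        rw [this]
        calc ‖-(u (NN c) aH - u (NN c) (A c)) + (u (NN c) aH - f aH)‖
            ≤ ‖-(u (NN c) aH - u (NN c) (A c))‖ + ‖u (NN c) aH - f aH‖ := norm_add_le _ _
          _ = ‖u (NN c) aH - u (NN c) (A c)‖ + ‖u (NN c) aH - f aH‖ := by rw [norm_neg]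
          _ ≤ ε / 8 + ε / 8 := by linarith
          _ = ε / 4 := by ring
      calc ‖z c - f aH‖ * (infDist x H / dist x a) ≤ (ε / 4) * 1 := by
            apply mul_le_mul hbound hratio1 hrationn (by positivity)
        _ ≤ ε / 2 := by linarith
    · -- tangential piece
      push_neg at hcone
      have hratθ : infDist x H / dist x a ≤ θ := by
        rw [div_le_iff₀ hxa0]
        linarith [hcone]
      have hQbound : ∀ b : ℝ, ‖z c - f aH‖ ≤ b → b ≤ Q → ‖z c - f aH‖ *
          (infDist x H / dist x a) ≤ ε / 2 := by
        intro b hb hbQ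
        have h26 : ‖z c - f aH‖ * (infDist x H / dist x a) ≤ b * θ := by
          apply mul_le_mul hb hratθ hrationn (le_trans (norm_nonneg _) hb)
        have h27 : b * θ ≤ Q * θ := mul_le_mul_of_nonneg_right hbQ (le_of_lt hθ0)
        linarith [hθQ]
      have hsqN2 : (0 : ℝ) ≤ (Nat.sqrt N₂ : ℝ) := by positivity
      by_cases hz0 : ‖u (NN c) (A c)‖ ≤ (Nat.sqrt (NN c) : ℝ)
      · have hz : z c = u (NN c) (A c) := by
          rw [hzdef]; simp only [if_pos hz0]
        by_cases hnear : dist (aH : X) (A c : X) ≤ (NN c : ℝ) * D c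
        · -- near case: use the oscillation bound
          have hosc := hPNc.2 (NN c) le_rfl aH hnear
          have h1n : (1 : ℝ) / (NN c : ℝ) ≤ 1 := by
            rcases Nat.eq_zero_or_pos (NN c) with h | h
            · simp [h]
            · rw [div_le_one (by exact_mod_cast h)]
              exact_mod_cast h
          have hb : ‖z c - f aH‖ ≤ 1 + S + F := by
            rw [hz]
            have h28 : u (NN c) (A c) - f aH =
                -(u (NN c) aH - u (NN c) (A c)) + u (NN c) aH - f aH := by abel
            have h29 : ‖u (NN c) (A c) - f aH‖ ≤
                ‖u (NN c) aH - u (NN c) (A c)‖ + ‖u (NN c) aH‖ + ‖f aH‖ := by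
              rw [h28]
              calc ‖-(u (NN c) aH - u (NN c) (A c)) + u (NN c) aH - f aH‖
                  ≤ ‖-(u (NN c) aH - u (NN c) (A c)) + u (NN c) aH‖ + ‖f aH‖ := norm_sub_le _ _
                _ ≤ ‖-(u (NN c) aH - u (NN c) (A c))‖ + ‖u (NN c) aH‖ + ‖f aH‖ := by
                    have := norm_add_le (-(u (NN c) aH - u (NN c) (A c))) (u (NN c) aH)
                    linarith
                _ = ‖u (NN c) aH - u (NN c) (A c)‖ + ‖u (NN c) aH‖ + ‖f aH‖ := by rw [norm_neg]
            have := hS (NN c)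
            have := hosc
            simp only [hFdef] at *
            linarith
          apply hQbound (1 + S + F) hb
          simp only [hQdef]
          linarith [hsqN2]
        · -- far case
          push_neg at hnear
          by_cases hn2 : N₂ ≤ NN c
          · -- big index: the ratio is at most 3 / NN c
            have hNN0' : (0 : ℝ) < (NN c : ℝ) := by
              have : 0 < NN c := lt_of_lt_of_le (by omega) hn2
              exact_mod_cast this
            have hfar : (NN c : ℝ) * D c < dist (aH : X) (A c : X) := hnear
            have h30 : dist x a ≥ dist (aH : X) (A c : X) - dist x (A c : X) := by
              have h31 : dist (aH : X) (A c : X) ≤ dist (a : X) x + dist x (A c : X) :=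
                dist_triangle _ _ _
              have h32 : dist (a : X) x = dist x a := dist_comm _ _
              simp only [haHdef] at *
              linarith
            have hNN7 : (7 : ℝ) ≤ (NN c : ℝ) := by
              have : 7 ≤ NN c := le_trans hN₂7 hn2
              exact_mod_cast this
            have h33 : dist x a ≥ ((NN c : ℝ) / 2) * D c := by
              have h33a : dist x a ≥ (NN c : ℝ) * D c - (17 / 8) * D c := by linarith [hxAc]
              have h33b : (17 / 4 : ℝ) * D c ≤ (NN c : ℝ) * D c :=
                mul_le_mul_of_nonneg_right (by linarith [hNN7]) (le_of_lt hDc)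
              have h33c : ((NN c : ℝ) / 2) * D c = (NN c : ℝ) * D c - ((NN c : ℝ) / 2) * D c := by
                ring
              linarith
            have hrat3 : infDist x H / dist x a ≤ 3 / (NN c : ℝ) := by
              rw [div_le_div_iff₀ hxa0 hNN0']
              have h34 : infDist x H * (NN c : ℝ) ≤ ((9 / 8) * D c) * (NN c : ℝ) :=
                mul_le_mul_of_nonneg_right hDc9 (le_of_lt hNN0')
              have h35 : (3 : ℝ) * (((NN c : ℝ) / 2) * D c) ≤ 3 * dist x a := by
                linarith [h33]
              have h36 : ((9 / 8) * D c) * (NN c : ℝ) ≤ 3 * (((NN c : ℝ) / 2) * D c) := by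
                have hx : 0 ≤ D c * (NN c : ℝ) := mul_nonneg (le_of_lt hDc) (le_of_lt hNN0')
                linarith [hx]
              linarith
            have hb : ‖z c - f aH‖ ≤ (Nat.sqrt (NN c) : ℝ) + F := by
              calc ‖z c - f aH‖ ≤ ‖z c‖ + ‖f aH‖ := norm_sub_le _ _
                _ ≤ (Nat.sqrt (NN c) : ℝ) + F := by
                    have := hznorm c; simp only [hFdef]; linarith
            calc ‖z c - f aH‖ * (infDist x H / dist x a)
                ≤ ((Nat.sqrt (NN c) : ℝ) + F) * (3 / (NN c : ℝ)) := by
                  apply mul_le_mul hb hrat3 hrationn (by positivity)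
              _ ≤ ε / 2 := hsq2 (NN c) hn2
          · -- small index
            push_neg at hn2
            have hb : ‖z c - f aH‖ ≤ (Nat.sqrt N₂ : ℝ) + F := by
              calc ‖z c - f aH‖ ≤ ‖z c‖ + ‖f aH‖ := norm_sub_le _ _
                _ ≤ (Nat.sqrt N₂ : ℝ) + F := by
                    have h35 := hznorm c
                    have h36 : Nat.sqrt (NN c) ≤ Nat.sqrt N₂ :=
                      Nat.sqrt_le_sqrt (le_of_lt hn2)
                    have h37 : (Nat.sqrt (NN c) : ℝ) ≤ (Nat.sqrt N₂ : ℝ) := by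
                      exact_mod_cast h36
                    simp only [hFdef]; linarith
            apply hQbound ((Nat.sqrt N₂ : ℝ) + F) hb
            simp only [hQdef]; linarith
      · have hz : z c = 0 := by
          rw [hzdef]; simp only [if_neg hz0]
        have hb : ‖z c - f aH‖ ≤ F := by
          rw [hz]; simp [hFdef]
        apply hQbound F hb
        simp only [hQdef]; linarith [hsqN2]
  -- assemble
  have hsum1 : ∑ i ∈ φ.finsupport y₀, φ i y₀ = 1 := φ.sum_finsupport (Set.mem_univ y₀)
  have hgx : g x = ∑ i ∈ φ.finsupport y₀, φ i y₀ • z i := by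
    have h40 : g x = g₀ y₀ := hgres y₀
    rw [h40, hg₀def]
    exact (φ.sum_finsupport_smul_eq_finsum (fun i _ => z i)).symm
  have hdiff : g x - f aH = ∑ i ∈ φ.finsupport y₀, φ i y₀ • (z i - f aH) := by
    calc g x - f aH = (∑ i ∈ φ.finsupport y₀, φ i y₀ • z i) -
          (∑ i ∈ φ.finsupport y₀, φ i y₀) • f aH := by rw [hgx, hsum1, one_smul]
      _ = (∑ i ∈ φ.finsupport y₀, φ i y₀ • z i) -
          ∑ i ∈ φ.finsupport y₀, φ i y₀ • f aH := by rw [Finset.sum_smul]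
      _ = ∑ i ∈ φ.finsupport y₀, (φ i y₀ • z i - φ i y₀ • f aH) := by
          rw [Finset.sum_sub_distrib]
      _ = ∑ i ∈ φ.finsupport y₀, φ i y₀ • (z i - f aH) := by
          apply Finset.sum_congr rfl
          intro i _
          rw [smul_sub]
  have hfinal : ‖g x - f aH‖ * (infDist x H / dist x a) ≤ ε / 2 := by
    rw [hdiff]
    calc ‖∑ i ∈ φ.finsupport y₀, φ i y₀ • (z i - f aH)‖ * (infDist x H / dist x a)
        ≤ (∑ i ∈ φ.finsupport y₀, ‖φ i y₀ • (z i - f aH)‖) * (infDist x H / dist x a) := by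
          apply mul_le_mul_of_nonneg_right (norm_sum_le _ _) hrationn
      _ = ∑ i ∈ φ.finsupport y₀, φ i y₀ * (‖z i - f aH‖ * (infDist x H / dist x a)) := by
          rw [Finset.sum_mul]
          apply Finset.sum_congr rfl
          intro i _
          rw [norm_smul, Real.norm_of_nonneg (φ.nonneg i y₀)]
          ring
      _ ≤ ∑ i ∈ φ.finsupport y₀, φ i y₀ * (ε / 2) := by
          apply Finset.sum_le_sum
          intro i hi
          have hne : φ i y₀ ≠ 0 := by
            rw [PartitionOfUnity.mem_finsupport] at hi
            exact hi
          exact mul_le_mul_of_nonneg_left (key i hne) (φ.nonneg i y₀)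
      _ = (∑ i ∈ φ.finsupport y₀, φ i y₀) * (ε / 2) := by rw [Finset.sum_mul]
      _ = ε / 2 := by rw [hsum1, one_mul]
  rw [Real.dist_eq, sub_zero]
  rw [abs_of_nonneg (by positivity)]
  calc ‖g x - f aH‖ * (infDist x H / dist x a) ≤ ε / 2 := hfinal
    _ < ε := by linarith
end

section
/- Let (X,d) be a metric space, H ⊂ X a closed set, Z a normed linear space and f : H → Z a Baire one function. Then there exists a continuous function g : (X \ H) → Z such that lim_{x→a, x∈X\H} g(x) = f(a) for every a ∈ ∂H at which f is continuous. -/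
open Filter Topology Metric

/-- Extension theorem for vector-valued Baire one functions preserving limits
at points of continuity on the boundary. -/
theorem baire_one_extension_continuity_points {X Z : Type*} [MetricSpace X]
    [NormedAddCommGroup Z] [NormedSpace ℝ Z]
    (H : Set X) (hH : IsClosed H) (f : H → Z) (hf : IsBaireOne f) :
    ∃ g : X → Z, ContinuousOn g Hᶜ ∧
      ∀ a, ∀ ha : a ∈ frontier H, ContinuousAt f ⟨a, hH.frontier_subset ha⟩ →
        Tendsto g (nhdsWithin a Hᶜ) (nhds (f ⟨a, hH.frontier_subset ha⟩)) := by
  classical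
  by_cases hne : H.Nonempty
  · -- positive distance to H for points of the complement
    have hr : ∀ i : ↥(Hᶜ), 0 < infDist (i : X) H := fun i =>
      (hH.notMem_iff_infDist_pos hne).mp i.2
    -- choose near points in H
    have hy : ∀ i : ↥(Hᶜ), ∃ z ∈ H, dist (i : X) z < 2 * infDist (i : X) H := fun i =>
      (infDist_lt_iff hne).mp (by linarith [hr i])
    choose y hyH hyd using hy
    -- open cover of the complement by balls
    set U : ↥(Hᶜ) → Set ↥(Hᶜ) := fun i =>
      (fun q : ↥(Hᶜ) => (q : X)) ⁻¹' Metric.ball (i : X) (infDist (i : X) H / 3) with hU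
    have hUo : ∀ i, IsOpen (U i) := fun i =>
      Metric.isOpen_ball.preimage continuous_subtype_val
    have hUc : (Set.univ : Set ↥(Hᶜ)) ⊆ ⋃ i, U i := by
      intro q _
      exact Set.mem_iUnion.mpr ⟨q, by
        simp only [hU, Set.mem_preimage, Metric.mem_ball, dist_self]
        linarith [hr q]⟩
    obtain ⟨ρ, hρ⟩ := PartitionOfUnity.exists_isSubordinate isClosed_univ U hUo hUc
    set G : ↥(Hᶜ) → Z := fun q => ∑ᶠ i, ρ i q • f ⟨y i, hyH i⟩ with hG
    have hGc : Continuous G := ρ.continuous_finsum_smul fun i x _ => continuousAt_const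
    refine ⟨fun x => if h : x ∈ Hᶜ then G ⟨x, h⟩ else 0, ?_, ?_⟩
    · rw [continuousOn_iff_continuous_restrict]
      convert hGc using 1
      funext q
      simp only [Set.restrict_apply, dif_pos q.2]
    · intro a ha hfa
      set a' : H := ⟨a, hH.frontier_subset ha⟩ with ha'
      rw [Metric.tendsto_nhdsWithin_nhds]
      intro ε hε
      rw [Metric.continuousAt_iff] at hfa
      obtain ⟨δ, hδ, hδf⟩ := hfa (ε / 2) (by linarith)
      refine ⟨δ / 5, by positivity, ?_⟩
      intro x hx hxa
      rw [dif_pos hx]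
      set q : ↥(Hᶜ) := ⟨x, hx⟩ with hq
      have key : ∀ i ∈ ρ.finsupport q, ‖f ⟨y i, hyH i⟩ - f a'‖ ≤ ε / 2 := by
        intro i hi
        have hsupp : q ∈ U i := hρ i (subset_closure ((ρ.mem_finsupport q).mp hi))
        have h3 : dist x (i : X) < infDist (i : X) H / 3 := hsupp
        have h1 : infDist (i : X) H ≤ dist (i : X) a := infDist_le_dist_of_mem a'.2
        have h2 : dist (i : X) a ≤ dist (i : X) x + dist x a := dist_triangle _ _ _
        have h3' : dist (i : X) x < infDist (i : X) H / 3 := by rwa [dist_comm]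
        have hxa' : dist x a < δ / 5 := hxa
        have h4 : dist (y i) a ≤ dist (y i) (i : X) + dist (i : X) x + dist x a :=
          dist_triangle4 _ _ _ _
        have h5 : dist (y i) (i : X) < 2 * infDist (i : X) H := by
          rw [dist_comm]; exact hyd i
        have h6 : dist (y i) a < δ := by
          have hnn : (0 : ℝ) ≤ dist x a := dist_nonneg
          nlinarith
        have := hδf (x := (⟨y i, hyH i⟩ : H)) (by rwa [Subtype.dist_eq])
        rw [dist_eq_norm] at this
        exact this.le
      have hsum : ∑ i ∈ ρ.finsupport q, ρ i q = 1 := ρ.sum_finsupport (Set.mem_univ q)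
      have hGq : G q = ∑ i ∈ ρ.finsupport q, ρ i q • f ⟨y i, hyH i⟩ :=
        (ρ.sum_finsupport_smul_eq_finsum (fun i _ => f ⟨y i, hyH i⟩)).symm
      have hfa' : f a' = ∑ i ∈ ρ.finsupport q, ρ i q • f a' := by
        rw [← Finset.sum_smul, hsum, one_smul]
      rw [dist_eq_norm, hGq]
      calc ‖∑ i ∈ ρ.finsupport q, ρ i q • f ⟨y i, hyH i⟩ - f a'‖
          = ‖∑ i ∈ ρ.finsupport q, ρ i q • (f ⟨y i, hyH i⟩ - f a')‖ := by
            congr 1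
            simp only [smul_sub]
            rw [Finset.sum_sub_distrib, ← Finset.sum_smul, hsum, one_smul]
        _ ≤ ∑ i ∈ ρ.finsupport q, ‖ρ i q • (f ⟨y i, hyH i⟩ - f a')‖ := norm_sum_le _ _
        _ ≤ ∑ i ∈ ρ.finsupport q, ρ i q * (ε / 2) := by
            refine Finset.sum_le_sum fun i hi => ?_
            rw [norm_smul, Real.norm_of_nonneg (ρ.nonneg i q)]
            exact mul_le_mul_of_nonneg_left (key i hi) (ρ.nonneg i q)
        _ = ε / 2 := by rw [← Finset.sum_mul, hsum, one_mul]
        _ < ε := by linarith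
  · refine ⟨0, continuousOn_const, fun a ha => ?_⟩
    exact absurd (hH.frontier_subset ha) fun h => hne ⟨a, h⟩
end

section
/- Let (X,d) be a metric space, H ⊂ X a closed set, Z a normed linear space and f : H → Z a Baire one function. Then there exists a function F : X → Z extending f (i.e. F = f on H) such that F restricted to X \ H is continuous, and F is continuous at every point a ∈ H at which f (as a function on H) is continuous. -/
open Filter Topology Set

/-- A Baire one function on a closed subset of a metric space extends to a
function on the whole space that is continuous off the set and continuous at
every point where the original function is continuous. -/
theorem baire_one_extension_preserving_continuity {X Z : Type*} [MetricSpace X]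
    [NormedAddCommGroup Z] [NormedSpace ℝ Z]
    (H : Set X) (hH : IsClosed H) (f : H → Z) (hf : IsBaireOne f) :
    ∃ F : X → Z,
      (∀ x, ∀ hx : x ∈ H, F x = f ⟨x, hx⟩) ∧
      ContinuousOn F Hᶜ ∧
      (∀ a, ∀ ha : a ∈ H, ContinuousAt f ⟨a, ha⟩ → ContinuousAt F a) := by
  classical
  clear hf
  rcases H.eq_empty_or_nonempty with hne | hne
  · refine ⟨fun _ => 0, ?_, continuousOn_const, ?_⟩
    · intro x hx; rw [hne] at hx; exact absurd hx (Set.notMem_empty x)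
    · intro a ha; rw [hne] at ha; exact absurd ha (Set.notMem_empty a)
  have hpos : ∀ p : ↥(Hᶜ), 0 < Metric.infDist (p : X) H :=
    fun p => (hH.notMem_iff_infDist_pos hne).1 p.2
  -- choose nearby points in H
  have hcex : ∀ p : ↥(Hᶜ), ∃ q : H, dist (p : X) (q : X) < 2 * Metric.infDist (p : X) H := by
    intro p
    have h2 : Metric.infDist (p : X) H < 2 * Metric.infDist (p : X) H := by
      linarith [hpos p]
    rcases (Metric.infDist_lt_iff hne).1 h2 with ⟨q, hqH, hq⟩
    exact ⟨⟨q, hqH⟩, hq⟩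
  choose c hcd using hcex
  set U : ↥(Hᶜ) → Set ↥(Hᶜ) :=
    fun p => {y : ↥(Hᶜ) | dist (y : X) (p : X) < Metric.infDist (p : X) H / 2} with hU
  have hUo : ∀ p, IsOpen (U p) := by
    intro p
    exact isOpen_lt (by fun_prop) continuous_const
  have hUc : Set.univ ⊆ ⋃ p, U p := by
    intro y _
    refine Set.mem_iUnion.2 ⟨y, ?_⟩
    simp only [hU, Set.mem_setOf_eq, dist_self]
    linarith [hpos y]
  obtain ⟨φ, hφ⟩ := PartitionOfUnity.exists_isSubordinate isClosed_univ U hUo hUc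
  set g : ↥(Hᶜ) → Z := fun y => ∑ᶠ p, φ p y • (f (c p) : Z) with hg
  have hgc : Continuous g := hφ.continuous_finsum_smul hUo (fun p => continuousOn_const)
  set F : X → Z := fun x => if hx : x ∈ H then f ⟨x, hx⟩ else g ⟨x, hx⟩ with hF
  have hFH : ∀ x, ∀ hx : x ∈ H, F x = f ⟨x, hx⟩ := fun x hx => dif_pos hx
  refine ⟨F, hFH, ?_, ?_⟩
  · rw [continuousOn_iff_continuous_restrict]
    have : Set.restrict Hᶜ F = g := by
      funext y
      exact dif_neg y.2
    exact (show Continuous (Set.restrict Hᶜ F) by rw [this]; exact hgc)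
  · intro a ha hfa
    -- key estimate
    have key : ∀ ε : ℝ, 0 < ε → ∃ δ : ℝ, 0 < δ ∧
        ∀ x : X, dist x a < δ → ‖F x - f ⟨a, ha⟩‖ ≤ ε := by
      intro ε hε
      rcases Metric.continuousAt_iff.1 hfa ε hε with ⟨δ, hδ, hfd⟩
      refine ⟨δ / 6, by linarith, fun x hx => ?_⟩
      by_cases hxH : x ∈ H
      · rw [hFH x hxH]
        have : dist (f ⟨x, hxH⟩) (f ⟨a, ha⟩) < ε := by
          apply hfd
          rw [Subtype.dist_eq]
          simpa using by linarith
        rw [← dist_eq_norm]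
        exact this.le
      · set y : ↥(Hᶜ) := ⟨x, hxH⟩ with hy
        have hFx : F x = g y := dif_neg hxH
        -- for every p with φ p y ≠ 0, c p is close to a
        have hclose : ∀ p : ↥(Hᶜ), φ p y ≠ 0 → dist ((c p : H) : X) a < δ := by
          intro p hp
          have hyU : y ∈ U p := hφ p (subset_tsupport _ (by exact hp))
          have h1 : dist (y : X) (p : X) < Metric.infDist (p : X) H / 2 := hyU
          have h2 : Metric.infDist (p : X) H ≤ dist (p : X) a :=
            Metric.infDist_le_dist_of_mem ha
          have h3 : dist (p : X) a ≤ dist (p : X) (y : X) + dist (y : X) a :=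
            dist_triangle _ _ _
          rw [dist_comm (p : X) (y : X)] at h3
          have hya : dist (y : X) a = dist x a := rfl
          have h4 : dist (p : X) a < 2 * dist x a := by
            rw [hya] at h3; nlinarith
          have h5 : dist ((c p : H) : X) a ≤ dist ((c p : H) : X) (p : X) + dist (p : X) a :=
            dist_triangle _ _ _
          have h6 : dist ((c p : H) : X) (p : X) < 2 * Metric.infDist (p : X) H := by
            rw [dist_comm]; exact hcd p
          nlinarith [hpos p]
        -- rewrite the finsum as a finset sum
        set s : Finset ↥(Hᶜ) := φ.finsupport y with hs
        have hgy : g y = ∑ p ∈ s, φ p y • (f (c p) : Z) :=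
          (φ.sum_finsupport_smul_eq_finsum (fun p _ => (f (c p) : Z))).symm
        have hsum1 : ∑ p ∈ s, φ p y = 1 := φ.sum_finsupport (Set.mem_univ y)
        rw [hFx, hgy]
        have heq : ∑ p ∈ s, φ p y • (f (c p) : Z) - f ⟨a, ha⟩
            = ∑ p ∈ s, φ p y • (f (c p) - f ⟨a, ha⟩) := by
          simp only [smul_sub, Finset.sum_sub_distrib, ← Finset.sum_smul, hsum1, one_smul]
        rw [heq]
        calc ‖∑ p ∈ s, φ p y • (f (c p) - f ⟨a, ha⟩)‖
            ≤ ∑ p ∈ s, ‖φ p y • (f (c p) - f ⟨a, ha⟩)‖ := norm_sum_le _ _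
          _ ≤ ∑ p ∈ s, φ p y * ε := by
              apply Finset.sum_le_sum
              intro p hp
              rw [norm_smul, Real.norm_eq_abs, abs_of_nonneg (φ.nonneg p y)]
              have hp0 : φ p y ≠ 0 := Function.mem_support.1 ((φ.mem_finsupport y).1 hp)
              have hlt : ‖f (c p) - f ⟨a, ha⟩‖ < ε := by
                rw [← dist_eq_norm]
                apply hfd
                rw [Subtype.dist_eq]
                exact hclose p hp0
              exact mul_le_mul_of_nonneg_left hlt.le (φ.nonneg p y)
          _ = ε := by rw [← Finset.sum_mul, hsum1, one_mul]
    rw [Metric.continuousAt_iff]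
    intro ε hε
    rcases key (ε / 2) (by linarith) with ⟨δ, hδ, hk⟩
    refine ⟨δ, hδ, fun {x} hx => ?_⟩
    have := hk x hx
    rw [hFH a ha, dist_eq_norm]
    linarith
end

section
/- Let Y be a metric space and Z a normed linear space. If f : Y → Z is a Baire one function, then f is the pointwise limit of a sequence {f_n} of bounded locally Lipschitz functions f_n : Y → Z such that the pair ({f_n}, f) has UCPC, and such that {f_n} is uniformly bounded on B_Y(a,r) whenever a ∈ Y, r ∈ (0,∞) ∪ {∞} and f is bounded on B_Y(a,2r). -/
open Filter Topology Metric ENNReal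

/-- The pair `({h n}, f)` has the property of uniform convergence at points of
continuity (UCPC): for every point `y₀` where `f` is continuous and every
`ε > 0` there are `k₀ ∈ ℕ` and a neighborhood `U` of `y₀` such that
`‖h k y - f y₀‖ < ε` for every `k ≥ k₀` and `y ∈ U`. -/
def UCPC {Y Z : Type*} [TopologicalSpace Y] [NormedAddCommGroup Z]
    (h : ℕ → Y → Z) (f : Y → Z) : Prop :=
  ∀ y₀, ContinuousAt f y₀ → ∀ ε > (0 : ℝ), ∃ k₀ : ℕ, ∃ U ∈ nhds y₀,
    ∀ k ≥ k₀, ∀ y ∈ U, ‖h k y - f y₀‖ < ε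



section Trunc
variable {Z : Type*} [NormedAddCommGroup Z] [NormedSpace ℝ Z]

/-- Radial truncation of `v` to the closed ball of radius `max ρ 0`. -/
noncomputable def trunc (ρ : ℝ) (v : Z) : Z := (min ‖v‖ (max ρ 0) / ‖v‖) • v

theorem trunc_eq_of_norm_le {ρ : ℝ} {v : Z} (h : ‖v‖ ≤ ρ) : trunc ρ v = v := by
  rcases eq_or_ne v 0 with rfl | hv
  · simp [trunc]
  · have hv' : ‖v‖ ≠ 0 := by simpa using hv
    have : min ‖v‖ (max ρ 0) = ‖v‖ := min_eq_left (le_trans h (le_max_left _ _))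
    rw [trunc, this, div_self hv', one_smul]

theorem norm_trunc (ρ : ℝ) (v : Z) : ‖trunc ρ v‖ = min ‖v‖ (max ρ 0) := by
  rcases eq_or_ne v 0 with rfl | hv
  · simp [trunc]
  · have hv' : (0:ℝ) < ‖v‖ := norm_pos_iff.2 hv
    have hc : (0:ℝ) ≤ min ‖v‖ (max ρ 0) / ‖v‖ :=
      div_nonneg (le_min hv'.le (le_max_right _ _)) hv'.le
    rw [trunc, norm_smul, Real.norm_eq_abs, abs_of_nonneg hc, div_mul_cancel₀ _ hv'.ne']

theorem norm_trunc_le (ρ : ℝ) (v : Z) : ‖trunc ρ v‖ ≤ max ρ 0 := by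
  rw [norm_trunc]; exact min_le_right _ _

theorem norm_trunc_le_norm (ρ : ℝ) (v : Z) : ‖trunc ρ v‖ ≤ ‖v‖ := by
  rw [norm_trunc]; exact min_le_left _ _

theorem norm_trunc_sub_self (ρ : ℝ) (v : Z) :
    ‖trunc ρ v - v‖ = ‖v‖ - min ‖v‖ (max ρ 0) := by
  rcases eq_or_ne v 0 with rfl | hv
  · simp [trunc]
  · have hv' : (0:ℝ) < ‖v‖ := norm_pos_iff.2 hv
    have h1 : trunc ρ v - v = (min ‖v‖ (max ρ 0) / ‖v‖ - 1) • v := by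
      rw [trunc, sub_smul, one_smul]
    have hc : min ‖v‖ (max ρ 0) / ‖v‖ - 1 ≤ 0 := by
      rw [sub_nonpos, div_le_one hv']; exact min_le_left _ _
    rw [h1, norm_smul, Real.norm_eq_abs, abs_of_nonpos hc, neg_sub, sub_mul,
      div_mul_cancel₀ _ hv'.ne', one_mul]

theorem norm_trunc_sub_self_le {ρ c : ℝ} (hρ : 0 ≤ ρ) (hc : 0 ≤ c) {v : Z}
    (h : ‖v‖ ≤ ρ + c) : ‖trunc ρ v - v‖ ≤ c := by
  rw [norm_trunc_sub_self]
  rcases le_total ‖v‖ (max ρ 0) with h1 | h1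
  · rw [min_eq_left h1]; linarith
  · rw [min_eq_right h1, max_eq_left hρ] at *; linarith

/-- The radial truncation (at a fixed nonnegative radius) is `2`-Lipschitz; auxiliary
version assuming `‖w‖ ≤ ‖v‖`. -/
theorem trunc_of_le {σ : ℝ} (hσ : 0 ≤ σ) {v : Z} (h : σ ≤ ‖v‖) :
    trunc σ v = (σ / ‖v‖) • v := by
  rw [trunc, max_eq_left hσ, min_eq_right h]

theorem trunc_zero (σ : ℝ) : trunc σ (0:Z) = 0 := by simp [trunc]

theorem abs_min_sub_min (a b c : ℝ) : |min a b - min a c| ≤ |b - c| := by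
  have h : ∀ x y : ℝ, min a x - min a y ≤ |x - y| := by
    intro x y
    rcases le_total a y with h | h
    · rw [min_eq_left h]
      have h1 : min a x ≤ a := min_le_left _ _
      have := abs_nonneg (x - y); linarith
    · rw [min_eq_right h]
      have h1 : min a x ≤ x := min_le_right _ _
      have := le_abs_self (x - y); linarith
  exact abs_sub_le_iff.2 ⟨h b c, by rw [abs_sub_comm]; exact h c b⟩

theorem abs_max_sub_max (b c : ℝ) : |max b 0 - max c 0| ≤ |b - c| := by
  have h : ∀ x y : ℝ, max x 0 - max y 0 ≤ |x - y| := by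
    intro x y
    rcases le_total x 0 with h | h
    · rw [max_eq_right h]
      have h1 : (0:ℝ) ≤ max y 0 := le_max_right _ _
      have := abs_nonneg (x - y); linarith
    · rw [max_eq_left h]
      have h1 : y ≤ max y 0 := le_max_left _ _
      have := le_abs_self (x - y); linarith
  exact abs_sub_le_iff.2 ⟨h b c, by rw [abs_sub_comm]; exact h c b⟩

theorem norm_trunc_sub_trunc_le_aux {σ : ℝ} (hσ : 0 ≤ σ) {v w : Z} (hvw : ‖w‖ ≤ ‖v‖) :
    ‖trunc σ v - trunc σ w‖ ≤ 2 * ‖v - w‖ := by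
  rcases eq_or_ne v 0 with rfl | hv0
  · have hw : ‖w‖ = 0 := le_antisymm (by simpa using hvw) (norm_nonneg w)
    have hw0 : w = 0 := by simpa using hw
    subst hw0; simp
  rcases eq_or_ne w 0 with rfl | hw0
  · rw [trunc_zero, sub_zero, sub_zero]
    have := norm_trunc_le_norm σ v
    have := norm_nonneg v; linarith
  rcases le_total ‖v‖ σ with h1 | h1
  · rw [trunc_eq_of_norm_le h1, trunc_eq_of_norm_le (hvw.trans h1)]
    have := norm_nonneg (v - w); linarith
  · have hv' : (0:ℝ) < ‖v‖ := norm_pos_iff.2 hv0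
    have hw' : (0:ℝ) < ‖w‖ := norm_pos_iff.2 hw0
    have htv : trunc σ v = (σ / ‖v‖) • v := trunc_of_le hσ h1
    have ht0 : 0 ≤ σ / ‖v‖ := div_nonneg hσ hv'.le
    have ht1 : σ / ‖v‖ ≤ 1 := by rw [div_le_one hv']; exact h1
    have hnn : ‖v‖ - ‖w‖ ≤ ‖v - w‖ := by
      have := norm_sub_norm_le v w; linarith
    rcases le_total ‖w‖ σ with h2 | h2
    · rw [htv, trunc_eq_of_norm_le h2]
      calc ‖(σ / ‖v‖) • v - w‖
          ≤ ‖(σ / ‖v‖) • (v - w)‖ + ‖((σ / ‖v‖) - 1) • w‖ := by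
            have h3 : (σ / ‖v‖) • v - w = (σ / ‖v‖) • (v - w) + ((σ / ‖v‖) - 1) • w := by
              rw [smul_sub, sub_smul, one_smul]; abel
            rw [h3]; exact norm_add_le _ _
        _ = (σ / ‖v‖) * ‖v - w‖ + (1 - σ / ‖v‖) * ‖w‖ := by
            rw [norm_smul, norm_smul, Real.norm_eq_abs, Real.norm_eq_abs,
              abs_of_nonneg ht0, abs_of_nonpos (by linarith : σ / ‖v‖ - 1 ≤ 0)]
            ring
        _ ≤ 1 * ‖v - w‖ + (1 - σ / ‖v‖) * ‖v‖ := by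
            exact add_le_add (mul_le_mul_of_nonneg_right ht1 (norm_nonneg _))
              (mul_le_mul_of_nonneg_left hvw (by linarith))
        _ = ‖v - w‖ + (‖v‖ - σ) := by field_simp
        _ ≤ ‖v - w‖ + (‖v‖ - ‖w‖) := by linarith
        _ ≤ 2 * ‖v - w‖ := by linarith
    · have htw : trunc σ w = (σ / ‖w‖) • w := trunc_of_le hσ h2
      have hts : σ / ‖v‖ ≤ σ / ‖w‖ := by gcongr
      rw [htv, htw]
      calc ‖(σ / ‖v‖) • v - (σ / ‖w‖) • w‖
          ≤ ‖(σ / ‖v‖) • (v - w)‖ + ‖((σ / ‖v‖) - (σ / ‖w‖)) • w‖ := by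
            have h3 : (σ / ‖v‖) • v - (σ / ‖w‖) • w
                = (σ / ‖v‖) • (v - w) + ((σ / ‖v‖) - (σ / ‖w‖)) • w := by
              rw [smul_sub, sub_smul]; abel
            rw [h3]; exact norm_add_le _ _
        _ = (σ / ‖v‖) * ‖v - w‖ + (σ / ‖w‖ - σ / ‖v‖) * ‖w‖ := by
            rw [norm_smul, norm_smul, Real.norm_eq_abs, Real.norm_eq_abs,
              abs_of_nonneg ht0, abs_of_nonpos (by linarith : σ / ‖v‖ - σ / ‖w‖ ≤ 0)]
            ring
        _ ≤ 1 * ‖v - w‖ + (σ / ‖w‖ - σ / ‖v‖) * ‖w‖ := by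
            exact add_le_add (mul_le_mul_of_nonneg_right ht1 (norm_nonneg _)) le_rfl
        _ = ‖v - w‖ + (σ / ‖v‖) * (‖v‖ - ‖w‖) := by field_simp
        _ ≤ ‖v - w‖ + 1 * (‖v‖ - ‖w‖) := by gcongr
        _ ≤ 2 * ‖v - w‖ := by linarith

theorem norm_trunc_sub_trunc_le {σ : ℝ} (hσ : 0 ≤ σ) (v w : Z) :
    ‖trunc σ v - trunc σ w‖ ≤ 2 * ‖v - w‖ := by
  rcases le_total ‖w‖ ‖v‖ with h | h
  · exact norm_trunc_sub_trunc_le_aux hσ h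
  · rw [norm_sub_rev, norm_sub_rev v w]; exact norm_trunc_sub_trunc_le_aux hσ h

theorem trunc_max_zero (ρ : ℝ) (v : Z) : trunc (max ρ 0) v = trunc ρ v := by
  simp [trunc, max_assoc]

theorem norm_trunc_sub_trunc_le' (ρ ρ' : ℝ) (v w : Z) :
    ‖trunc ρ v - trunc ρ' w‖ ≤ |ρ - ρ'| + 2 * ‖v - w‖ := by
  have h1 : ‖trunc ρ v - trunc ρ' v‖ ≤ |ρ - ρ'| := by
    rcases eq_or_ne v 0 with rfl | hv0
    · simp [trunc, abs_nonneg]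
    · have hv' : (0:ℝ) < ‖v‖ := norm_pos_iff.2 hv0
      have h2 : trunc ρ v - trunc ρ' v
          = ((min ‖v‖ (max ρ 0) - min ‖v‖ (max ρ' 0)) / ‖v‖) • v := by
        rw [trunc, trunc, ← sub_smul, ← sub_div]
      rw [h2, norm_smul, Real.norm_eq_abs, abs_div, abs_of_pos hv',
        div_mul_cancel₀ _ hv'.ne']
      exact (abs_min_sub_min _ _ _).trans (abs_max_sub_max _ _)
  have h2 : ‖trunc ρ' v - trunc ρ' w‖ ≤ 2 * ‖v - w‖ := by
    rw [← trunc_max_zero ρ' v, ← trunc_max_zero ρ' w]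
    exact norm_trunc_sub_trunc_le (le_max_right _ _) v w
  calc ‖trunc ρ v - trunc ρ' w‖ ≤ ‖trunc ρ v - trunc ρ' v‖ + ‖trunc ρ' v - trunc ρ' w‖ :=
        norm_sub_le_norm_sub_add_norm_sub _ _ _
    _ ≤ |ρ - ρ'| + 2 * ‖v - w‖ := by linarith

theorem lipschitzWith_trunc (ρ : ℝ) : LipschitzWith 2 (trunc ρ : Z → Z) :=
  LipschitzWith.of_dist_le_mul fun v w => by
    rw [dist_eq_norm, dist_eq_norm]
    have := norm_trunc_sub_trunc_le' ρ ρ v w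
    simpa using this

end Trunc


section Helpers
variable {ι : Type*} {Z : Type*} [NormedAddCommGroup Z] [NormedSpace ℝ Z]

theorem conv_norm_le_sum {s : Finset ι} {φ : ι → ℝ} (hnn : ∀ i ∈ s, 0 ≤ φ i)
    (hsum : ∑ i ∈ s, φ i = 1) {v : ι → Z} {z : Z} {w : ι → ℝ}
    (h : ∀ i ∈ s, φ i ≠ 0 → ‖v i - z‖ ≤ w i) :
    ‖(∑ i ∈ s, φ i • v i) - z‖ ≤ ∑ i ∈ s, φ i * w i := by
  have hz : (∑ i ∈ s, φ i • v i) - z = ∑ i ∈ s, φ i • (v i - z) := by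
    simp only [smul_sub, Finset.sum_sub_distrib, ← Finset.sum_smul, hsum, one_smul]
  rw [hz]
  calc ‖∑ i ∈ s, φ i • (v i - z)‖ ≤ ∑ i ∈ s, ‖φ i • (v i - z)‖ := norm_sum_le _ _
    _ ≤ ∑ i ∈ s, φ i * w i := by
        apply Finset.sum_le_sum
        intro i hi
        rw [norm_smul, Real.norm_eq_abs, abs_of_nonneg (hnn i hi)]
        by_cases h0 : φ i = 0
        · simp [h0]
        · exact mul_le_mul_of_nonneg_left (h i hi h0) (hnn i hi)

theorem conv_norm_le {s : Finset ι} {φ : ι → ℝ} (hnn : ∀ i ∈ s, 0 ≤ φ i)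
    (hsum : ∑ i ∈ s, φ i = 1) {v : ι → Z} {z : Z} {B : ℝ}
    (h : ∀ i ∈ s, φ i ≠ 0 → ‖v i - z‖ ≤ B) :
    ‖(∑ i ∈ s, φ i • v i) - z‖ ≤ B := by
  have := conv_norm_le_sum hnn hsum (w := fun _ => B) h
  rwa [← Finset.sum_mul, hsum, one_mul] at this

theorem conv_sum_le {s : Finset ι} {φ : ι → ℝ} (hnn : ∀ i ∈ s, 0 ≤ φ i)
    (hsum : ∑ i ∈ s, φ i = 1) {w : ι → ℝ} {B : ℝ}
    (h : ∀ i ∈ s, φ i ≠ 0 → w i ≤ B) :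
    ∑ i ∈ s, φ i * w i ≤ B := by
  calc ∑ i ∈ s, φ i * w i ≤ ∑ i ∈ s, φ i * B := by
        apply Finset.sum_le_sum
        intro i hi
        by_cases h0 : φ i = 0
        · simp [h0]
        · exact mul_le_mul_of_nonneg_left (h i hi h0) (hnn i hi)
    _ = B := by rw [← Finset.sum_mul, hsum, one_mul]

theorem conv_sum_nonneg {s : Finset ι} {φ : ι → ℝ} (hnn : ∀ i ∈ s, 0 ≤ φ i)
    {w : ι → ℝ} (hw : ∀ i ∈ s, φ i ≠ 0 → 0 ≤ w i) :
    0 ≤ ∑ i ∈ s, φ i * w i := by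
  apply Finset.sum_nonneg
  intro i hi
  by_cases h0 : φ i = 0
  · simp [h0]
  · exact mul_nonneg (hnn i hi) (hw i hi h0)

theorem norm_sum_smul_sub (s : Finset ι) (φ φ' : ι → ℝ) (v : ι → Z) (K : ι → ℝ) (d : ℝ)
    (h : ∀ i ∈ s, |φ i - φ' i| ≤ K i * d) :
    ‖(∑ i ∈ s, φ i • v i) - ∑ i ∈ s, φ' i • v i‖ ≤ (∑ i ∈ s, K i * ‖v i‖) * d := by
  rw [← Finset.sum_sub_distrib]
  simp only [← sub_smul]
  calc ‖∑ i ∈ s, (φ i - φ' i) • v i‖ ≤ ∑ i ∈ s, ‖(φ i - φ' i) • v i‖ := norm_sum_le _ _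
    _ ≤ ∑ i ∈ s, K i * ‖v i‖ * d := by
        apply Finset.sum_le_sum
        intro i hi
        rw [norm_smul, Real.norm_eq_abs]
        calc |φ i - φ' i| * ‖v i‖ ≤ K i * d * ‖v i‖ :=
              mul_le_mul_of_nonneg_right (h i hi) (norm_nonneg _)
          _ = K i * ‖v i‖ * d := by ring
    _ = (∑ i ∈ s, K i * ‖v i‖) * d := by rw [Finset.sum_mul]

end Helpers


section POU
variable {Y : Type*} [MetricSpace Y] {ι : Type*}

theorem exists_locallyLipschitz_pou (u : ι → Set Y) (uo : ∀ i, IsOpen (u i))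
    (uc : (⋃ i, u i) = Set.univ) :
    ∃ φ : ι → Y → ℝ,
      (∀ i y, 0 ≤ φ i y) ∧
      (∀ i y, φ i y ≠ 0 → y ∈ u i) ∧
      (∀ y₀ : Y, ∃ ε > (0:ℝ), ∃ s : Finset ι,
        (∀ y ∈ Metric.ball y₀ ε, ∀ i ∉ s, φ i y = 0) ∧
        (∀ y ∈ Metric.ball y₀ ε, ∑ i ∈ s, φ i y = 1) ∧
        (∀ i : ι, ∃ K : NNReal, LipschitzOnWith K (φ i) (Metric.ball y₀ ε))) := by
  classical
  obtain ⟨v, vo, vc, vlf, vu⟩ := precise_refinement u uo uc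
  -- numerator functions
  set ψ : ι → Y → ℝ := fun i y => if v i = Set.univ then 1 else Metric.infDist y (v i)ᶜ with hψ
  have hψnn : ∀ i y, 0 ≤ ψ i y := by
    intro i y; rw [hψ]; dsimp only
    split_ifs
    · exact zero_le_one
    · exact Metric.infDist_nonneg
  have hψmem : ∀ i y, ψ i y ≠ 0 → y ∈ v i := by
    intro i y h; rw [hψ] at h; dsimp only at h
    split_ifs at h with hv
    · rw [hv]; trivial
    · by_contra hy
      exact h (Metric.infDist_zero_of_mem (by simpa using hy))
  have hψpos : ∀ i y, y ∈ v i → 0 < ψ i y := by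
    intro i y hy; rw [hψ]; dsimp only
    split_ifs with hv
    · exact one_pos
    · have hne : ((v i)ᶜ : Set Y).Nonempty := by
        rw [Set.nonempty_compl]; exact hv
      exact ((vo i).isClosed_compl.notMem_iff_infDist_pos hne).1 (by simpa using hy)
  have hψlip : ∀ i, LipschitzWith 1 (ψ i) := by
    intro i; rw [hψ]; dsimp only
    split_ifs
    · exact (LipschitzWith.const 1).weaken zero_le_one
    · exact Metric.lipschitz_infDist_pt _
  -- local finiteness: at every point the support of `fun i => ψ i y` is finite
  have hfin : ∀ y : Y, (Function.support fun i => ψ i y).Finite := by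
    intro y
    obtain ⟨N, hN, hNfin⟩ := vlf y
    apply hNfin.subset
    intro i hi
    exact ⟨y, hψmem i y hi, mem_of_mem_nhds hN⟩
  set σ : Y → ℝ := fun y => ∑ᶠ i, ψ i y with hσdef
  have hσpos : ∀ y, 0 < σ y := by
    intro y
    obtain ⟨j, hj⟩ : ∃ j, y ∈ v j := by
      have := vc ▸ Set.mem_univ y
      simpa [Set.mem_iUnion] using (vc.symm ▸ Set.mem_univ y : y ∈ ⋃ i, v i)
    have hjy := hψpos j y hj
    have hrep : σ y = ∑ i ∈ (hfin y).toFinset, ψ i y :=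
      finsum_eq_sum_of_support_subset _ (by simp)
    rw [hrep]
    have hjmem : j ∈ (hfin y).toFinset := by
      simp [Function.mem_support]; exact ne_of_gt hjy
    calc (0:ℝ) < ψ j y := hjy
      _ ≤ ∑ i ∈ (hfin y).toFinset, ψ i y :=
          Finset.single_le_sum (fun i _ => hψnn i y) hjmem
  refine ⟨fun i y => ψ i y / σ y, ?_, ?_, ?_⟩
  · intro i y; exact div_nonneg (hψnn i y) (hσpos y).le
  · intro i y h
    have h' : ψ i y ≠ 0 := fun h0 => h (by simp [h0])
    exact vu i (hψmem i y h')
  · intro y₀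
    obtain ⟨N, hN, hNfin⟩ := vlf y₀
    obtain ⟨ε₁, hε₁, hball⟩ := Metric.mem_nhds_iff.1 hN
    set s : Finset ι := hNfin.toFinset with hs
    -- off `s`, ψ vanishes on the ball
    have hzero : ∀ y ∈ Metric.ball y₀ ε₁, ∀ i ∉ s, ψ i y = 0 := by
      intro y hy i hi
      by_contra h
      apply hi
      rw [hs, Set.Finite.mem_toFinset]
      exact ⟨y, hψmem i y h, hball hy⟩
    -- representation of σ as a finite sum on the ball
    have hrep : ∀ y ∈ Metric.ball y₀ ε₁, σ y = ∑ i ∈ s, ψ i y := by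
      intro y hy
      apply finsum_eq_sum_of_support_subset
      intro i hi
      by_contra hmem
      exact hi (hzero y hy i hmem)
    -- Lipschitz-type bound for σ on the ball
    have hσlip : ∀ y ∈ Metric.ball y₀ ε₁, ∀ y' ∈ Metric.ball y₀ ε₁,
        |σ y - σ y'| ≤ (s.card : ℝ) * dist y y' := by
      intro y hy y' hy'
      rw [hrep y hy, hrep y' hy', ← Finset.sum_sub_distrib]
      calc |∑ i ∈ s, (ψ i y - ψ i y')| ≤ ∑ i ∈ s, |ψ i y - ψ i y'| :=
            Finset.abs_sum_le_sum_abs _ _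
        _ ≤ ∑ i ∈ s, dist y y' := by
            apply Finset.sum_le_sum
            intro i _
            have := (hψlip i).dist_le_mul y y'
            rw [Real.dist_eq] at this
            simpa using this
        _ = (s.card : ℝ) * dist y y' := by
            rw [Finset.sum_const, nsmul_eq_mul]
    set c : ℝ := σ y₀ with hc
    have hcpos : 0 < c := hσpos y₀
    set ε : ℝ := min ε₁ (c / (2 * (s.card + 1))) with hε
    have hεpos : 0 < ε := lt_min hε₁ (by positivity)
    have hεball : Metric.ball y₀ ε ⊆ Metric.ball y₀ ε₁ :=
      Metric.ball_subset_ball (min_le_left _ _)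
    -- lower bound for σ on the small ball
    have hσlb : ∀ y ∈ Metric.ball y₀ ε, c / 2 ≤ σ y := by
      intro y hy
      have h1 := hσlip y₀ (Metric.mem_ball_self hε₁) y (hεball hy)
      have h2 : dist y₀ y < c / (2 * (s.card + 1)) := by
        rw [dist_comm]
        exact lt_of_lt_of_le (Metric.mem_ball.1 hy) (min_le_right _ _)
      have h3 : (s.card : ℝ) * dist y₀ y ≤ c / 2 := by
        have hcard : (0:ℝ) ≤ s.card := Nat.cast_nonneg _
        have h4 : (s.card : ℝ) * dist y₀ y ≤ (s.card : ℝ) * (c / (2 * (s.card + 1))) :=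
          mul_le_mul_of_nonneg_left h2.le hcard
        have h5 : (s.card : ℝ) * (c / (2 * (s.card + 1))) ≤ c / 2 := by
          have he : (s.card : ℝ) * (c / (2 * (s.card + 1))) = c * s.card / (2 * (s.card + 1)) := by
            ring
          rw [he, div_le_div_iff₀ (by positivity) (by norm_num : (0:ℝ) < 2)]
          nlinarith [hcpos.le, hcard]
        linarith
      have := abs_sub_le_iff.1 h1
      linarith [this.1, this.2]
    have hσub : ∀ y ∈ Metric.ball y₀ ε, σ y ≤ c + c / 2 := by
      intro y hy
      have h1 := hσlip y₀ (Metric.mem_ball_self hε₁) y (hεball hy)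
      have h2 : dist y₀ y < c / (2 * (s.card + 1)) := by
        rw [dist_comm]
        exact lt_of_lt_of_le (Metric.mem_ball.1 hy) (min_le_right _ _)
      have h3 : (s.card : ℝ) * dist y₀ y ≤ c / 2 := by
        have hcard : (0:ℝ) ≤ s.card := Nat.cast_nonneg _
        have h4 : (s.card : ℝ) * dist y₀ y ≤ (s.card : ℝ) * (c / (2 * (s.card + 1))) :=
          mul_le_mul_of_nonneg_left h2.le hcard
        have h5 : (s.card : ℝ) * (c / (2 * (s.card + 1))) ≤ c / 2 := by
          have he : (s.card : ℝ) * (c / (2 * (s.card + 1))) = c * s.card / (2 * (s.card + 1)) := by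
            ring
          rw [he, div_le_div_iff₀ (by positivity) (by norm_num : (0:ℝ) < 2)]
          nlinarith [hcpos.le, hcard]
        linarith
      have := abs_sub_le_iff.1 h1
      linarith [this.1, this.2]
    refine ⟨ε, hεpos, s, ?_, ?_, ?_⟩
    · intro y hy i hi
      show ψ i y / σ y = 0
      rw [hzero y (hεball hy) i hi, zero_div]
    · intro y hy
      rw [← Finset.sum_div, ← hrep y (hεball hy)]
      exact div_self (hσpos y).ne'
    · intro i
      set A : ℝ := ψ i y₀ + ε with hA
      set C : ℝ := c + c / 2 with hC
      set m : ℝ := c / 2 with hm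
      have hmpos : 0 < m := by positivity
      set Kr : ℝ := (A * s.card + C) / (m * m) with hKr
      refine ⟨Real.toNNReal Kr, LipschitzOnWith.of_dist_le' ?_⟩
      intro y hy y' hy'
      have hσy := hσlb y hy
      have hσy' := hσlb y' hy'
      have hσyub := hσub y hy
      have hσy0 : σ y ≠ 0 := by linarith
      have hσy'0 : σ y' ≠ 0 := by linarith
      have hψbd : |ψ i y| ≤ A := by
        rw [abs_of_nonneg (hψnn i y), hA]
        have := (hψlip i).dist_le_mul y y₀
        rw [Real.dist_eq] at this
        have h2 : dist y y₀ < ε := Metric.mem_ball.1 hy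
        have := abs_sub_le_iff.1 (by simpa using this : |ψ i y - ψ i y₀| ≤ dist y y₀)
        linarith [this.1]
      have hψd : |ψ i y - ψ i y'| ≤ dist y y' := by
        have := (hψlip i).dist_le_mul y y'
        rw [Real.dist_eq] at this
        simpa using this
      have hσd : |σ y' - σ y| ≤ (s.card : ℝ) * dist y y' := by
        rw [abs_sub_comm]
        exact hσlip y (hεball hy) y' (hεball hy')
      rw [Real.dist_eq]
      have key : ψ i y / σ y - ψ i y' / σ y' =
          (ψ i y * (σ y' - σ y) + σ y * (ψ i y - ψ i y')) / (σ y * σ y') := by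
        field_simp
        ring
      rw [key, abs_div]
      have hden : m * m ≤ |σ y * σ y'| := by
        rw [abs_of_pos (by nlinarith : (0:ℝ) < σ y * σ y')]
        nlinarith
      have hnum : |ψ i y * (σ y' - σ y) + σ y * (ψ i y - ψ i y')|
          ≤ (A * s.card + C) * dist y y' := by
        calc |ψ i y * (σ y' - σ y) + σ y * (ψ i y - ψ i y')|
            ≤ |ψ i y| * |σ y' - σ y| + |σ y| * |ψ i y - ψ i y'| := by
              refine (abs_add_le _ _).trans ?_
              rw [abs_mul, abs_mul]
          _ ≤ A * ((s.card : ℝ) * dist y y') + C * dist y y' := by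
              apply add_le_add
              · exact mul_le_mul hψbd hσd (abs_nonneg _) (le_trans (abs_nonneg _) hψbd)
              · apply mul_le_mul _ hψd (abs_nonneg _) (by positivity)
                rw [abs_of_pos (by linarith : (0:ℝ) < σ y)]
                linarith
          _ = (A * s.card + C) * dist y y' := by ring
      have hA0 : 0 ≤ A := by
        have := hψnn i y₀
        rw [hA]; linarith
      have hC0 : 0 ≤ C := by rw [hC]; linarith
      calc |ψ i y * (σ y' - σ y) + σ y * (ψ i y - ψ i y')| / |σ y * σ y'|
          ≤ ((A * s.card + C) * dist y y') / (m * m) := by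
            exact div_le_div₀
              (mul_nonneg (add_nonneg (mul_nonneg hA0 (Nat.cast_nonneg _)) hC0) dist_nonneg)
              hnum (by positivity) hden
        _ = Kr * dist y y' := by rw [hKr]; ring
end POU



/-- A vector-valued Baire one function is a pointwise limit of a sequence of
bounded locally Lipschitz functions with UCPC which is moreover uniformly
bounded on balls on whose doubles `f` is bounded. -/
theorem baire_one_approx_locallyLipschitz_UCPC_unifBounded {Y Z : Type*}
    [MetricSpace Y] [NormedAddCommGroup Z] [NormedSpace ℝ Z]
    (f : Y → Z) (hf : IsBaireOne f) :
    ∃ F : ℕ → Y → Z,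
      (∀ n, ∃ M : ℝ, ∀ y, ‖F n y‖ ≤ M) ∧
      (∀ n, LocallyLipschitz (F n)) ∧
      (∀ y, Tendsto (fun n => F n y) atTop (nhds (f y))) ∧
      UCPC F f ∧
      (∀ a : Y, ∀ r : ℝ≥0∞, 0 < r →
        (∃ M : ℝ, ∀ y ∈ EMetric.ball a (2 * r), ‖f y‖ ≤ M) →
        ∃ M : ℝ, ∀ n, ∀ y ∈ EMetric.ball a r, ‖F n y‖ ≤ M) := by

  classical
  obtain ⟨u, ucont, utend⟩ := hf
  set δ : ℕ → ℝ := fun n => ((n : ℝ) + 1)⁻¹ with hδdef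
  have hδpos : ∀ n, 0 < δ n := fun n => by positivity
  have hδanti : ∀ m n : ℕ, m ≤ n → δ n ≤ δ m := by
    intro m n h
    apply inv_anti₀ (by positivity)
    have : (m : ℝ) ≤ n := Nat.cast_le.2 h
    linarith
  set ub : ℕ → Y → Z := fun n y => trunc (n : ℝ) (u n y) with hubdef
  set fb : ℕ → Y → Z := fun n y => trunc (n : ℝ) (f y) with hfbdef
  have hubcont : ∀ n, Continuous (ub n) :=
    fun n => (lipschitzWith_trunc (n : ℝ)).continuous.comp (ucont n)
  have hfbnorm : ∀ n y, ‖fb n y‖ ≤ (n : ℝ) := by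
    intro n y
    have := norm_trunc_le (n : ℝ) (f y)
    rwa [max_eq_left (Nat.cast_nonneg n)] at this
  -- choice of radii
  have hrad : ∀ n (i : Y), ∃ R : ℝ, 0 < R ∧ R ≤ δ n ∧
      ∀ p, dist p i < R → ‖ub n p - ub n i‖ ≤ δ n := by
    intro n i
    have hc := (hubcont n).continuousAt (x := i)
    rw [Metric.continuousAt_iff] at hc
    obtain ⟨η, hη, hη2⟩ := hc (δ n) (hδpos n)
    refine ⟨min η (δ n), lt_min hη (hδpos n), min_le_right _ _, ?_⟩
    intro p hp
    have := hη2 (lt_of_lt_of_le hp (min_le_left _ _))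
    rw [dist_eq_norm] at this
    exact this.le
  choose R hR0 hRδ hRosc using hrad
  -- partitions of unity
  have hcover : ∀ n, (⋃ i : Y, Metric.ball i (R n i)) = Set.univ := by
    intro n
    rw [Set.eq_univ_iff_forall]
    intro y
    exact Set.mem_iUnion.2 ⟨y, Metric.mem_ball_self (hR0 n y)⟩
  have hpou := fun n => exists_locallyLipschitz_pou (fun i : Y => Metric.ball i (R n i))
    (fun _ => Metric.isOpen_ball) (hcover n)
  choose φ hφ0 hφmem hφloc using hpou
  -- oscillations
  set w : ℕ → Y → ℝ := fun n i =>
    sSup ((fun p : Y × Y => ‖fb n p.1 - fb n p.2‖) ''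
      (Metric.ball i (10 * δ n) ×ˢ Metric.ball i (10 * δ n))) with hwdef
  have hwne : ∀ n i, ((fun p : Y × Y => ‖fb n p.1 - fb n p.2‖) ''
      (Metric.ball i (10 * δ n) ×ˢ Metric.ball i (10 * δ n))).Nonempty := by
    intro n i
    refine ⟨‖fb n i - fb n i‖, ⟨(i, i), ?_, rfl⟩⟩
    have : i ∈ Metric.ball i (10 * δ n) := Metric.mem_ball_self (by positivity)
    exact Set.mem_prod.2 ⟨this, this⟩
  have hwbdd : ∀ n i, BddAbove ((fun p : Y × Y => ‖fb n p.1 - fb n p.2‖) ''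
      (Metric.ball i (10 * δ n) ×ˢ Metric.ball i (10 * δ n))) := by
    intro n i
    refine ⟨2 * n, ?_⟩
    rintro x ⟨⟨p, q⟩, _, rfl⟩
    calc ‖fb n p - fb n q‖ ≤ ‖fb n p‖ + ‖fb n q‖ := norm_sub_le _ _
      _ ≤ 2 * n := by have := hfbnorm n p; have := hfbnorm n q; linarith
  have hwle : ∀ n i p q, p ∈ Metric.ball i (10 * δ n) → q ∈ Metric.ball i (10 * δ n) →
      ‖fb n p - fb n q‖ ≤ w n i := by
    intro n i p q hp hq
    exact le_csSup (hwbdd n i) ⟨(p, q), Set.mem_prod.2 ⟨hp, hq⟩, rfl⟩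
  have hwub : ∀ n i (B : ℝ), (∀ p ∈ Metric.ball i (10 * δ n), ∀ q ∈ Metric.ball i (10 * δ n),
      ‖fb n p - fb n q‖ ≤ B) → w n i ≤ B := by
    intro n i B h
    apply csSup_le (hwne n i)
    rintro x ⟨⟨p, q⟩, hpq, rfl⟩
    exact h p (Set.mem_prod.1 hpq).1 q (Set.mem_prod.1 hpq).2
  have hw0 : ∀ n i, 0 ≤ w n i := by
    intro n i
    have hi : i ∈ Metric.ball i (10 * δ n) := Metric.mem_ball_self (by positivity)
    have := hwle n i i i hi hi
    simpa using this
  have hw2n : ∀ n i, w n i ≤ 2 * n := by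
    intro n i
    apply hwub
    intro p _ q _
    calc ‖fb n p - fb n q‖ ≤ ‖fb n p‖ + ‖fb n q‖ := norm_sub_le _ _
      _ ≤ 2 * n := by have := hfbnorm n p; have := hfbnorm n q; linarith
  -- the approximating functions
  set S : ℕ → Y → Z := fun n y => ∑ᶠ i, φ n i y • fb n i with hSdef
  set U : ℕ → Y → Z := fun n y => ∑ᶠ i, φ n i y • ub n i with hUdef
  set ρ : ℕ → Y → ℝ := fun n y => ∑ᶠ i, φ n i y * w n i with hρdef
  set F : ℕ → Y → Z := fun n y => S n y + trunc (ρ n y) (U n y - S n y) with hFdef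
  -- finite representation at every point
  have key : ∀ n y, ∃ s : Finset Y, (∑ i ∈ s, φ n i y = 1) ∧
      S n y = ∑ i ∈ s, φ n i y • fb n i ∧ U n y = ∑ i ∈ s, φ n i y • ub n i ∧
      ρ n y = ∑ i ∈ s, φ n i y * w n i := by
    intro n y
    obtain ⟨ε, hε, s, hzero, hsum, _⟩ := hφloc n y
    have hy : y ∈ Metric.ball y ε := Metric.mem_ball_self hε
    refine ⟨s, hsum y hy, ?_, ?_, ?_⟩
    · apply finsum_eq_sum_of_support_subset
      intro i hi
      by_contra hmem
      exact hi (by simp [hzero y hy i hmem])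
    · apply finsum_eq_sum_of_support_subset
      intro i hi
      by_contra hmem
      exact hi (by simp [hzero y hy i hmem])
    · apply finsum_eq_sum_of_support_subset
      intro i hi
      by_contra hmem
      exact hi (by simp [hzero y hy i hmem])
  -- master estimates
  have masterS : ∀ n y (z : Z) (B : ℝ), (∀ i, φ n i y ≠ 0 → ‖fb n i - z‖ ≤ B) →
      ‖S n y - z‖ ≤ B := by
    intro n y z B h
    obtain ⟨s, hsum, hSr, _, _⟩ := key n y
    rw [hSr]
    exact conv_norm_le (fun i _ => hφ0 n i y) hsum (fun i _ hi => h i hi)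
  have masterU : ∀ n y (z : Z) (B : ℝ), (∀ i, φ n i y ≠ 0 → ‖ub n i - z‖ ≤ B) →
      ‖U n y - z‖ ≤ B := by
    intro n y z B h
    obtain ⟨s, hsum, _, hUr, _⟩ := key n y
    rw [hUr]
    exact conv_norm_le (fun i _ => hφ0 n i y) hsum (fun i _ hi => h i hi)
  have masterρle : ∀ n y (B : ℝ), (∀ i, φ n i y ≠ 0 → w n i ≤ B) → ρ n y ≤ B := by
    intro n y B h
    obtain ⟨s, hsum, _, _, hρr⟩ := key n y
    rw [hρr]
    exact conv_sum_le (fun i _ => hφ0 n i y) hsum (fun i _ hi => h i hi)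
  have masterρ0 : ∀ n y, 0 ≤ ρ n y := by
    intro n y
    obtain ⟨s, _, _, _, hρr⟩ := key n y
    rw [hρr]
    exact conv_sum_nonneg (fun i _ => hφ0 n i y) (fun i _ _ => hw0 n i)
  have masterSρ : ∀ n y, ‖S n y - fb n y‖ ≤ ρ n y := by
    intro n y
    obtain ⟨s, hsum, hSr, _, hρr⟩ := key n y
    rw [hSr, hρr]
    apply conv_norm_le_sum (fun i _ => hφ0 n i y) hsum
    intro i _ hne
    have hd : dist y i < R n i := Metric.mem_ball.1 (hφmem n i y hne)
    have h1 : i ∈ Metric.ball i (10 * δ n) := Metric.mem_ball_self (by positivity)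
    have h2 : y ∈ Metric.ball i (10 * δ n) := by
      rw [Metric.mem_ball]
      have := hRδ n i
      have := hδpos n
      linarith
    exact hwle n i i y h1 h2
  -- global bounds
  have hSbound : ∀ n y, ‖S n y‖ ≤ (n : ℝ) := by
    intro n y
    have := masterS n y 0 n (fun i _ => by simpa using hfbnorm n i)
    simpa using this
  have hρ2n : ∀ n y, ρ n y ≤ 2 * n := fun n y => masterρle n y _ (fun i _ => hw2n n i)
  have hF3n : ∀ n y, ‖F n y‖ ≤ 3 * n := by
    intro n y
    calc ‖F n y‖ ≤ ‖S n y‖ + ‖trunc (ρ n y) (U n y - S n y)‖ := norm_add_le _ _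
      _ ≤ (n : ℝ) + max (ρ n y) 0 := add_le_add (hSbound n y) (norm_trunc_le _ _)
      _ ≤ (n : ℝ) + 2 * n := by
          have := max_le (hρ2n n y) (by positivity : (0:ℝ) ≤ 2 * n)
          linarith
      _ = 3 * n := by ring
  refine ⟨F, ?_, ?_, ?_, ?_, ?_⟩
  · -- each F n is bounded
    exact fun n => ⟨3 * n, hF3n n⟩
  · -- locally Lipschitz
    intro n y₀
    obtain ⟨ε, hε, s, hzero, _, hlip⟩ := hφloc n y₀
    choose K hK using hlip
    have hrepgen : ∀ (g : Y → Z), ∀ y ∈ Metric.ball y₀ ε,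
        (∑ᶠ i, φ n i y • g i) = ∑ i ∈ s, φ n i y • g i := by
      intro g y hy
      apply finsum_eq_sum_of_support_subset
      intro i hi
      by_contra hmem
      exact hi (by simp [hzero y hy i hmem])
    have hrepρ : ∀ y ∈ Metric.ball y₀ ε, ρ n y = ∑ i ∈ s, φ n i y * w n i := by
      intro y hy
      apply finsum_eq_sum_of_support_subset
      intro i hi
      by_contra hmem
      exact hi (by simp [hzero y hy i hmem])
    have hφd : ∀ y ∈ Metric.ball y₀ ε, ∀ y' ∈ Metric.ball y₀ ε, ∀ i,
        |φ n i y - φ n i y'| ≤ (K i : ℝ) * dist y y' := by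
      intro y hy y' hy' i
      have := (lipschitzOnWith_iff_dist_le_mul.1 (hK i)) y hy y' hy'
      rwa [Real.dist_eq] at this
    set CS : ℝ := ∑ i ∈ s, (K i : ℝ) * ‖fb n i‖ with hCS
    set CU : ℝ := ∑ i ∈ s, (K i : ℝ) * ‖ub n i‖ with hCU
    set Cρ : ℝ := ∑ i ∈ s, (K i : ℝ) * ‖w n i‖ with hCρ
    refine ⟨Real.toNNReal (CS + (Cρ + 2 * (CU + CS))), Metric.ball y₀ ε,
      Metric.ball_mem_nhds _ hε, LipschitzOnWith.of_dist_le' ?_⟩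
    intro y hy y' hy'
    have hS : ‖S n y - S n y'‖ ≤ CS * dist y y' := by
      rw [hSdef]
      dsimp only
      rw [hrepgen (fb n) y hy, hrepgen (fb n) y' hy']
      exact norm_sum_smul_sub s _ _ _ _ _ (fun i _ => hφd y hy y' hy' i)
    have hU : ‖U n y - U n y'‖ ≤ CU * dist y y' := by
      rw [hUdef]
      dsimp only
      rw [hrepgen (ub n) y hy, hrepgen (ub n) y' hy']
      exact norm_sum_smul_sub s _ _ _ _ _ (fun i _ => hφd y hy y' hy' i)
    have hρd : |ρ n y - ρ n y'| ≤ Cρ * dist y y' := by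
      rw [hrepρ y hy, hrepρ y' hy']
      have := norm_sum_smul_sub (Z := ℝ) s (fun i => φ n i y) (fun i => φ n i y')
        (w n) (fun i => (K i : ℝ)) (dist y y') (fun i _ => hφd y hy y' hy' i)
      simpa [smul_eq_mul, Real.norm_eq_abs, hCρ] using this
    have hD : ‖(U n y - S n y) - (U n y' - S n y')‖ ≤ (CU + CS) * dist y y' := by
      have he : (U n y - S n y) - (U n y' - S n y')
          = (U n y - U n y') - (S n y - S n y') := by abel
      rw [he]
      calc ‖(U n y - U n y') - (S n y - S n y')‖
          ≤ ‖U n y - U n y'‖ + ‖S n y - S n y'‖ := norm_sub_le _ _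
        _ ≤ CU * dist y y' + CS * dist y y' := add_le_add hU hS
        _ = (CU + CS) * dist y y' := by ring
    rw [dist_eq_norm]
    have hFy : F n y = S n y + trunc (ρ n y) (U n y - S n y) := rfl
    have hFy' : F n y' = S n y' + trunc (ρ n y') (U n y' - S n y') := rfl
    calc ‖F n y - F n y'‖
        ≤ ‖S n y - S n y'‖ +
          ‖trunc (ρ n y) (U n y - S n y) - trunc (ρ n y') (U n y' - S n y')‖ := by
          rw [hFy, hFy']
          have he : (S n y + trunc (ρ n y) (U n y - S n y)) -
              (S n y' + trunc (ρ n y') (U n y' - S n y'))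
              = (S n y - S n y') +
                (trunc (ρ n y) (U n y - S n y) - trunc (ρ n y') (U n y' - S n y')) := by
            abel
          rw [he]
          exact norm_add_le _ _
      _ ≤ CS * dist y y' + (|ρ n y - ρ n y'| +
          2 * ‖(U n y - S n y) - (U n y' - S n y')‖) :=
          add_le_add hS (norm_trunc_sub_trunc_le' _ _ _ _)
      _ ≤ CS * dist y y' + (Cρ * dist y y' + 2 * ((CU + CS) * dist y y')) := by
          have h2 : 2 * ‖(U n y - S n y) - (U n y' - S n y')‖
              ≤ 2 * ((CU + CS) * dist y y') := by linarith
          linarith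
      _ = (CS + (Cρ + 2 * (CU + CS))) * dist y y' := by ring
  · -- pointwise convergence
    intro y
    rw [Metric.tendsto_atTop]
    intro ε hε
    obtain ⟨N₁, hN₁⟩ := (Metric.tendsto_atTop.1 (utend y)) (ε / 8) (by positivity)
    obtain ⟨N₂, hN₂⟩ := exists_nat_ge ‖f y‖
    obtain ⟨N₃, hN₃⟩ := exists_nat_gt (8 / ε)
    refine ⟨max N₁ (max N₂ N₃), ?_⟩
    intro n hn
    have hn1 : N₁ ≤ n := le_trans (le_max_left _ _) hn
    have hn2 : N₂ ≤ n := le_trans (le_trans (le_max_left _ _) (le_max_right _ _)) hn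
    have hn3 : N₃ ≤ n := le_trans (le_trans (le_max_right _ _) (le_max_right _ _)) hn
    have huf : ‖u n y - f y‖ < ε / 8 := by
      have := hN₁ n hn1
      rwa [dist_eq_norm] at this
    have hfy : ‖f y‖ ≤ (n : ℝ) := le_trans hN₂ (Nat.cast_le.2 hn2)
    have hfbeq : fb n y = f y := trunc_eq_of_norm_le hfy
    have hδn : δ n < ε / 8 := by
      have h1 : 8 / ε < (n : ℝ) + 1 := by
        have : (N₃ : ℝ) ≤ n := Nat.cast_le.2 hn3
        linarith
      have h2 : (0 : ℝ) < 8 / ε := by positivity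
      have h3 := one_div_lt_one_div_of_lt h2 h1
      rwa [one_div, one_div_div] at h3
    have hub2 : ‖ub n y - f y‖ ≤ 2 * ‖u n y - f y‖ := by
      have : ub n y - f y = trunc (n : ℝ) (u n y) - trunc (n : ℝ) (f y) := by
        rw [hubdef]
        dsimp only
        rw [show trunc (n:ℝ) (f y) = f y from hfbeq]
      rw [this]
      have := norm_trunc_sub_trunc_le' (n : ℝ) (n : ℝ) (u n y) (f y)
      simpa using this
    have hUclose : ‖U n y - ub n y‖ ≤ δ n := by
      apply masterU n y (ub n y) (δ n)
      intro i hi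
      have hd : dist y i < R n i := Metric.mem_ball.1 (hφmem n i y hi)
      have := hRosc n i y hd
      rwa [norm_sub_rev]
    have hSfb : ‖S n y - fb n y‖ ≤ ρ n y := masterSρ n y
    have hDb : ‖U n y - S n y‖ ≤ ρ n y + (δ n + 2 * ‖u n y - f y‖) := by
      calc ‖U n y - S n y‖ ≤ ‖U n y - ub n y‖ + ‖ub n y - f y‖ + ‖f y - S n y‖ := by
            have he : U n y - S n y = (U n y - ub n y) + (ub n y - f y) + (f y - S n y) := by
              abel
            rw [he]
            exact le_trans (norm_add_le _ _) (by
              have := norm_add_le (U n y - ub n y) (ub n y - f y)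
              linarith)
        _ ≤ δ n + 2 * ‖u n y - f y‖ + ρ n y := by
            have h1 : ‖f y - S n y‖ ≤ ρ n y := by
              rw [norm_sub_rev, ← hfbeq]
              exact hSfb
            linarith
        _ = ρ n y + (δ n + 2 * ‖u n y - f y‖) := by ring
    have hFU : ‖F n y - U n y‖ ≤ δ n + 2 * ‖u n y - f y‖ := by
      have he : F n y - U n y
          = trunc (ρ n y) (U n y - S n y) - (U n y - S n y) := by
        rw [hFdef]
        dsimp only
        abel
      rw [he]
      apply norm_trunc_sub_self_le (masterρ0 n y)
        (by positivity) hDb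
    rw [dist_eq_norm]
    calc ‖F n y - f y‖ ≤ ‖F n y - U n y‖ + ‖U n y - ub n y‖ + ‖ub n y - f y‖ := by
          have he : F n y - f y = (F n y - U n y) + (U n y - ub n y) + (ub n y - f y) := by
            abel
          rw [he]
          exact le_trans (norm_add_le _ _) (by
            have := norm_add_le (F n y - U n y) (U n y - ub n y)
            linarith)
      _ ≤ (δ n + 2 * ‖u n y - f y‖) + δ n + 2 * ‖u n y - f y‖ :=
          add_le_add (add_le_add hFU hUclose) hub2
      _ < ε := by linarith
  · -- UCPC
    intro y₀ hcont ε hε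
    obtain ⟨ρ₀, hρ₀, hcl⟩ := Metric.continuousAt_iff.1 hcont (ε / 4) (by positivity)
    obtain ⟨k₁, hk₁⟩ := exists_nat_ge (‖f y₀‖ + ε)
    obtain ⟨k₂, hk₂⟩ := exists_nat_gt (22 / ρ₀)
    refine ⟨max k₁ k₂, Metric.ball y₀ (ρ₀ / 2), Metric.ball_mem_nhds _ (by positivity), ?_⟩
    intro k hk y hy
    have hkk₁ : k₁ ≤ k := le_trans (le_max_left _ _) hk
    have hkk₂ : k₂ ≤ k := le_trans (le_max_right _ _) hk
    have hδk : δ k < ρ₀ / 22 := by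
      have h1 : 22 / ρ₀ < (k : ℝ) + 1 := by
        have : (k₂ : ℝ) ≤ k := Nat.cast_le.2 hkk₂
        linarith
      have h2 : (0 : ℝ) < 22 / ρ₀ := by positivity
      have h3 := one_div_lt_one_div_of_lt h2 h1
      rwa [one_div, one_div_div] at h3
    have hyd : dist y y₀ < ρ₀ / 2 := Metric.mem_ball.1 hy
    have hin : ∀ p : Y, dist p y₀ < ρ₀ → fb k p = f p ∧ ‖f p - f y₀‖ < ε / 4 := by
      intro p hp
      have h1 : dist (f p) (f y₀) < ε / 4 := hcl hp
      rw [dist_eq_norm] at h1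
      have h2 : ‖f p‖ ≤ (k : ℝ) := by
        have h3 : ‖f p‖ ≤ ‖f y₀‖ + ‖f p - f y₀‖ := by
          have := norm_add_le (f y₀) (f p - f y₀)
          simpa using this
        have h4 : (k₁ : ℝ) ≤ k := Nat.cast_le.2 hkk₁
        linarith
      exact ⟨trunc_eq_of_norm_le h2, h1⟩
    have hactive : ∀ i, φ k i y ≠ 0 → dist y i < δ k := by
      intro i hi
      have hd : dist y i < R k i := Metric.mem_ball.1 (hφmem k i y hi)
      exact lt_of_lt_of_le hd (hRδ k i)
    have hSclose : ‖S k y - f y₀‖ ≤ ε / 4 := by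
      apply masterS k y (f y₀) (ε / 4)
      intro i hi
      have hd := hactive i hi
      have hdi : dist i y₀ < ρ₀ := by
        calc dist i y₀ ≤ dist i y + dist y y₀ := dist_triangle _ _ _
          _ < δ k + ρ₀ / 2 := by rw [dist_comm]; exact add_lt_add hd hyd
          _ < ρ₀ := by linarith
      obtain ⟨hfe, hη⟩ := hin i hdi
      rw [hfe]
      exact hη.le
    have hρle : ρ k y ≤ ε / 2 := by
      apply masterρle k y
      intro i hi
      have hd := hactive i hi
      apply hwub
      intro p hp q hq
      have hpd : dist p y₀ < ρ₀ := by
        calc dist p y₀ ≤ dist p i + dist i y + dist y y₀ := dist_triangle4 _ _ _ _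
          _ < 10 * δ k + δ k + ρ₀ / 2 := by
              have h1 : dist p i < 10 * δ k := Metric.mem_ball.1 hp
              have h2 : dist i y < δ k := by rw [dist_comm]; exact hd
              exact add_lt_add (add_lt_add h1 h2) hyd
          _ < ρ₀ := by linarith
      have hqd : dist q y₀ < ρ₀ := by
        calc dist q y₀ ≤ dist q i + dist i y + dist y y₀ := dist_triangle4 _ _ _ _
          _ < 10 * δ k + δ k + ρ₀ / 2 := by
              have h1 : dist q i < 10 * δ k := Metric.mem_ball.1 hq
              have h2 : dist i y < δ k := by rw [dist_comm]; exact hd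
              exact add_lt_add (add_lt_add h1 h2) hyd
          _ < ρ₀ := by linarith
      obtain ⟨hfep, hηp⟩ := hin p hpd
      obtain ⟨hfeq, hηq⟩ := hin q hqd
      rw [hfep, hfeq]
      calc ‖f p - f q‖ ≤ ‖f p - f y₀‖ + ‖f q - f y₀‖ := by
            have he : f p - f q = (f p - f y₀) - (f q - f y₀) := by abel
            rw [he]
            exact norm_sub_le _ _
        _ ≤ ε / 2 := by linarith
    calc ‖F k y - f y₀‖
        = ‖(S k y - f y₀) + trunc (ρ k y) (U k y - S k y)‖ := by
          have he : F k y - f y₀ = (S k y - f y₀) + trunc (ρ k y) (U k y - S k y) := by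
            rw [hFdef]; dsimp only; abel
          rw [he]
      _ ≤ ‖S k y - f y₀‖ + ‖trunc (ρ k y) (U k y - S k y)‖ := norm_add_le _ _
      _ ≤ ε / 4 + max (ρ k y) 0 := add_le_add hSclose (norm_trunc_le _ _)
      _ ≤ ε / 4 + ε / 2 := by
          have := max_le hρle (by positivity : (0:ℝ) ≤ ε / 2)
          linarith
      _ < ε := by linarith
  · -- uniform bound on balls
    rintro a r hr ⟨M, hM⟩
    set M₀ : ℝ := max M 0 with hM₀
    have hbnd : ∀ k y, (∀ p : Y, dist p y < 11 * δ k → ‖f p‖ ≤ M₀) → ‖F k y‖ ≤ 3 * M₀ := by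
      intro k y h
      have hS : ‖S k y‖ ≤ M₀ := by
        have := masterS k y 0 M₀ (fun i hi => by
          have hd : dist y i < R k i := Metric.mem_ball.1 (hφmem k i y hi)
          have hdi : dist i y < 11 * δ k := by
            rw [dist_comm]
            have h1 := hRδ k i
            have h2 := hδpos k
            linarith
          have h3 := (norm_trunc_le_norm (k : ℝ) (f i)).trans (h i hdi)
          simpa using h3)
        simpa using this
      have hρb : ρ k y ≤ 2 * M₀ := by
        apply masterρle k y
        intro i hi
        have hd : dist y i < R k i := Metric.mem_ball.1 (hφmem k i y hi)
        apply hwub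
        intro p hp q hq
        have hpd : dist p y < 11 * δ k := by
          calc dist p y ≤ dist p i + dist i y := dist_triangle _ _ _
            _ < 10 * δ k + δ k := by
                have h1 : dist p i < 10 * δ k := Metric.mem_ball.1 hp
                have h2 : dist i y < δ k := by
                  rw [dist_comm]; exact lt_of_lt_of_le hd (hRδ k i)
                exact add_lt_add h1 h2
            _ = 11 * δ k := by ring
        have hqd : dist q y < 11 * δ k := by
          calc dist q y ≤ dist q i + dist i y := dist_triangle _ _ _
            _ < 10 * δ k + δ k := by
                have h1 : dist q i < 10 * δ k := Metric.mem_ball.1 hq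
                have h2 : dist i y < δ k := by
                  rw [dist_comm]; exact lt_of_lt_of_le hd (hRδ k i)
                exact add_lt_add h1 h2
            _ = 11 * δ k := by ring
        have h1 := (norm_trunc_le_norm (k : ℝ) (f p)).trans (h p hpd)
        have h2 := (norm_trunc_le_norm (k : ℝ) (f q)).trans (h q hqd)
        calc ‖fb k p - fb k q‖ ≤ ‖fb k p‖ + ‖fb k q‖ := norm_sub_le _ _
          _ ≤ 2 * M₀ := by
              have h3 : ‖fb k p‖ ≤ M₀ := h1
              have h4 : ‖fb k q‖ ≤ M₀ := h2
              linarith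
      calc ‖F k y‖ ≤ ‖S k y‖ + ‖trunc (ρ k y) (U k y - S k y)‖ := norm_add_le _ _
        _ ≤ M₀ + max (ρ k y) 0 := add_le_add hS (norm_trunc_le _ _)
        _ ≤ M₀ + 2 * M₀ := by
            have hM0nn : (0:ℝ) ≤ M₀ := le_max_right _ _
            have := max_le hρb (by linarith : (0:ℝ) ≤ 2 * M₀)
            linarith
        _ = 3 * M₀ := by ring
    rcases eq_or_ne r ⊤ with rfl | hrt
    · refine ⟨3 * M₀, ?_⟩
      intro n y _
      apply hbnd
      intro p _
      refine le_trans (hM p ?_) (le_max_left _ _)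
      change edist p a < _
      have h1 : (2 : ℝ≥0∞) * ⊤ = ⊤ := by simp
      rw [h1]
      exact edist_lt_top _ _
    · have hRt : 0 < r.toReal := ENNReal.toReal_pos hr.ne' hrt
      obtain ⟨k₀, hk₀⟩ := exists_nat_gt (11 / r.toReal)
      refine ⟨max (3 * M₀) (3 * k₀), ?_⟩
      intro n y hy
      rcases lt_or_ge n k₀ with h | h
      · refine le_trans (hF3n n y) (le_trans ?_ (le_max_right _ _))
        have : (n : ℝ) ≤ k₀ := Nat.cast_le.2 h.le
        linarith
      · refine le_trans (hbnd n y ?_) (le_max_left _ _)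
        intro p hp
        refine le_trans (hM p ?_) (le_max_left _ _)
        have h11 : 11 * δ n < r.toReal := by
          have h1 : 11 / r.toReal < (n : ℝ) + 1 := by
            have : (k₀ : ℝ) ≤ n := Nat.cast_le.2 h
            linarith
          rw [div_lt_iff₀ hRt] at h1
          have h2 : (0:ℝ) < (n : ℝ) + 1 := by positivity
          calc 11 * δ n = 11 / ((n : ℝ) + 1) := by rw [hδdef]; dsimp only; ring
            _ < r.toReal := by
                rw [div_lt_iff₀ h2]
                linarith [mul_comm (r.toReal) ((n:ℝ)+1)]
        have hpd : dist p y < r.toReal := lt_trans hp h11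
        change edist p a < _
        calc edist p a ≤ edist p y + edist y a := edist_triangle _ _ _
          _ < ENNReal.ofReal r.toReal + r := by
              apply ENNReal.add_lt_add
              · rw [edist_dist]
                exact (ENNReal.ofReal_lt_ofReal_iff hRt).2 hpd
              · exact (show edist y a < r from hy)
          _ = 2 * r := by rw [ENNReal.ofReal_toReal hrt, two_mul]
end

section
/- Let Y be a metric space and Z a normed linear space. If f : Y → Z is a Baire one function, then f is the pointwise limit of a sequence {f_n} of bounded locally Lipschitz functions f_n : Y → Z such that the pair ({f_n}, f) has UCPC. -/
open Filter Topology

section Helpers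

variable {Z : Type*} [NormedAddCommGroup Z] [NormedSpace ℝ Z]

/-- Radial truncation of a vector to the closed ball of radius `R`. -/
noncomputable def truncR (R : ℝ) (v : Z) : Z := if ‖v‖ ≤ R then v else (R / ‖v‖) • v

lemma truncR_norm_le (R : ℝ) (hR : 0 ≤ R) (v : Z) : ‖truncR R v‖ ≤ R := by
  unfold truncR
  split_ifs with h
  · exact h
  · push_neg at h
    have hv : 0 < ‖v‖ := lt_of_le_of_lt hR h
    rw [norm_smul, Real.norm_eq_abs, abs_of_nonneg (div_nonneg hR hv.le),
      div_mul_cancel₀ _ hv.ne']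

lemma truncR_sub_le (R : ℝ) (v w : Z) (hw : ‖w‖ ≤ R) :
    ‖truncR R v - w‖ ≤ 2 * ‖v - w‖ := by
  unfold truncR
  split_ifs with h
  · nlinarith [norm_nonneg (v - w)]
  · push_neg at h
    have hv : 0 < ‖v‖ := lt_of_le_of_lt (le_trans (norm_nonneg w) hw) h
    have h1 : ‖(R / ‖v‖) • v - v‖ = ‖v‖ - R := by
      have : (R / ‖v‖) • v - v = ((R / ‖v‖) - 1) • v := by rw [sub_smul, one_smul]
      rw [this, norm_smul, Real.norm_eq_abs, abs_of_nonpos, neg_sub, sub_mul,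
        div_mul_cancel₀ _ hv.ne', one_mul]
      have : R / ‖v‖ ≤ 1 := (div_le_one hv).mpr h.le
      linarith
    calc ‖(R / ‖v‖) • v - w‖ ≤ ‖(R / ‖v‖) • v - v‖ + ‖v - w‖ := by
          have := norm_add_le ((R / ‖v‖) • v - v) (v - w); simpa using this
      _ = (‖v‖ - R) + ‖v - w‖ := by rw [h1]
      _ ≤ (‖v‖ - ‖w‖) + ‖v - w‖ := by linarith
      _ ≤ ‖v - w‖ + ‖v - w‖ := by
          have := norm_sub_norm_le v w; linarith
      _ = 2 * ‖v - w‖ := by ring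

variable {Y : Type*} [MetricSpace Y]

/-- Quotient of a Lipschitz vector-valued function by a Lipschitz scalar function which is
bounded below on a set is Lipschitz on that set. -/
lemma lipschitzOnWith_inv_smul {s : Y → ℝ} {G : Y → Z} {B : Set Y} {b Cs CG M : ℝ}
    (hb : 0 < b) (hsb : ∀ y ∈ B, b ≤ s y) (hM : ∀ y ∈ B, ‖G y‖ ≤ M)
    (hs : ∀ x ∈ B, ∀ y ∈ B, |s x - s y| ≤ Cs * dist x y)
    (hG : ∀ x ∈ B, ∀ y ∈ B, ‖G x - G y‖ ≤ CG * dist x y) :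
    ∃ K : NNReal, LipschitzOnWith K (fun y => (s y)⁻¹ • G y) B := by
  set c : ℝ := b⁻¹ * CG + b⁻¹ * b⁻¹ * Cs * M with hc
  refine ⟨Real.toNNReal c, lipschitzOnWith_iff_dist_le_mul.2 fun x hx y hy => ?_⟩
  have hsx := hsb x hx
  have hsy := hsb y hy
  have hsx0 : (0:ℝ) < s x := lt_of_lt_of_le hb hsx
  have hsy0 : (0:ℝ) < s y := lt_of_lt_of_le hb hsy
  have hsplit : (s x)⁻¹ • G x - (s y)⁻¹ • G y
      = (s x)⁻¹ • (G x - G y) + ((s x)⁻¹ - (s y)⁻¹) • G y := by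
    rw [smul_sub, sub_smul]; abel
  have hbd1 : ‖(s x)⁻¹ • (G x - G y)‖ ≤ b⁻¹ * (CG * dist x y) := by
    rw [norm_smul, Real.norm_eq_abs, abs_of_nonneg (inv_nonneg.2 hsx0.le)]
    exact mul_le_mul (inv_anti₀ hb hsx) (hG x hx y hy) (norm_nonneg _) (inv_nonneg.2 hb.le)
  have h1 : |(s x)⁻¹ - (s y)⁻¹| ≤ b⁻¹ * b⁻¹ * (Cs * dist x y) := by
    rw [inv_sub_inv hsx0.ne' hsy0.ne', abs_div, abs_of_pos (mul_pos hsx0 hsy0)]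
    have hnum : |s y - s x| ≤ Cs * dist x y := by rw [abs_sub_comm]; exact hs x hx y hy
    have hden : b * b ≤ s x * s y := mul_le_mul hsx hsy hb.le hsx0.le
    have hbb : (0:ℝ) < b * b := mul_pos hb hb
    calc |s y - s x| / (s x * s y) ≤ (Cs * dist x y) / (b * b) :=
          div_le_div₀ (le_trans (abs_nonneg _) hnum) hnum hbb hden
      _ = b⁻¹ * b⁻¹ * (Cs * dist x y) := by rw [div_eq_mul_inv, mul_inv]; ring
  have hbd2 : ‖((s x)⁻¹ - (s y)⁻¹) • G y‖ ≤ b⁻¹ * b⁻¹ * (Cs * dist x y) * M := by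
    rw [norm_smul, Real.norm_eq_abs]
    exact mul_le_mul h1 (hM y hy) (norm_nonneg _) (le_trans (abs_nonneg _) h1)
  have : dist ((s x)⁻¹ • G x) ((s y)⁻¹ • G y) ≤ c * dist x y := by
    rw [dist_eq_norm, hsplit]
    calc ‖(s x)⁻¹ • (G x - G y) + ((s x)⁻¹ - (s y)⁻¹) • G y‖
        ≤ ‖(s x)⁻¹ • (G x - G y)‖ + ‖((s x)⁻¹ - (s y)⁻¹) • G y‖ := norm_add_le _ _
      _ ≤ b⁻¹ * (CG * dist x y) + b⁻¹ * b⁻¹ * (Cs * dist x y) * M := add_le_add hbd1 hbd2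
      _ = c * dist x y := by rw [hc]; ring
  refine le_trans this ?_
  rw [Real.coe_toNNReal']
  exact mul_le_mul_of_nonneg_right (le_max_left _ _) dist_nonneg

end Helpers

section Partition

open Set Function Metric

variable {Y Z : Type*} [MetricSpace Y] [NormedAddCommGroup Z] [NormedSpace ℝ Z]

/-- Given an open cover `U` of a metric space together with a value `z p` attached to each
member of the cover, there is a locally Lipschitz function `F` which is, at every point, an
"average" of the values attached to sets containing that point. -/
theorem exists_locallyLipschitz_avg {ι : Type*} (U : ι → Set Y) (hUo : ∀ p, IsOpen (U p))
    (hUc : ⋃ p, U p = univ) (z : ι → Z) :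
    ∃ F : Y → Z, LocallyLipschitz F ∧
      ∀ y (w : Z) (r : ℝ), (∀ p, y ∈ U p → ‖z p - w‖ ≤ r) → ‖F y - w‖ ≤ r := by
  classical
  obtain ⟨V, hVo, hVc, hVlf, hVU⟩ := precise_refinement U hUo hUc
  set ψ : ι → Y → ℝ := fun p y => if (V p)ᶜ = ∅ then 1 else infDist y (V p)ᶜ with hψdef
  have hψeq : ∀ p y, ψ p y = if (V p)ᶜ = ∅ then 1 else infDist y (V p)ᶜ := fun _ _ => rfl
  have hψ0 : ∀ p y, 0 ≤ ψ p y := by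
    intro p y
    rw [hψeq]
    by_cases h : (V p)ᶜ = ∅
    · rw [if_pos h]; norm_num
    · rw [if_neg h]; exact infDist_nonneg
  have hψmem : ∀ p y, ψ p y ≠ 0 → y ∈ V p := by
    intro p y hne
    by_cases h : (V p)ᶜ = ∅
    · rw [Set.compl_empty_iff] at h; rw [h]; trivial
    · by_contra hy
      refine hne ?_
      rw [hψeq, if_neg h]
      exact infDist_zero_of_mem (Set.mem_compl hy)
  have hψpos : ∀ p y, y ∈ V p → 0 < ψ p y := by
    intro p y hy
    rw [hψeq]
    by_cases h : (V p)ᶜ = ∅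
    · rw [if_pos h]; norm_num
    · rw [if_neg h]
      have h1 : IsClosed (V p)ᶜ := (hVo p).isClosed_compl
      have h2 : (V p)ᶜ.Nonempty := Set.nonempty_iff_ne_empty.mpr h
      exact (h1.notMem_iff_infDist_pos h2).1 (by simp [hy])
  have hψlip : ∀ p, LipschitzWith 1 (ψ p) := by
    intro p
    by_cases h : (V p)ᶜ = ∅
    · have heq : ψ p = fun _ => 1 := by funext y; rw [hψeq, if_pos h]
      rw [heq]; exact (LipschitzWith.const 1).weaken (zero_le_one)
    · have heq : ψ p = fun y => infDist y (V p)ᶜ := by funext y; rw [hψeq, if_neg h]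
      rw [heq]; exact lipschitz_infDist_pt _
  have hfin : ∀ y, (support fun p => ψ p y).Finite := fun y =>
    (hVlf.point_finite y).subset fun p hp => hψmem p y hp
  set s : Y → ℝ := fun y => ∑ᶠ p, ψ p y with hsdef
  set G : Y → Z := fun y => ∑ᶠ p, ψ p y • z p with hGdef
  have hGsupp : ∀ y, (support fun p => ψ p y • z p) ⊆ (support fun p => ψ p y) := by
    intro y p hp
    simp only [mem_support] at hp ⊢
    intro h0; exact hp (by rw [h0, zero_smul])
  have hspos : ∀ y, 0 < s y := by
    intro y
    obtain ⟨p₀, hp₀⟩ : ∃ p, y ∈ V p := Set.mem_iUnion.mp (hVc ▸ Set.mem_univ y)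
    exact lt_of_lt_of_le (hψpos p₀ y hp₀)
      (single_le_finsum p₀ (hfin y) (fun p => hψ0 p y))
  refine ⟨fun y => (s y)⁻¹ • G y, ?_, ?_⟩
  · -- locally Lipschitz
    intro x₀
    obtain ⟨N, hN, hNfin⟩ := hVlf x₀
    obtain ⟨r₀, hr₀pos, hball⟩ := Metric.mem_nhds_iff.mp hN
    set T : Finset ι := hNfin.toFinset with hT
    have hsub : ∀ y ∈ ball x₀ r₀, (support fun p => ψ p y) ⊆ ↑T := by
      intro y hy p hp
      rw [hT, Set.Finite.coe_toFinset]
      exact ⟨y, hψmem p y hp, hball hy⟩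
    have hseq : ∀ y ∈ ball x₀ r₀, s y = ∑ p ∈ T, ψ p y := fun y hy =>
      finsum_eq_sum_of_support_subset _ (hsub y hy)
    have hGeq : ∀ y ∈ ball x₀ r₀, G y = ∑ p ∈ T, ψ p y • z p := fun y hy =>
      finsum_eq_sum_of_support_subset _ ((hGsupp y).trans (hsub y hy))
    set Cs : ℝ := (T.card : ℝ) with hCs
    set CG : ℝ := ∑ p ∈ T, ‖z p‖ with hCG
    have hCG0 : 0 ≤ CG := Finset.sum_nonneg fun p _ => norm_nonneg _
    have hψd : ∀ (p : ι) (x y : Y), |ψ p x - ψ p y| ≤ dist x y := by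
      intro p x y
      have := (hψlip p).dist_le_mul x y
      rwa [Real.dist_eq, NNReal.coe_one, one_mul] at this
    have hslipB : ∀ x ∈ ball x₀ r₀, ∀ y ∈ ball x₀ r₀, |s x - s y| ≤ Cs * dist x y := by
      intro x hx y hy
      rw [hseq x hx, hseq y hy, ← Finset.sum_sub_distrib]
      calc |∑ p ∈ T, (ψ p x - ψ p y)| ≤ ∑ p ∈ T, |ψ p x - ψ p y| :=
            Finset.abs_sum_le_sum_abs _ _
        _ ≤ ∑ _p ∈ T, dist x y := Finset.sum_le_sum fun p _ => hψd p x y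
        _ = Cs * dist x y := by rw [Finset.sum_const, nsmul_eq_mul, hCs]
    have hGlipB : ∀ x ∈ ball x₀ r₀, ∀ y ∈ ball x₀ r₀, ‖G x - G y‖ ≤ CG * dist x y := by
      intro x hx y hy
      rw [hGeq x hx, hGeq y hy, ← Finset.sum_sub_distrib]
      have : ∀ p ∈ T, ψ p x • z p - ψ p y • z p = (ψ p x - ψ p y) • z p := fun p _ => by
        rw [sub_smul]
      rw [Finset.sum_congr rfl this]
      calc ‖∑ p ∈ T, (ψ p x - ψ p y) • z p‖ ≤ ∑ p ∈ T, ‖(ψ p x - ψ p y) • z p‖ :=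
            norm_sum_le _ _
        _ ≤ ∑ p ∈ T, dist x y * ‖z p‖ := by
            refine Finset.sum_le_sum fun p _ => ?_
            rw [norm_smul, Real.norm_eq_abs]
            exact mul_le_mul_of_nonneg_right (hψd p x y) (norm_nonneg _)
        _ = CG * dist x y := by rw [← Finset.mul_sum, hCG]; ring
    -- shrink the ball so that s stays bounded below
    set r₁ : ℝ := min (r₀ / 2) (s x₀ / (2 * (Cs + 1))) with hr₁
    have hCs0 : (0:ℝ) ≤ Cs := Nat.cast_nonneg _
    have hr₁pos : 0 < r₁ := by
      apply lt_min (by linarith)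
      apply div_pos (hspos x₀) (by linarith)
    have hr₁r₀ : r₁ < r₀ := lt_of_le_of_lt (min_le_left _ _) (by linarith)
    have hBsub : ball x₀ r₁ ⊆ ball x₀ r₀ := Metric.ball_subset_ball hr₁r₀.le
    have hx₀B : x₀ ∈ ball x₀ r₁ := Metric.mem_ball_self hr₁pos
    have hslow : ∀ y ∈ ball x₀ r₁, s x₀ / 2 ≤ s y := by
      intro y hy
      have h1 : |s y - s x₀| ≤ Cs * dist y x₀ := hslipB y (hBsub hy) x₀ (hBsub hx₀B)
      have h2 : dist y x₀ < r₁ := Metric.mem_ball.mp hy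
      have h3 : Cs * dist y x₀ ≤ Cs * r₁ := mul_le_mul_of_nonneg_left h2.le hCs0
      have h4 : Cs * r₁ ≤ Cs * (s x₀ / (2 * (Cs + 1))) :=
        mul_le_mul_of_nonneg_left (min_le_right _ _) hCs0
      have h5 : Cs * (s x₀ / (2 * (Cs + 1))) ≤ s x₀ / 2 := by
        rw [mul_div_assoc', div_le_div_iff₀ (by linarith) (by norm_num)]
        have := hspos x₀
        nlinarith
      have := abs_le.1 h1
      linarith [this.1]
    have hGbound : ∀ y ∈ ball x₀ r₁, ‖G y‖ ≤ ‖G x₀‖ + CG * r₁ := by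
      intro y hy
      have h1 : ‖G y - G x₀‖ ≤ CG * dist y x₀ := hGlipB y (hBsub hy) x₀ (hBsub hx₀B)
      have h2 : dist y x₀ < r₁ := Metric.mem_ball.mp hy
      have h3 : CG * dist y x₀ ≤ CG * r₁ := mul_le_mul_of_nonneg_left h2.le hCG0
      have := norm_sub_norm_le (G y) (G x₀)
      linarith
    obtain ⟨K, hK⟩ := lipschitzOnWith_inv_smul (b := s x₀ / 2) (Cs := Cs) (CG := CG)
      (M := ‖G x₀‖ + CG * r₁) (by linarith [hspos x₀]) hslow hGbound
      (fun x hx y hy => hslipB x (hBsub hx) y (hBsub hy))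
      (fun x hx y hy => hGlipB x (hBsub hx) y (hBsub hy))
    exact ⟨K, ball x₀ r₁, Metric.ball_mem_nhds x₀ hr₁pos, hK⟩
  · -- averaging estimate
    intro y w r hr
    have hr0 : 0 ≤ r := by
      obtain ⟨p, hp⟩ : ∃ p, y ∈ U p := Set.mem_iUnion.mp (hUc ▸ Set.mem_univ y)
      exact le_trans (norm_nonneg _) (hr p hp)
    set T : Finset ι := (hfin y).toFinset with hT
    have hsupT : (support fun p => ψ p y) ⊆ ↑T := by
      rw [hT, Set.Finite.coe_toFinset]
    have hseq : s y = ∑ p ∈ T, ψ p y := finsum_eq_sum_of_support_subset _ hsupT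
    have key : G y - s y • w = ∑ p ∈ T, ψ p y • (z p - w) := by
      have h1 : s y • w = ∑ p ∈ T, ψ p y • w := by
        rw [hseq, Finset.sum_smul]
      have h2 : G y = ∑ p ∈ T, ψ p y • z p :=
        finsum_eq_sum_of_support_subset _ ((hGsupp y).trans hsupT)
      rw [h1, h2, ← Finset.sum_sub_distrib]
      exact Finset.sum_congr rfl fun p _ => by rw [smul_sub]
    have hnorm : ‖G y - s y • w‖ ≤ s y * r := by
      rw [key]
      calc ‖∑ p ∈ T, ψ p y • (z p - w)‖ ≤ ∑ p ∈ T, ‖ψ p y • (z p - w)‖ := norm_sum_le _ _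
        _ ≤ ∑ p ∈ T, ψ p y * r := by
            refine Finset.sum_le_sum fun p _ => ?_
            rw [norm_smul, Real.norm_eq_abs, abs_of_nonneg (hψ0 p y)]
            by_cases hp : ψ p y = 0
            · simp [hp]
            · exact mul_le_mul_of_nonneg_left
                (hr p (hVU p (hψmem p y hp))) (hψ0 p y)
        _ = s y * r := by rw [hseq, Finset.sum_mul]
    have hsy := hspos y
    have hF : (fun y => (s y)⁻¹ • G y) y - w = (s y)⁻¹ • (G y - s y • w) := by
      simp only [smul_sub, smul_smul, inv_mul_cancel₀ hsy.ne', one_smul]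
    rw [hF, norm_smul, Real.norm_eq_abs, abs_of_nonneg (inv_nonneg.2 hsy.le)]
    calc (s y)⁻¹ * ‖G y - s y • w‖ ≤ (s y)⁻¹ * (s y * r) :=
          mul_le_mul_of_nonneg_left hnorm (inv_nonneg.2 hsy.le)
      _ = r := by field_simp

end Partition


/-- A vector-valued Baire one function is a pointwise limit of a sequence of
bounded locally Lipschitz functions with UCPC. -/
theorem baire_one_approx_locallyLipschitz_UCPC {Y Z : Type*}
    [MetricSpace Y] [NormedAddCommGroup Z] [NormedSpace ℝ Z]
    (f : Y → Z) (hf : IsBaireOne f) :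
    ∃ F : ℕ → Y → Z,
      (∀ n, ∃ M : ℝ, ∀ y, ‖F n y‖ ≤ M) ∧
      (∀ n, LocallyLipschitz (F n)) ∧
      (∀ y, Tendsto (fun n => F n y) atTop (nhds (f y))) ∧
      UCPC F f := by
  classical
  obtain ⟨u, hucont, hutend⟩ := hf
  set a : ℕ → ℝ := fun k => 1 / (k + 1) with ha
  have hapos : ∀ k, 0 < a k := fun k => by positivity
  have hatend : Tendsto a atTop (nhds 0) := tendsto_one_div_add_atTop_nhds_zero_nat
  -- the tail condition
  set good : ℕ → ℕ → Y → Prop := fun k m q => ∀ i, m ≤ i → ‖u m q - u i q‖ ≤ a k with hgood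
  -- the covers
  set Ucov : ∀ _ : ℕ, ℕ × Y → Set Y := fun k p =>
    if good k p.1 p.2 then {y | dist y p.2 < a k ∧ ‖u p.1 y - u p.1 p.2‖ < a k} else ∅
    with hUcov
  have hUo : ∀ k p, IsOpen (Ucov k p) := by
    intro k p
    rw [hUcov]
    dsimp only
    split_ifs with h
    · have h1 : IsOpen {y | dist y p.2 < a k} := isOpen_lt (continuous_dist.comp
        (continuous_id.prodMk continuous_const)) continuous_const
      have h2 : IsOpen {y | ‖u p.1 y - u p.1 p.2‖ < a k} :=
        isOpen_lt (((hucont p.1).sub continuous_const).norm) continuous_const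
      rw [Set.setOf_and]
      exact h1.inter h2
    · exact isOpen_empty
  have hUmem : ∀ k m q y, y ∈ Ucov k (m, q) →
      good k m q ∧ dist y q < a k ∧ ‖u m y - u m q‖ < a k := by
    intro k m q y hy
    rw [hUcov] at hy
    dsimp only at hy
    split_ifs at hy with h
    · exact ⟨h, hy.1, hy.2⟩
    · exact absurd hy (Set.notMem_empty y)
  have hUc : ∀ k, ⋃ p, Ucov k p = Set.univ := by
    intro k
    rw [Set.eq_univ_iff_forall]
    intro y
    obtain ⟨m, hm⟩ := Metric.tendsto_atTop.mp (hutend y) (a k / 2) (by positivity)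
    have hgm : good k m y := by
      intro i hi
      have h1 := hm m le_rfl
      have h2 := hm i hi
      have : ‖u m y - u i y‖ ≤ dist (u m y) (f y) + dist (f y) (u i y) := by
        rw [← dist_eq_norm]
        exact dist_triangle _ _ _
      rw [dist_comm (f y)] at this
      linarith
    refine Set.mem_iUnion.mpr ⟨(m, y), ?_⟩
    rw [hUcov]
    dsimp only
    rw [if_pos hgm]
    constructor
    · simpa using hapos k
    · simpa using hapos k
  -- key consequence of goodness
  have hgoodf : ∀ k m q, good k m q → ‖u m q - f q‖ ≤ a k := by
    intro k m q hg
    have h1 : Tendsto (fun i => ‖u m q - u i q‖) atTop (nhds ‖u m q - f q‖) :=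
      (((hutend q).const_sub (u m q))).norm
    exact le_of_tendsto h1 (Filter.eventually_atTop.mpr ⟨m, fun i hi => hg i hi⟩)
  -- values
  set zval : ℕ → ℕ × Y → Z := fun k p => truncR (k : ℝ) (u p.1 p.2) with hzval
  have hzbd : ∀ k p, ‖zval k p‖ ≤ (k : ℝ) := by
    intro k p
    show ‖truncR (k : ℝ) (u p.1 p.2)‖ ≤ (k : ℝ)
    exact truncR_norm_le _ (Nat.cast_nonneg k) _
  have hztr : ∀ (k : ℕ) (p : ℕ × Y) (w : Z), ‖w‖ ≤ (k : ℝ) → ‖zval k p - w‖ ≤ 2 * ‖u p.1 p.2 - w‖ := by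
    intro k p w hw
    show ‖truncR (k : ℝ) (u p.1 p.2) - w‖ ≤ 2 * ‖u p.1 p.2 - w‖
    exact truncR_sub_le _ _ _ hw
  -- apply the partition lemma for each k
  have hex : ∀ k : ℕ, ∃ F : Y → Z, LocallyLipschitz F ∧
      ∀ y (w : Z) (r : ℝ), (∀ p, y ∈ Ucov k p → ‖zval k p - w‖ ≤ r) → ‖F y - w‖ ≤ r :=
    fun k => exists_locallyLipschitz_avg (Ucov k) (hUo k) (hUc k) (zval k)
  choose F hFlip hFest using hex
  refine ⟨F, ?_, hFlip, ?_, ?_⟩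
  · -- boundedness
    intro k
    refine ⟨(k : ℝ), fun y => ?_⟩
    have := hFest k y 0 (k : ℝ) (fun p _ => by simpa using hzbd k p)
    simpa using this
  · -- pointwise convergence
    intro y
    rw [Metric.tendsto_atTop]
    intro ε hε
    obtain ⟨i₀, hi₀⟩ := Metric.tendsto_atTop.mp (hutend y) (ε / 8) (by positivity)
    obtain ⟨δ, hδpos, hδ⟩ := Metric.continuous_iff.mp (hucont i₀) y (ε / 8) (by positivity)
    have hmin : (0:ℝ) < min δ (ε / 8) := lt_min hδpos (by positivity)
    obtain ⟨N₁, hN₁⟩ := Filter.eventually_atTop.mp (hatend.eventually (gt_mem_nhds hmin))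
    obtain ⟨N₂, hN₂⟩ := exists_nat_ge ‖f y‖
    refine ⟨max N₁ N₂, fun k hk => ?_⟩
    have hkN₁ : N₁ ≤ k := le_trans (le_max_left _ _) hk
    have hkN₂ : (N₂ : ℝ) ≤ (k : ℝ) := Nat.cast_le.mpr (le_trans (le_max_right _ _) hk)
    have hak : a k < min δ (ε / 8) := hN₁ k hkN₁
    have hfyk : ‖f y‖ ≤ (k : ℝ) := le_trans hN₂ hkN₂
    have hbound : ∀ p, y ∈ Ucov k p → ‖zval k p - f y‖ ≤ 2 * (a k + ε / 4) := by
      rintro ⟨m, q⟩ hp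
      obtain ⟨hg, hd, hv⟩ := hUmem k m q y hp
      have hcore : ‖u m q - f y‖ ≤ a k + ε / 4 := by
        rcases le_total m i₀ with hmi | hmi
        · have h1 : ‖u m q - u i₀ q‖ ≤ a k := hg i₀ hmi
          have h2 : ‖u i₀ q - u i₀ y‖ < ε / 8 := by
            rw [← dist_eq_norm]
            have hqy : dist q y < δ := by
              rw [dist_comm]
              exact lt_of_lt_of_le hd (le_of_lt (lt_of_lt_of_le hak (min_le_left _ _)))
            exact hδ q hqy
          have h3 : ‖u i₀ y - f y‖ < ε / 8 := by
            rw [← dist_eq_norm]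
            exact hi₀ i₀ le_rfl
          calc ‖u m q - f y‖ = ‖(u m q - u i₀ q) + (u i₀ q - u i₀ y) + (u i₀ y - f y)‖ := by
                congr 1; abel
            _ ≤ ‖u m q - u i₀ q‖ + ‖u i₀ q - u i₀ y‖ + ‖u i₀ y - f y‖ := norm_add₃_le
            _ ≤ a k + ε / 4 := by linarith
        · have h1 : ‖u m q - u m y‖ < a k := by rw [norm_sub_rev]; exact hv
          have h2 : ‖u m y - f y‖ < ε / 8 := by
            rw [← dist_eq_norm]
            exact hi₀ m hmi
          calc ‖u m q - f y‖ = ‖(u m q - u m y) + (u m y - f y)‖ := by congr 1; abel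
            _ ≤ ‖u m q - u m y‖ + ‖u m y - f y‖ := norm_add_le _ _
            _ ≤ a k + ε / 4 := by linarith
      have := hztr k (m, q) (f y) hfyk
      calc ‖zval k (m, q) - f y‖ ≤ 2 * ‖u m q - f y‖ := this
        _ ≤ 2 * (a k + ε / 4) := by linarith
    have hest := hFest k y (f y) _ hbound
    rw [dist_eq_norm]
    have haε : a k < ε / 8 := lt_of_lt_of_le hak (min_le_right _ _)
    calc ‖F k y - f y‖ ≤ 2 * (a k + ε / 4) := hest
      _ < 2 * (ε / 8 + ε / 4) := by linarith
      _ < ε := by linarith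
  · -- UCPC
    intro y₀ hcont ε hε
    obtain ⟨δ₀, hδ₀pos, hδ₀⟩ := Metric.continuousAt_iff.mp hcont (ε / 8) (by positivity)
    have hmin : (0:ℝ) < min (δ₀ / 2) (ε / 8) := lt_min (by positivity) (by positivity)
    obtain ⟨N₁, hN₁⟩ := Filter.eventually_atTop.mp (hatend.eventually (gt_mem_nhds hmin))
    obtain ⟨N₂, hN₂⟩ := exists_nat_ge ‖f y₀‖
    refine ⟨max N₁ N₂, Metric.ball y₀ (δ₀ / 2),
      Metric.ball_mem_nhds y₀ (by positivity), fun k hk y hy => ?_⟩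
    have hkN₁ : N₁ ≤ k := le_trans (le_max_left _ _) hk
    have hkN₂ : (N₂ : ℝ) ≤ (k : ℝ) := Nat.cast_le.mpr (le_trans (le_max_right _ _) hk)
    have hak : a k < min (δ₀ / 2) (ε / 8) := hN₁ k hkN₁
    have hfyk : ‖f y₀‖ ≤ (k : ℝ) := le_trans hN₂ hkN₂
    have hbound : ∀ p, y ∈ Ucov k p → ‖zval k p - f y₀‖ ≤ 2 * (a k + ε / 8) := by
      rintro ⟨m, q⟩ hp
      obtain ⟨hg, hd, _⟩ := hUmem k m q y hp
      have hq : dist q y₀ < δ₀ := by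
        have h1 : dist q y < a k := by rw [dist_comm]; exact hd
        have h2 : dist y y₀ < δ₀ / 2 := Metric.mem_ball.mp hy
        have h3 : a k < δ₀ / 2 := lt_of_lt_of_le hak (min_le_left _ _)
        calc dist q y₀ ≤ dist q y + dist y y₀ := dist_triangle _ _ _
          _ < δ₀ := by linarith
      have hfq : ‖f q - f y₀‖ < ε / 8 := by
        rw [← dist_eq_norm]
        exact hδ₀ hq
      have h1 : ‖u m q - f q‖ ≤ a k := hgoodf k m q hg
      have hcore : ‖u m q - f y₀‖ ≤ a k + ε / 8 := by
        calc ‖u m q - f y₀‖ = ‖(u m q - f q) + (f q - f y₀)‖ := by congr 1; abel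
          _ ≤ ‖u m q - f q‖ + ‖f q - f y₀‖ := norm_add_le _ _
          _ ≤ a k + ε / 8 := by linarith
      calc ‖zval k (m, q) - f y₀‖ ≤ 2 * ‖u m q - f y₀‖ := hztr k (m, q) (f y₀) hfyk
        _ ≤ 2 * (a k + ε / 8) := by linarith
    have hest := hFest k y (f y₀) _ hbound
    have haε : a k < ε / 8 := lt_of_lt_of_le hak (min_le_right _ _)
    calc ‖F k y - f y₀‖ ≤ 2 * (a k + ε / 8) := hest
      _ < ε := by linarith
end
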